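/- arXiv:2006.03989 — 13 statements merged into one kernel-verified Lean document; each statement's English description precedes it below -/
import Mathlib

section
/- Let s ∈ (−1, 0) and let f be a probability density on ℝ that is s-concave, with distribution function F(x) = ∫_{−∞}^x f(t) dt. Then for every s* ≤ s/(1+s) (note s/(1+s) < 0), F is a bi-s*-concave distribution function. -/
open Set MeasureTheory Filter
open scoped NNReal ENNReal

/-- A (cumulative) distribution function on `ℝ`: nondecreasing, `[0,1]`-valued,
right-continuous, with limit `0` at `-∞` and `1` at `+∞`. -/
def IsDistFun (F : ℝ → ℝ) : Prop :=
  Monotone F ∧ (∀ x, 0 ≤ F x ∧ F x ≤ 1) ∧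
  (∀ x, ContinuousWithinAt F (Ici x) x) ∧
  Tendsto F atBot (nhds 0) ∧ Tendsto F atTop (nhds 1)

/-- `F` is non-degenerate: it takes a value strictly between 0 and 1. -/
def NonDeg (F : ℝ → ℝ) : Prop := ∃ x, 0 < F x ∧ F x < 1

/-- `J(F) = {x : 0 < F x < 1}`. -/
def JSet (F : ℝ → ℝ) : Set ℝ := {x | 0 < F x ∧ F x < 1}

/-- `F` is bi-`s*`-concave: `F` is continuous on `ℝ` and, on `J(F)`,
for `s* < 0` both `F ^ s*` and `(1 - F) ^ s*` are convex; for `s* = 0` both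
`log F` and `log (1 - F)` are concave; for `s* > 0` both `F ^ s*` and
`(1 - F) ^ s*` are concave. -/
def IsBiSStarConcave (s : ℝ) (F : ℝ → ℝ) : Prop :=
  Continuous F ∧
  (s < 0 → ConvexOn ℝ (JSet F) (fun x => F x ^ s) ∧
    ConvexOn ℝ (JSet F) (fun x => (1 - F x) ^ s)) ∧
  (s = 0 → ConcaveOn ℝ (JSet F) (fun x => Real.log (F x)) ∧
    ConcaveOn ℝ (JSet F) (fun x => Real.log (1 - F x))) ∧
  (0 < s → ConcaveOn ℝ (JSet F) (fun x => F x ^ s) ∧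
    ConcaveOn ℝ (JSet F) (fun x => (1 - F x) ^ s))

lemma jset_convex {F : ℝ → ℝ} (hF : Monotone F) : Convex ℝ (JSet F) := by
  rw [convex_iff_ordConnected]
  exact ⟨fun x hx y hy z hz =>
    ⟨lt_of_lt_of_le hx.1 (hF hz.1), lt_of_le_of_lt (hF hz.2) hy.2⟩⟩

set_option maxHeartbeats 1000000 in
lemma aux_convexOn (s : ℝ) (hs₁ : -1 < s) (hs₂ : s < 0)
    (f : ℝ → ℝ) (hf_meas : Measurable f) (hfi : Integrable f)
    (hf0 : ∀ x, 0 ≤ f x) (hf1 : ∫ x, f x = 1)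
    (hsc : ∀ x y θ : ℝ, 0 < f x → 0 < f y → 0 < θ → θ < 1 →
      ((1 - θ) * f x ^ s + θ * f y ^ s) ^ (1 / s) ≤ f ((1 - θ) * x + θ * y))
    (F : ℝ → ℝ) (hFd : ∀ x, F x = ∫ u in Iic x, f u)
    (hFm : Monotone F) (hFc : Continuous F)
    (hFb : Tendsto F atBot (nhds 0))
    (t : ℝ) (ht : t ≤ s / (1 + s)) :
    ConvexOn ℝ (JSet F) (fun x => F x ^ t) := by
  have h1s : 0 < 1 + s := by linarith
  have hs0 : s ≠ 0 := ne_of_lt hs₂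
  have h1s0 : (1 : ℝ) + s ≠ 0 := ne_of_gt h1s
  have hκ : s / (1 + s) < 0 := div_neg_of_neg_of_pos hs₂ h1s
  have htneg : t < 0 := lt_of_le_of_lt ht hκ
  have hinvs : 1 / s < 0 := by
    exact div_neg_of_pos_of_neg one_pos hs₂
  have hJo : IsOpen (JSet F) := by
    have : JSet F = F ⁻¹' (Ioo 0 1) := rfl
    rw [this]
    exact isOpen_Ioo.preimage hFc
  have hJc : Convex ℝ (JSet F) := jset_convex hFm
  -- positivity of f on J
  have hfJ : ∀ x ∈ JSet F, 0 < f x := by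
    rintro x ⟨hx0, hx1⟩
    have hL : ∃ u ≤ x, 0 < f u := by
      by_contra h
      push_neg at h
      have : F x = 0 := by
        rw [hFd]
        rw [setIntegral_congr_fun measurableSet_Iic
          (fun u hu => le_antisymm (h u hu) (hf0 u) : ∀ u ∈ Iic x, f u = 0)]
        simp
      linarith
    have hR : ∃ v, x < v ∧ 0 < f v := by
      by_contra h
      push_neg at h
      have hIoi : ∫ u in Ioi x, f u = 0 := by
        rw [setIntegral_congr_fun measurableSet_Ioi
          (fun u hu => le_antisymm (h u hu) (hf0 u) : ∀ u ∈ Ioi x, f u = 0)]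
        simp
      have hsum : F x + ∫ u in Ioi x, f u = 1 := by
        rw [hFd, ← hf1, ← integral_add_compl measurableSet_Iic hfi, compl_Iic]
      rw [hIoi] at hsum
      linarith
    obtain ⟨u, hu, hfu⟩ := hL
    obtain ⟨v, hv, hfv⟩ := hR
    rcases eq_or_lt_of_le hu with rfl | hu'
    · exact hfu
    · set θ := (x - u) / (v - u) with hθ
      have hvu : 0 < v - u := by linarith
      have hθ0 : 0 < θ := div_pos (by linarith) hvu
      have hθ1 : θ < 1 := (div_lt_one hvu).2 (by linarith)
      have hxc : (1 - θ) * u + θ * v = x := by rw [hθ]; field_simp; ring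
      have h := hsc u v θ hfu hfv hθ0 hθ1
      rw [hxc] at h
      refine lt_of_lt_of_le (Real.rpow_pos_of_pos ?_ _) h
      have := Real.rpow_pos_of_pos hfu s
      have := Real.rpow_pos_of_pos hfv s
      nlinarith
  -- chord inequality for g = f ^ s
  have hchord : ∀ u v θ : ℝ, 0 < f u → 0 < f v → 0 ≤ θ → θ ≤ 1 →
      f ((1 - θ) * u + θ * v) ^ s ≤ (1 - θ) * f u ^ s + θ * f v ^ s := by
    intro u v θ hu hv hθ0 hθ1
    rcases eq_or_lt_of_le hθ0 with rfl | hθ0'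
    · simp
    rcases eq_or_lt_of_le hθ1 with rfl | hθ1'
    · simp
    have h := hsc u v θ hu hv hθ0' hθ1'
    have hA : 0 < (1 - θ) * f u ^ s + θ * f v ^ s := by
      have := Real.rpow_pos_of_pos hu s
      have := Real.rpow_pos_of_pos hv s
      nlinarith
    have h2 := Real.rpow_le_rpow_of_nonpos (Real.rpow_pos_of_pos hA (1 / s)) h hs₂.le
    rwa [← Real.rpow_mul hA.le, one_div_mul_cancel hs0, Real.rpow_one] at h2
  have hF0 : ∀ z, 0 ≤ F z := fun z => by
    rw [hFd]; exact setIntegral_nonneg measurableSet_Iic fun u _ => hf0 u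
  have hfrpow : ∀ u, 0 < f u → (f u ^ s) ^ (1 / s) = f u := by
    intro u hu
    rw [← Real.rpow_mul (hf0 u), mul_one_div_cancel hs0, Real.rpow_one]
  have hfrpow' : ∀ u, 0 < f u → (f u ^ s) ^ (1 + 1 / s) = f u ^ (1 + s) := by
    intro u hu
    rw [← Real.rpow_mul (hf0 u)]
    congr 1
    field_simp
    ring
  -- key ratio inequality
  have hkey : ∀ x ∈ JSet F, ∀ y ∈ JSet F, x ≤ y →
      f y ^ (1 + s) * F x ≤ f x ^ (1 + s) * F y := by
    intro x hx y hy hxy0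
    rcases eq_or_lt_of_le hxy0 with rfl | hxy
    · exact le_of_eq rfl
    have hfx := hfJ x hx
    have hfy := hfJ y hy
    rcases le_or_gt (f y) (f x) with hle | hlt
    · exact mul_le_mul (Real.rpow_le_rpow (hf0 y) hle (by linarith))
        (hFm hxy.le) (hF0 x) (Real.rpow_nonneg (hf0 x) _)
    · set gx := f x ^ s with hgx_def
      set gy := f y ^ s with hgy_def
      have hgx : 0 < gx := Real.rpow_pos_of_pos hfx s
      have hgy : 0 < gy := Real.rpow_pos_of_pos hfy s
      have hgylt : gy < gx := Real.rpow_lt_rpow_of_neg hfx hlt hs₂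
      set m := (gy - gx) / (y - x) with hm_def
      have hyx : 0 < y - x := by linarith
      have hm0 : m < 0 := div_neg_of_neg_of_pos (by linarith) hyx
      have hmyx : m * (y - x) = gy - gx := div_mul_cancel₀ _ (ne_of_gt hyx)
      set L := fun u : ℝ => gx + m * (u - x) with hL_def
      have hLx : L x = gx := by simp [hL_def]
      have hLy : L y = gy := by simp only [hL_def]; linarith
      have hLpos : ∀ u ≤ y, 0 < L u := by
        intro u hu
        have h1 : 0 ≤ (-m) * (y - u) := mul_nonneg (by linarith) (by linarith)
        simp only [hL_def]
        nlinarith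
      have h11s : 1 + 1 / s < 0 := by
        have : 1 / s < -1 := by
          rw [div_lt_iff_of_neg hs₂]; linarith
        linarith
      have hc : 0 < m * (1 + 1 / s) := mul_pos_of_neg_of_neg hm0 h11s
      set c := m * (1 + 1 / s) with hc_def
      set H := fun u : ℝ => L u ^ (1 + 1 / s) / c with hH_def
      have hHd : ∀ u ≤ y, HasDerivAt H (L u ^ (1 / s)) u := by
        intro u hu
        have hLd : HasDerivAt L m u := by
          have h1 : HasDerivAt (fun w : ℝ => gx + m * (w - x)) (0 + m * 1) u :=
            (hasDerivAt_const u gx).add (((hasDerivAt_id u).sub_const x).const_mul m)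
          simpa only [zero_add, mul_one] using h1
        have h2 := (hLd.rpow_const (p := 1 + 1 / s) (Or.inl (ne_of_gt (hLpos u hu)))).div_const c
        have hcne : m * (s + 1) ≠ 0 := ne_of_lt (mul_neg_of_neg_of_pos hm0 (by linarith))
        have he : m * (1 + 1 / s) * L u ^ (1 + 1 / s - 1) / c = L u ^ (1 / s) := by
          rw [show (1 : ℝ) + 1 / s - 1 = 1 / s by ring, hc_def]
          field_simp
          exact mul_div_cancel_left₀ _ hcne
        rwa [he] at h2
      have hHpos : ∀ u ≤ y, 0 < H u :=
        fun u hu => div_pos (Real.rpow_pos_of_pos (hLpos u hu) _) hc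
      -- upper bound for f on Iic x
      have hub : ∀ u ≤ x, f u ≤ L u ^ (1 / s) := by
        intro u hu
        rcases eq_or_lt_of_le (hf0 u) with h0 | hfu
        · rw [← h0]
          exact (Real.rpow_pos_of_pos (hLpos u (by linarith)) _).le
        rcases eq_or_lt_of_le hu with heq | hu'
        · subst heq
          rw [hLx, hgx_def, hfrpow u hfu]
        set θ := (x - u) / (y - u) with hθ_def
        have hyu : 0 < y - u := by linarith
        have hθ0 : 0 < θ := div_pos (by linarith) hyu
        have hθ1 : θ < 1 := (div_lt_one hyu).2 (by linarith)
        have hxeq : (1 - θ) * u + θ * y = x := by rw [hθ_def]; field_simp; ring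
        have h1 := hchord u y θ hfu hfy hθ0.le hθ1.le
        rw [hxeq] at h1
        have hgu : L u ≤ f u ^ s := by
          have h1θ : 0 < 1 - θ := by linarith
          have key : (1 - θ) * L u = gx - θ * gy := by
            simp only [hL_def, hθ_def, hm_def]
            field_simp
            ring
          have h2 : gx - θ * gy ≤ (1 - θ) * f u ^ s := by linarith
          have h4 : (1 - θ) * L u ≤ (1 - θ) * f u ^ s := by linarith
          exact le_of_mul_le_mul_left h4 h1θ
        have h3 := Real.rpow_le_rpow_of_nonpos (hLpos u (by linarith)) hgu hinvs.le
        rwa [hfrpow u hfu] at h3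
      -- lower bound for f on [x, y]
      have hlb : ∀ u ∈ Icc x y, L u ^ (1 / s) ≤ f u := by
        rintro u ⟨hu1, hu2⟩
        have huJ : u ∈ JSet F := hJc.ordConnected.out hx hy ⟨hu1, hu2⟩
        have hfu := hfJ u huJ
        have hgu : f u ^ s ≤ L u := by
          rcases eq_or_lt_of_le hu1 with heq | h1
          · rw [← heq, hLx]
          rcases eq_or_lt_of_le hu2 with heq | h2
          · rw [heq, hLy]
          set θ := (u - x) / (y - x) with hθ_def
          have hθ0 : 0 < θ := div_pos (by linarith) hyx
          have hθ1 : θ < 1 := (div_lt_one hyx).2 (by linarith)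
          have hueq : (1 - θ) * x + θ * y = u := by rw [hθ_def]; field_simp; ring
          have h1 := hchord x y θ hfx hfy hθ0.le hθ1.le
          rw [hueq] at h1
          have key : (1 - θ) * gx + θ * gy = L u := by
            simp only [hL_def, hθ_def, hm_def]
            field_simp
            ring
          linarith
        have h3 := Real.rpow_le_rpow_of_nonpos (Real.rpow_pos_of_pos hfu s) hgu hinvs.le
        rwa [hfrpow u hfu] at h3
      have hLcont : ∀ z w : ℝ, z ≤ w → w ≤ y →
          IntervalIntegrable (fun u => L u ^ (1 / s)) volume z w := by
        intro z w hzw hwy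
        apply ContinuousOn.intervalIntegrable
        apply ContinuousOn.rpow_const
        · exact (continuous_const.add (continuous_const.mul
            (continuous_id.sub continuous_const))).continuousOn
        · intro u hu
          rw [uIcc_of_le hzw] at hu
          exact Or.inl (ne_of_gt (hLpos u (le_trans hu.2 hwy)))
      have hIeq : ∀ z w : ℝ, z ≤ w → w ≤ y →
          ∫ u in z..w, L u ^ (1 / s) = H w - H z := by
        intro z w hzw hwy
        apply intervalIntegral.integral_eq_sub_of_hasDerivAt
        · intro u hu
          rw [uIcc_of_le hzw] at hu
          exact hHd u (le_trans hu.2 hwy)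
        · exact hLcont z w hzw hwy
      have hFsub : ∀ z w : ℝ, F w - F z = ∫ u in z..w, f u := by
        intro z w
        rw [hFd, hFd]
        exact intervalIntegral.integral_Iic_sub_Iic hfi.integrableOn hfi.integrableOn
      -- (i) F x ≤ H x
      have hFxle : F x ≤ H x := by
        have hev : ∀ z ≤ x, F x - H x ≤ F z := by
          intro z hz
          have hI1 := hIeq z x hz hxy.le
          have hI2 := hFsub z x
          have hmono : ∫ u in z..x, f u ≤ ∫ u in z..x, L u ^ (1 / s) :=
            intervalIntegral.integral_mono_on hz hfi.intervalIntegrable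
              (hLcont z x hz hxy.le) (fun u hu => hub u hu.2)
          have hHz : 0 < H z := hHpos z (by linarith)
          linarith
        have h0 : F x - H x ≤ 0 := ge_of_tendsto hFb (eventually_atBot.2 ⟨x, hev⟩)
        linarith
      -- (ii) lower bound for F y - F x
      have hFyge : (f y ^ (1 + s) - f x ^ (1 + s)) / c ≤ F y - F x := by
        have hI1 := hIeq x y hxy.le le_rfl
        have hI2 := hFsub x y
        have hmono : ∫ u in x..y, L u ^ (1 / s) ≤ ∫ u in x..y, f u :=
          intervalIntegral.integral_mono_on hxy.le (hLcont x y hxy.le le_rfl)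
            hfi.intervalIntegrable hlb
        have hHy : H y = f y ^ (1 + s) / c := by
          rw [hH_def]
          simp only
          rw [hLy, hgy_def, hfrpow' y hfy]
        have hHx : H x = f x ^ (1 + s) / c := by
          rw [hH_def]
          simp only
          rw [hLx, hgx_def, hfrpow' x hfx]
        rw [← div_sub_div_same, ← hHy, ← hHx]
        linarith
      -- final algebra
      have hHx : H x = f x ^ (1 + s) / c := by
        rw [hH_def]; simp only
        rw [hLx, hgx_def, hfrpow' x hfx]
      set A := f x ^ (1 + s) with hA_def
      set B := f y ^ (1 + s) with hB_def
      have hA : 0 < A := Real.rpow_pos_of_pos hfx _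
      have hAB : A ≤ B := Real.rpow_le_rpow (hf0 x) hlt.le (by linarith)
      have hFxle' : F x ≤ A / c := by rw [← hHx]; exact hFxle
      have h1 : F x * (B - A) ≤ A / c * (B - A) :=
        mul_le_mul_of_nonneg_right hFxle' (by linarith)
      have h2 : A * ((B - A) / c) = A / c * (B - A) := by ring
      have h3 : A * (F x + (B - A) / c) ≤ A * F y :=
        mul_le_mul_of_nonneg_left (by linarith) hA.le
      have e3 : A * (F x + (B - A) / c) = A * F x + A * ((B - A) / c) := by ring
      have e4 : B * F x = A * F x + F x * (B - A) := by ring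
      linarith [h1, h2, h3, e3, e4]
  -- convexity of g on J, continuity of f on J
  have hgcv : ConvexOn ℝ (JSet F) (fun u => f u ^ s) := by
    refine ⟨hJc, ?_⟩
    intro x hx y hy a b ha hb hab
    have hb1 : b ≤ 1 := by linarith
    have haeq : a = 1 - b := by linarith
    simp only [smul_eq_mul]
    rw [haeq]
    exact hchord x y b (hfJ x hx) (hfJ y hy) hb hb1
  have hgc : ContinuousOn (fun u => f u ^ s) (JSet F) := hgcv.continuousOn hJo
  have hfc : ∀ x ∈ JSet F, ContinuousAt f x := by
    intro x hx
    have h1 : ContinuousAt (fun u => (f u ^ s) ^ (1 / s)) x :=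
      ContinuousAt.rpow_const (hgc.continuousAt (hJo.mem_nhds hx))
        (Or.inl (ne_of_gt (Real.rpow_pos_of_pos (hfJ x hx) s)))
    apply h1.congr
    filter_upwards [hJo.mem_nhds hx] with u hu
    exact hfrpow u (hfJ u hu)
  have hFder : ∀ x ∈ JSet F, HasDerivAt F (f x) x := by
    intro x hx
    have h0 : HasDerivAt (fun u => F x + ∫ v in x..u, f v) (f x) x :=
      HasDerivAt.const_add (F x)
        (intervalIntegral.integral_hasDerivAt_right hfi.intervalIntegrable
          (hf_meas.stronglyMeasurable.stronglyMeasurableAtFilter) (hfc x hx))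
    have hFeq : F = fun u => F x + ∫ v in x..u, f v := by
      funext u
      have := intervalIntegral.integral_Iic_sub_Iic (μ := volume) (f := f)
        (a := x) (b := u) hfi.integrableOn hfi.integrableOn
      rw [hFd u, hFd x]
      linarith
    rw [hFeq]
    exact h0
  have hFt_der : ∀ x ∈ JSet F, HasDerivAt (fun u => F u ^ t)
      (f x * t * F x ^ (t - 1)) x :=
    fun x hx => (hFder x hx).rpow_const (Or.inl (ne_of_gt hx.1))
  refine MonotoneOn.convexOn_of_deriv hJc ?_ ?_ ?_
  · exact ContinuousOn.rpow_const hFc.continuousOn (fun x hx => Or.inl (ne_of_gt hx.1))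
  · rw [hJo.interior_eq]
    exact fun x hx => (hFt_der x hx).differentiableAt.differentiableWithinAt
  · rw [hJo.interior_eq]
    intro x hx y hy hxy
    rw [(hFt_der x hx).deriv, (hFt_der y hy).deriv]
    have hratio := hkey x hx y hy hxy
    set κ := s / (1 + s) with hκ_def
    have h1 : ∀ z ∈ JSet F, f z * F z ^ (t - 1)
        = (f z ^ (1 + s) / F z) ^ (1 / (1 + s)) * F z ^ (t - κ) := by
      intro z hz
      rw [Real.div_rpow (Real.rpow_nonneg (hf0 z) _) (le_of_lt hz.1),
        ← Real.rpow_mul (hf0 z), mul_one_div_cancel h1s0, Real.rpow_one,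
        div_mul_eq_mul_div, mul_div_assoc, ← Real.rpow_sub hz.1]
      congr 2
      rw [hκ_def]
      field_simp
      ring
    have key2 : f y * F y ^ (t - 1) ≤ f x * F x ^ (t - 1) := by
      rw [h1 x hx, h1 y hy]
      apply mul_le_mul
      · apply Real.rpow_le_rpow (div_nonneg (Real.rpow_nonneg (hf0 y) _) hy.1.le) ?_
          (div_nonneg zero_le_one h1s.le)
        rw [div_le_div_iff₀ hy.1 hx.1]
        linarith
      · exact Real.rpow_le_rpow_of_nonpos hx.1 (hFm hxy) (by linarith)
      · exact Real.rpow_nonneg (hF0 y) _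
      · exact Real.rpow_nonneg (div_nonneg (Real.rpow_nonneg (hf0 x) _) hx.1.le) _
    have e1 : f x * t * F x ^ (t - 1) = t * (f x * F x ^ (t - 1)) := by ring
    have e2 : f y * t * F y ^ (t - 1) = t * (f y * F y ^ (t - 1)) := by ring
    rw [e1, e2]
    exact mul_le_mul_of_nonpos_left key2 htneg.le


set_option maxHeartbeats 1000000 in
/-- If `f` is an `s`-concave probability density with `s ∈ (-1, 0)`, then its
distribution function `F(x) = ∫_{-∞}^x f` is a bi-`s*`-concave distribution function for every
`s* ≤ s / (1 + s)`. -/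
theorem biSStarConcave_of_sConcave_density_neg
    (s : ℝ) (hs₁ : -1 < s) (hs₂ : s < 0)
    (f : ℝ → ℝ) (hf_meas : Measurable f) (hf_nonneg : ∀ x, 0 ≤ f x)
    (hf_int : ∫ x, f x = 1)
    (hf_sconc : ∀ x y θ : ℝ, 0 < f x → 0 < f y → 0 < θ → θ < 1 →
      ((1 - θ) * f x ^ s + θ * f y ^ s) ^ (1 / s) ≤ f ((1 - θ) * x + θ * y))
    (F : ℝ → ℝ) (hF_def : ∀ x, F x = ∫ t in Iic x, f t)
    (t : ℝ) (ht : t ≤ s / (1 + s)) :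
    IsDistFun F ∧ IsBiSStarConcave t F := by
  have h1s : 0 < 1 + s := by linarith
  have hκ : s / (1 + s) < 0 := div_neg_of_neg_of_pos hs₂ h1s
  have htneg : t < 0 := lt_of_le_of_lt ht hκ
  have hfi : Integrable f := by
    by_contra h
    rw [integral_undef h] at hf_int
    norm_num at hf_int
  have hF0 : ∀ x, 0 ≤ F x := fun x => by
    rw [hF_def]
    exact setIntegral_nonneg measurableSet_Iic fun u _ => hf_nonneg u
  have hcompl : ∀ x, F x + ∫ u in Ioi x, f u = 1 := by
    intro x
    rw [hF_def, ← hf_int, ← integral_add_compl measurableSet_Iic hfi, compl_Iic]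
  have hF1 : ∀ x, F x ≤ 1 := by
    intro x
    have h1 := hcompl x
    have h2 : 0 ≤ ∫ u in Ioi x, f u :=
      setIntegral_nonneg measurableSet_Ioi fun u _ => hf_nonneg u
    linarith
  have hFm : Monotone F := by
    intro a b hab
    rw [hF_def a, hF_def b]
    exact setIntegral_mono_set hfi.integrableOn (ae_of_all _ hf_nonneg)
      ((Iic_subset_Iic.2 hab).eventuallyLE)
  have hFc : Continuous F := by
    have h := hfi.continuous_primitive 0
    have hFeq : F = fun b => F 0 + ∫ x in (0:ℝ)..b, f x := by
      funext b
      have := intervalIntegral.integral_Iic_sub_Iic (μ := volume) (f := f)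
        (a := (0:ℝ)) (b := b) hfi.integrableOn hfi.integrableOn
      rw [hF_def b, hF_def 0]
      linarith
    rw [hFeq]
    exact continuous_const.add h
  have hFtop : Tendsto F atTop (nhds 1) := by
    have hbdd : BddAbove (range F) := ⟨1, by rintro _ ⟨x, rfl⟩; exact hF1 x⟩
    have h1 : Tendsto F atTop (nhds (⨆ x, F x)) := tendsto_atTop_ciSup hFm hbdd
    have hU : ⋃ n : ℕ, Iic ((n : ℝ)) = univ := by
      ext z
      simp only [mem_iUnion, mem_Iic, mem_univ, iff_true]
      exact exists_nat_ge z
    have h2 : Tendsto (fun n : ℕ => F n) atTop (nhds 1) := by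
      have h3 := tendsto_setIntegral_of_monotone (μ := volume) (f := f)
        (s := fun n : ℕ => Iic ((n : ℝ))) (fun n => measurableSet_Iic)
        (fun m n hmn => Iic_subset_Iic.2 (by exact_mod_cast hmn))
        (by rw [hU]; exact hfi.integrableOn)
      rw [hU] at h3
      simp only [Measure.restrict_univ] at h3
      rw [hf_int] at h3
      refine h3.congr fun n => ?_
      rw [hF_def]
    have h3 : Tendsto (fun n : ℕ => F n) atTop (nhds (⨆ x, F x)) :=
      h1.comp tendsto_natCast_atTop_atTop
    have he : (⨆ x, F x) = 1 := tendsto_nhds_unique h3 h2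
    rwa [he] at h1
  have hFbot : Tendsto F atBot (nhds 0) := by
    have hbdd : BddBelow (range F) := ⟨0, by rintro _ ⟨x, rfl⟩; exact hF0 x⟩
    have h1 : Tendsto F atBot (nhds (⨅ x, F x)) := tendsto_atBot_ciInf hFm hbdd
    have hU : ⋃ n : ℕ, Ioi (-(n : ℝ)) = univ := by
      ext z
      simp only [mem_iUnion, mem_Ioi, mem_univ, iff_true]
      obtain ⟨n, hn⟩ := exists_nat_gt (-z)
      exact ⟨n, by linarith⟩
    have h2 : Tendsto (fun n : ℕ => ∫ u in Ioi (-(n : ℝ)), f u) atTop (nhds 1) := by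
      have h3 := tendsto_setIntegral_of_monotone (μ := volume) (f := f)
        (s := fun n : ℕ => Ioi (-(n : ℝ))) (fun n => measurableSet_Ioi)
        (fun m n hmn => Ioi_subset_Ioi (by exact_mod_cast neg_le_neg (Nat.cast_le.2 hmn)))
        (by rw [hU]; exact hfi.integrableOn)
      rw [hU] at h3
      simpa only [Measure.restrict_univ, hf_int] using h3
    have h2' : Tendsto (fun n : ℕ => F (-(n : ℝ))) atTop (nhds 0) := by
      have he : ∀ n : ℕ, F (-(n : ℝ)) = 1 - ∫ u in Ioi (-(n : ℝ)), f u := by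
        intro n
        have := hcompl (-(n : ℝ))
        linarith
      simp only [he]
      have := (tendsto_const_nhds (x := (1:ℝ)) (f := atTop (α := ℕ))).sub h2
      simpa using this
    have h3 : Tendsto (fun n : ℕ => F (-(n : ℝ))) atTop (nhds (⨅ x, F x)) :=
      h1.comp (tendsto_neg_atTop_atBot.comp tendsto_natCast_atTop_atTop)
    have he : (⨅ x, F x) = 0 := tendsto_nhds_unique h3 h2'
    rwa [he] at h1
  have hJconv : Convex ℝ (JSet F) := jset_convex hFm
  have hconv1 := aux_convexOn s hs₁ hs₂ f hf_meas hfi hf_nonneg hf_int hf_sconc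
    F hF_def hFm hFc hFbot t ht
  -- reflected density
  set G : ℝ → ℝ := fun u => 1 - F (-u) with hG
  have hG_def : ∀ u, G u = ∫ v in Iic u, f (-v) := by
    intro u
    rw [integral_comp_neg_Iic]
    have := hcompl (-u)
    simp only [hG]
    linarith
  have hf'_meas : Measurable (fun v => f (-v)) := hf_meas.comp measurable_neg
  have hf'_int : Integrable (fun v => f (-v)) := hfi.comp_neg
  have hf'_one : ∫ v, f (-v) = 1 := by rw [integral_neg_eq_self]; exact hf_int
  have hf'_sconc : ∀ x y θ : ℝ, 0 < f (-x) → 0 < f (-y) → 0 < θ → θ < 1 →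
      ((1 - θ) * f (-x) ^ s + θ * f (-y) ^ s) ^ (1 / s) ≤ f (-((1 - θ) * x + θ * y)) := by
    intro x y θ hx hy h0 h1
    have h := hf_sconc (-x) (-y) θ hx hy h0 h1
    have he : (1 - θ) * (-x) + θ * (-y) = -((1 - θ) * x + θ * y) := by ring
    rwa [he] at h
  have hGm : Monotone G := by
    intro a b hab
    simp only [hG]
    exact sub_le_sub_left (hFm (neg_le_neg hab)) 1
  have hGc : Continuous G := continuous_const.sub (hFc.comp continuous_neg)
  have hGb : Tendsto G atBot (nhds 0) := by
    have h : Tendsto (fun u => F (-u)) atBot (nhds 1) :=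
      hFtop.comp tendsto_neg_atBot_atTop
    have h2 := (tendsto_const_nhds (x := (1:ℝ)) (f := atBot (α := ℝ))).sub h
    simpa using h2
  have hconv2G := aux_convexOn s hs₁ hs₂ (fun v => f (-v)) hf'_meas hf'_int
    (fun v => hf_nonneg (-v)) hf'_one hf'_sconc G hG_def hGm hGc hGb t ht
  have hJrel : ∀ x, x ∈ JSet F → -x ∈ JSet G := by
    intro x hx
    simp only [JSet, mem_setOf_eq, hG, neg_neg]
    exact ⟨by linarith [hx.2], by linarith [hx.1]⟩
  have hconv2 : ConvexOn ℝ (JSet F) (fun x => (1 - F x) ^ t) := by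
    refine ⟨hJconv, ?_⟩
    intro x hx y hy a b ha hb hab
    have h := hconv2G.2 (hJrel x hx) (hJrel y hy) ha hb hab
    simp only [smul_eq_mul] at h ⊢
    have he : a * -x + b * -y = -(a * x + b * y) := by ring
    rw [he] at h
    simpa only [hG, neg_neg] using h
  refine ⟨⟨hFm, fun x => ⟨hF0 x, hF1 x⟩, fun x => hFc.continuousWithinAt, hFbot, hFtop⟩,
    hFc, fun _ => ⟨hconv1, hconv2⟩,
    fun h0 => absurd h0 (ne_of_lt htneg),
    fun hpos => absurd hpos (not_lt.2 htneg.le)⟩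
end

section
/- The bi-s*-concave classes are nested: if t* ≤ s* ≤ 1 and F is a non-degenerate bi-s*-concave distribution function, then F is bi-t*-concave; that is, P_{s*} ⊆ P_{t*} whenever t* ≤ s* ≤ 1. -/
open Set MeasureTheory Filter
open scoped NNReal ENNReal

section Aux

variable {T S : Set ℝ} {g f : ℝ → ℝ}

/-- Composition: convex monotone with convex, on an ambient convex set `T`. -/
lemma convexOn_comp_aux (hT : Convex ℝ T) (hg : ConvexOn ℝ T g) (hf : ConvexOn ℝ S f)
    (hmaps : ∀ x ∈ S, f x ∈ T) (hg' : MonotoneOn g T) :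
    ConvexOn ℝ S (fun x => g (f x)) := by
  refine ⟨hf.1, fun x hx y hy a b ha hb hab => ?_⟩
  have h1 : f (a • x + b • y) ≤ a * f x + b * f y := by
    simpa using hf.2 hx hy ha hb hab
  have hfx := hmaps x hx
  have hfy := hmaps y hy
  have hmem : a * f x + b * f y ∈ T := by
    simpa using hT hfx hfy ha hb hab
  calc g (f (a • x + b • y)) ≤ g (a * f x + b * f y) :=
        hg' (hmaps _ (hf.1 hx hy ha hb hab)) hmem h1
    _ ≤ a • g (f x) + b • g (f y) := by simpa using hg.2 hfx hfy ha hb hab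

/-- Composition: concave monotone with concave. -/
lemma concaveOn_comp_aux (hT : Convex ℝ T) (hg : ConcaveOn ℝ T g) (hf : ConcaveOn ℝ S f)
    (hmaps : ∀ x ∈ S, f x ∈ T) (hg' : MonotoneOn g T) :
    ConcaveOn ℝ S (fun x => g (f x)) := by
  refine ⟨hf.1, fun x hx y hy a b ha hb hab => ?_⟩
  have h1 : a * f x + b * f y ≤ f (a • x + b • y) := by
    simpa using hf.2 hx hy ha hb hab
  have hfx := hmaps x hx
  have hfy := hmaps y hy
  have hmem : a * f x + b * f y ∈ T := by
    simpa using hT hfx hfy ha hb hab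
  calc a • g (f x) + b • g (f y) ≤ g (a * f x + b * f y) := by
        simpa using hg.2 hfx hfy ha hb hab
    _ ≤ g (f (a • x + b • y)) := hg' hmem (hmaps _ (hf.1 hx hy ha hb hab)) h1

/-- Composition: convex antitone with concave gives convex. -/
lemma convexOn_comp_concave_aux (hT : Convex ℝ T) (hg : ConvexOn ℝ T g) (hf : ConcaveOn ℝ S f)
    (hmaps : ∀ x ∈ S, f x ∈ T) (hg' : AntitoneOn g T) :
    ConvexOn ℝ S (fun x => g (f x)) := by
  refine ⟨hf.1, fun x hx y hy a b ha hb hab => ?_⟩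
  have h1 : a * f x + b * f y ≤ f (a • x + b • y) := by
    simpa using hf.2 hx hy ha hb hab
  have hfx := hmaps x hx
  have hfy := hmaps y hy
  have hmem : a * f x + b * f y ∈ T := by
    simpa using hT hfx hfy ha hb hab
  calc g (f (a • x + b • y)) ≤ g (a * f x + b * f y) :=
        hg' hmem (hmaps _ (hf.1 hx hy ha hb hab)) h1
    _ ≤ a • g (f x) + b • g (f y) := by simpa using hg.2 hfx hfy ha hb hab

/-- `x ↦ x ^ p` is convex on `(0, ∞)` for `p ≤ 0`. -/
lemma convexOn_rpow_of_nonpos {p : ℝ} (hp : p ≤ 0) :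
    ConvexOn ℝ (Set.Ioi (0:ℝ)) (fun y : ℝ => y ^ p) := by
  have hlog : ConcaveOn ℝ (Set.Ioi (0:ℝ)) Real.log := strictConcaveOn_log_Ioi.concaveOn
  have hneg : ConvexOn ℝ (Set.Ioi (0:ℝ)) (fun y => -Real.log y) := hlog.neg
  have hsm : ConvexOn ℝ (Set.Ioi (0:ℝ)) (fun y => (-p) • (-Real.log y)) :=
    hneg.smul (by linarith)
  have hexp : ConvexOn ℝ (Set.univ : Set ℝ) Real.exp := convexOn_exp
  have hcomp : ConvexOn ℝ (Set.Ioi (0:ℝ)) (fun y => Real.exp ((-p) • (-Real.log y))) :=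
    convexOn_comp_aux convex_univ hexp hsm (fun x _ => Set.mem_univ _)
      (fun a _ b _ hab => Real.exp_le_exp.2 hab)
  refine hcomp.congr fun y hy => ?_
  have hy0 : (0:ℝ) < y := hy
  beta_reduce
  rw [Real.rpow_def_of_pos hy0, smul_eq_mul, neg_mul_neg, mul_comm]

end Aux

/-- Auxiliary one-sided property. -/
def QProp (s : ℝ) (S : Set ℝ) (G : ℝ → ℝ) : Prop :=
  (s < 0 → ConvexOn ℝ S (fun x => G x ^ s)) ∧
  (s = 0 → ConcaveOn ℝ S (fun x => Real.log (G x))) ∧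
  (0 < s → ConcaveOn ℝ S (fun x => G x ^ s))

lemma qprop_mono {s t : ℝ} (hts : t ≤ s) {S : Set ℝ} {G : ℝ → ℝ}
    (hpos : ∀ x ∈ S, 0 < G x) (hQ : QProp s S G) : QProp t S G := by
  rcases eq_or_lt_of_le hts with rfl | hlt
  · exact hQ
  -- now t < s
  rcases lt_trichotomy s 0 with hs0 | hs0 | hs0
  · -- s < 0 hence t < 0 : `G ^ t = (G ^ s) ^ (t/s)` with `t/s ≥ 1`.
    have ht0 : t < 0 := hlt.trans hs0
    refine ⟨fun _ => ?_, fun h => absurd h (by linarith), fun h => absurd h (by linarith)⟩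
    have hconv := hQ.1 hs0
    have hp1 : 1 ≤ t / s := by
      rw [le_div_iff_of_neg hs0]
      linarith
    have hg : ConvexOn ℝ (Set.Ici (0:ℝ)) (fun y : ℝ => y ^ (t / s)) :=
      convexOn_rpow hp1
    have hmono : MonotoneOn (fun y : ℝ => y ^ (t / s)) (Set.Ici (0:ℝ)) :=
      fun a ha b _ hab => Real.rpow_le_rpow ha hab (by linarith)
    have hcomp : ConvexOn ℝ S (fun x => (G x ^ s) ^ (t / s)) :=
      convexOn_comp_aux (convex_Ici 0) hg hconv
        (fun x hx => Real.rpow_nonneg (hpos x hx).le s) hmono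
    refine hcomp.congr fun x hx => ?_
    beta_reduce
    rw [← Real.rpow_mul (hpos x hx).le, mul_div_cancel₀ t hs0.ne]
  · -- s = 0 hence t < 0 : `G ^ t = exp (t * log G)`.
    subst hs0
    refine ⟨fun _ => ?_, fun h => absurd h (by linarith), fun h => absurd h (by linarith)⟩
    have hconc := hQ.2.1 rfl
    have hf : ConvexOn ℝ S (fun x => (-t) • (-Real.log (G x))) :=
      hconc.neg.smul (by linarith)
    have hcomp : ConvexOn ℝ S (fun x => Real.exp ((-t) • (-Real.log (G x)))) :=
      convexOn_comp_aux convex_univ convexOn_exp hf (fun x _ => Set.mem_univ _)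
        (fun a _ b _ hab => Real.exp_le_exp.2 hab)
    refine hcomp.congr fun x hx => ?_
    beta_reduce
    rw [Real.rpow_def_of_pos (hpos x hx), smul_eq_mul, neg_mul_neg, mul_comm]
  · -- 0 < s
    have hconc := hQ.2.2 hs0
    rcases lt_trichotomy t 0 with ht0 | ht0 | ht0
    · -- t < 0 < s : `G ^ t = (G ^ s) ^ (t/s)` with `t/s < 0`, convex antitone comp.
      refine ⟨fun _ => ?_, fun h => absurd h (by linarith), fun h => absurd h (by linarith)⟩
      have hp0 : t / s ≤ 0 := (div_nonpos_iff.2 (Or.inr ⟨ht0.le, hs0.le⟩))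
      have hg : ConvexOn ℝ (Set.Ioi (0:ℝ)) (fun y : ℝ => y ^ (t / s)) :=
        convexOn_rpow_of_nonpos hp0
      have hanti : AntitoneOn (fun y : ℝ => y ^ (t / s)) (Set.Ioi (0:ℝ)) :=
        fun a ha b _ hab => Real.rpow_le_rpow_of_nonpos ha hab hp0
      have hcomp : ConvexOn ℝ S (fun x => (G x ^ s) ^ (t / s)) :=
        convexOn_comp_concave_aux (convex_Ioi 0) hg hconc
          (fun x hx => Real.rpow_pos_of_pos (hpos x hx) s) hanti
      refine hcomp.congr fun x hx => ?_
      beta_reduce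
      rw [← Real.rpow_mul (hpos x hx).le, mul_div_cancel₀ t hs0.ne']
    · -- t = 0 : `log G = (1/s) • log (G ^ s)`.
      subst ht0
      refine ⟨fun h => absurd h (by linarith), fun _ => ?_, fun h => absurd h (by linarith)⟩
      have hlogcomp : ConcaveOn ℝ S (fun x => Real.log (G x ^ s)) :=
        concaveOn_comp_aux (convex_Ioi 0) strictConcaveOn_log_Ioi.concaveOn hconc
          (fun x hx => Real.rpow_pos_of_pos (hpos x hx) s)
          (fun a ha b _ hab => Real.log_le_log ha hab)
      have hsm : ConcaveOn ℝ S (fun x => (1 / s) • Real.log (G x ^ s)) :=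
        hlogcomp.smul (by positivity)
      refine hsm.congr fun x hx => ?_
      beta_reduce
      rw [Real.log_rpow (hpos x hx)]
      rw [smul_eq_mul]; field_simp
    · -- 0 < t < s : `G ^ t = (G ^ s) ^ (t/s)` with `0 < t/s ≤ 1`, concave monotone comp.
      refine ⟨fun h => absurd h (by linarith), fun h => absurd h (by linarith), fun _ => ?_⟩
      have hp0 : 0 ≤ t / s := by positivity
      have hp1 : t / s ≤ 1 := by
        rw [div_le_one hs0]; exact hlt.le
      have hg : ConcaveOn ℝ (Set.Ici (0:ℝ)) (fun y : ℝ => y ^ (t / s)) :=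
        Real.concaveOn_rpow hp0 hp1
      have hmono : MonotoneOn (fun y : ℝ => y ^ (t / s)) (Set.Ici (0:ℝ)) :=
        fun a ha b _ hab => Real.rpow_le_rpow ha hab hp0
      have hcomp : ConcaveOn ℝ S (fun x => (G x ^ s) ^ (t / s)) :=
        concaveOn_comp_aux (convex_Ici 0) hg hconc
          (fun x hx => Real.rpow_nonneg (hpos x hx).le s) hmono
      refine hcomp.congr fun x hx => ?_
      beta_reduce
      rw [← Real.rpow_mul (hpos x hx).le, mul_div_cancel₀ t hs0.ne']

/-- Nestedness of the bi-`s*`-concave classes: if `t* ≤ s* ≤ 1` and `F` is a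
non-degenerate bi-`s*`-concave distribution function, then `F` is bi-`t*`-concave. -/
theorem biSStarConcave_nested
    (s t : ℝ) (hts : t ≤ s) (hs : s ≤ 1)
    (F : ℝ → ℝ) (hF : IsDistFun F) (hnd : NonDeg F)
    (hbi : IsBiSStarConcave s F) :
    IsBiSStarConcave t F := by
  obtain ⟨hcont, h1, h2, h3⟩ := hbi
  have hposF : ∀ x ∈ JSet F, 0 < F x := fun x hx => hx.1
  have hposG : ∀ x ∈ JSet F, 0 < 1 - F x := fun x hx => by
    have := hx.2; simp only [sub_pos]; exact this
  have hQF : QProp t (JSet F) F :=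
    qprop_mono hts hposF ⟨fun h => (h1 h).1, fun h => (h2 h).1, fun h => (h3 h).1⟩
  have hQG : QProp t (JSet F) (fun x => 1 - F x) :=
    qprop_mono hts hposG ⟨fun h => (h1 h).2, fun h => (h2 h).2, fun h => (h3 h).2⟩
  exact ⟨hcont, fun h => ⟨hQF.1 h, hQG.1 h⟩, fun h => ⟨hQF.2.1 h, hQG.2.1 h⟩,
    fun h => ⟨hQF.2.2 h, hQG.2.2 h⟩⟩
end

section
/- Continuity of the bi-s*-concave classes at s* = 0 from below: a non-degenerate distribution function F is bi-log-concave (i.e. bi-0-concave) if and only if F is bi-s*-concave for every s* < 0; that is, P_0 = ⋂_{s* < 0} P_{s*} (restricted to non-degenerate distribution functions). -/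
open Set MeasureTheory Filter
open scoped NNReal ENNReal


lemma aux_convexOn_rpow_of_log_concave (S : Set ℝ) (g : ℝ → ℝ)
    (hg : ∀ x ∈ S, 0 < g x)
    (hc : ConcaveOn ℝ S (fun x => Real.log (g x))) (s : ℝ) (hs : s < 0) :
    ConvexOn ℝ S (fun x => g x ^ s) := by
  refine ⟨hc.1, ?_⟩
  intro x hx y hy a b ha hb hab
  have hgx := hg x hx
  have hgy := hg y hy
  have hgz := hg _ (hc.1 hx hy ha hb hab)
  dsimp only
  rw [Real.rpow_def_of_pos hgz, Real.rpow_def_of_pos hgx, Real.rpow_def_of_pos hgy]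
  have h1 : a • Real.log (g x) + b • Real.log (g y) ≤ Real.log (g (a • x + b • y)) :=
    hc.2 hx hy ha hb hab
  have h2 : Real.log (g (a • x + b • y)) * s ≤
      (a • Real.log (g x) + b • Real.log (g y)) * s :=
    mul_le_mul_of_nonpos_right h1 hs.le
  calc Real.exp (Real.log (g (a • x + b • y)) * s)
      ≤ Real.exp ((a • Real.log (g x) + b • Real.log (g y)) * s) := Real.exp_le_exp.mpr h2
    _ = Real.exp (a • (Real.log (g x) * s) + b • (Real.log (g y) * s)) := by
        simp [smul_eq_mul]; ring_nf
    _ ≤ a • Real.exp (Real.log (g x) * s) + b • Real.exp (Real.log (g y) * s) :=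
        convexOn_exp.2 (mem_univ _) (mem_univ _) ha hb hab

lemma aux_tendsto_slope (c : ℝ) (hc : 0 < c) :
    Tendsto (fun s : ℝ => (c ^ s - 1) / s) (nhdsWithin 0 (Iio 0)) (nhds (Real.log c)) := by
  have hd : HasDerivAt (fun s : ℝ => c ^ s) (Real.log c) 0 := by
    have h1 : HasDerivAt (fun s : ℝ => Real.log c * s) (Real.log c) 0 := by
      simpa using (hasDerivAt_id (0:ℝ)).const_mul (Real.log c)
    have h2 := h1.exp
    have he : (fun s : ℝ => Real.exp (Real.log c * s)) = fun s : ℝ => c ^ s := by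
      funext s; rw [Real.rpow_def_of_pos hc]
    rw [he] at h2
    simpa using h2
  have := hasDerivAt_iff_tendsto_slope.mp hd
  have hmono : nhdsWithin (0:ℝ) (Iio 0) ≤ nhdsWithin 0 {(0:ℝ)}ᶜ :=
    nhdsWithin_mono 0 (fun z hz => ne_of_lt hz)
  have h3 := this.mono_left hmono
  exact h3.congr (fun s => by simp [slope_def_field, Real.rpow_zero])

lemma aux_log_concave_of_forall (S : Set ℝ) (hS : Convex ℝ S) (g : ℝ → ℝ)
    (hg : ∀ x ∈ S, 0 < g x)
    (h : ∀ s : ℝ, s < 0 → ConvexOn ℝ S (fun x => g x ^ s)) :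
    ConcaveOn ℝ S (fun x => Real.log (g x)) := by
  refine ⟨hS, ?_⟩
  intro x hx y hy a b ha hb hab
  have hgx := hg x hx
  have hgy := hg y hy
  have hgz := hg _ (hS hx hy ha hb hab)
  simp only [smul_eq_mul] at hgz ⊢
  have key : ∀ s ∈ Iio (0:ℝ),
      a * ((g x ^ s - 1) / s) + b * ((g y ^ s - 1) / s) ≤ (g (a * x + b * y) ^ s - 1) / s := by
    intro s hs
    have hss : s < 0 := mem_Iio.mp hs
    have h1 : g (a • x + b • y) ^ s ≤ a • (g x ^ s) + b • (g y ^ s) :=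
      (h s hss).2 hx hy ha hb hab
    simp only [smul_eq_mul] at h1
    have h2 : g (a * x + b * y) ^ s - 1 ≤ a * (g x ^ s - 1) + b * (g y ^ s - 1) := by
      nlinarith
    have h3 := (div_le_div_right_of_neg hss).mpr h2
    calc a * ((g x ^ s - 1) / s) + b * ((g y ^ s - 1) / s)
        = (a * (g x ^ s - 1) + b * (g y ^ s - 1)) / s := by ring
      _ ≤ (g (a * x + b * y) ^ s - 1) / s := h3
  have tA : Tendsto (fun s : ℝ => a * ((g x ^ s - 1) / s) + b * ((g y ^ s - 1) / s))
      (nhdsWithin 0 (Iio 0)) (nhds (a * Real.log (g x) + b * Real.log (g y))) :=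
    ((aux_tendsto_slope _ hgx).const_mul a).add ((aux_tendsto_slope _ hgy).const_mul b)
  have tB : Tendsto (fun s : ℝ => (g (a * x + b * y) ^ s - 1) / s)
      (nhdsWithin 0 (Iio 0)) (nhds (Real.log (g (a * x + b * y)))) :=
    aux_tendsto_slope _ hgz
  haveI : (nhdsWithin (0:ℝ) (Iio 0)).NeBot := nhdsLT_neBot 0
  exact le_of_tendsto_of_tendsto tA tB (eventually_of_mem self_mem_nhdsWithin key)

/-- Continuity at `s* = 0` from below: a non-degenerate distribution function is
bi-log-concave (bi-`0`-concave) iff it is bi-`s*`-concave for every `s* < 0`. -/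
theorem biSStarConcave_continuity_at_zero
    (F : ℝ → ℝ) (hF : IsDistFun F) (hnd : NonDeg F) :
    IsBiSStarConcave 0 F ↔ ∀ s : ℝ, s < 0 → IsBiSStarConcave s F := by
  constructor
  · intro h0 s hs
    obtain ⟨hcont, -, h0', -⟩ := h0
    obtain ⟨hF1, hF2⟩ := h0' rfl
    refine ⟨hcont, fun _ => ⟨?_, ?_⟩, fun h => absurd h (ne_of_lt hs),
      fun h => absurd h (not_lt.mpr hs.le)⟩
    · exact aux_convexOn_rpow_of_log_concave _ F (fun x hx => hx.1) hF1 s hs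
    · exact aux_convexOn_rpow_of_log_concave _ _ (fun x hx => sub_pos.mpr hx.2) hF2 s hs
  · intro h
    have h1 := h (-1) (by norm_num)
    have hconv : Convex ℝ (JSet F) := ((h1.2.1 (by norm_num)).1).1
    refine ⟨h1.1, fun hs => absurd hs (lt_irrefl 0), fun _ => ⟨?_, ?_⟩,
      fun hs => absurd hs (lt_irrefl 0)⟩
    · exact aux_log_concave_of_forall _ hconv F (fun x hx => hx.1)
        (fun s hs => ((h s hs).2.1 hs).1)
    · exact aux_log_concave_of_forall _ hconv _ (fun x hx => sub_pos.mpr hx.2)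
        (fun s hs => ((h s hs).2.1 hs).2)
end

section
/- (Theorem 3, (i) ⇒ (ii).) Let s* ≤ 1 with s* ≠ 0 and let F be a non-degenerate bi-s*-concave distribution function. Then F is differentiable at every point of J(F), with derivative f = F′, and for all x, y ∈ J(F): (1/s*) F(y)^{s*} ≤ (1/s*) F(x)^{s*} + F(x)^{s*−1} f(x) (y − x), and (1/s*) (1−F(y))^{s*} ≤ (1/s*) (1−F(x))^{s*} − (1−F(x))^{s*−1} f(x) (y − x). -/
open Set MeasureTheory Filter
open scoped NNReal ENNReal

open Topology

/-- A convex function on an open set has one-sided derivatives at every point,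
with the left derivative at most the right derivative. -/
lemma convexOn_onesided_deriv {S : Set ℝ} {g : ℝ → ℝ} (hg : ConvexOn ℝ S g)
    (hS : IsOpen S) {x : ℝ} (hx : x ∈ S) :
    ∃ dl dr : ℝ, dl ≤ dr ∧ HasDerivWithinAt g dl (Iio x) x ∧
      HasDerivWithinAt g dr (Ioi x) x := by
  obtain ⟨ε, hε, hball⟩ := Metric.isOpen_iff.1 hS x hx
  set a := x - ε / 2 with ha_def
  set b := x + ε / 2 with hb_def
  have hax : a < x := by simp [ha_def]; linarith
  have hxb : x < b := by simp [hb_def]; linarith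
  have hsub : Icc a b ⊆ S := by
    intro t ht
    simp only [mem_Icc, ha_def, hb_def] at ht
    apply hball
    rw [Metric.mem_ball, Real.dist_eq, abs_lt]
    constructor <;> linarith [ht.1, ht.2]
  have ha : a ∈ S \ {x} := ⟨hsub ⟨le_refl a, by linarith⟩, by simp [hax.ne]⟩
  have hb : b ∈ S \ {x} := ⟨hsub ⟨by linarith, le_refl b⟩, by simp [hxb.ne']⟩
  have hm := hg.slope_mono hx
  have hsubr : Ioo x b ⊆ S \ {x} := fun t ht =>
    ⟨hsub ⟨by linarith [ht.1], ht.2.le⟩, by simp [ht.1.ne']⟩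
  have hsubl : Ioo a x ⊆ S \ {x} := fun t ht =>
    ⟨hsub ⟨ht.1.le, by linarith [ht.2]⟩, by simp [ht.2.ne]⟩
  have hner : (Ioo x b).Nonempty := nonempty_Ioo.2 hxb
  have hnel : (Ioo a x).Nonempty := nonempty_Ioo.2 hax
  have hbddr : BddBelow (slope g x '' Ioo x b) := by
    refine ⟨slope g x a, ?_⟩
    rintro v ⟨t, ht, rfl⟩
    exact hm ha (hsubr ht) (by linarith [ht.1])
  have hbddl : BddAbove (slope g x '' Ioo a x) := by
    refine ⟨slope g x b, ?_⟩
    rintro v ⟨t, ht, rfl⟩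
    exact hm (hsubl ht) hb (by linarith [ht.2])
  set dr := sInf (slope g x '' Ioo x b) with hdr
  set dl := sSup (slope g x '' Ioo a x) with hdl
  have htr : Tendsto (slope g x) (𝓝[>] x) (𝓝 dr) :=
    MonotoneOn.tendsto_nhdsWithin_Ioo_right hner (hm.mono hsubr) hbddr
  have htl : Tendsto (slope g x) (𝓝[<] x) (𝓝 dl) :=
    MonotoneOn.tendsto_nhdsWithin_Ioo_left hnel (hm.mono hsubl) hbddl
  refine ⟨dl, dr, ?_, ?_, ?_⟩
  · refine csSup_le (hnel.image _) ?_
    rintro u ⟨t, ht, rfl⟩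
    refine le_csInf (hner.image _) ?_
    rintro v ⟨t', ht', rfl⟩
    exact hm (hsubl ht) (hsubr ht') (by linarith [ht.2, ht'.1])
  · rw [hasDerivWithinAt_iff_tendsto_slope' (by simp : x ∉ Iio x)]
    exact htl
  · rw [hasDerivWithinAt_iff_tendsto_slope' (by simp : x ∉ Ioi x)]
    exact htr

/-- A concave function on an open set has one-sided derivatives at every point,
with the right derivative at most the left derivative. -/
lemma concaveOn_onesided_deriv {S : Set ℝ} {g : ℝ → ℝ} (hg : ConcaveOn ℝ S g)
    (hS : IsOpen S) {x : ℝ} (hx : x ∈ S) :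
    ∃ dl dr : ℝ, dr ≤ dl ∧ HasDerivWithinAt g dl (Iio x) x ∧
      HasDerivWithinAt g dr (Ioi x) x := by
  obtain ⟨dl, dr, hle, hl, hr⟩ := convexOn_onesided_deriv hg.neg hS hx
  exact ⟨-dl, -dr, by linarith, by simpa using hl.neg, by simpa using hr.neg⟩

lemma mul_concaveOn_of_convexOn {S : Set ℝ} {f : ℝ → ℝ} {c : ℝ} (hc : c ≤ 0)
    (hf : ConvexOn ℝ S f) : ConcaveOn ℝ S fun t => c * f t := by
  have h := (hf.smul (neg_nonneg.2 hc)).neg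
  have he : (fun t => c * f t) = -((-c) • f) := by
    funext t; simp [Pi.smul_apply]
  rw [he]; exact h

lemma mul_concaveOn_of_concaveOn {S : Set ℝ} {f : ℝ → ℝ} {c : ℝ} (hc : 0 ≤ c)
    (hf : ConcaveOn ℝ S f) : ConcaveOn ℝ S fun t => c * f t := by
  have h := hf.smul hc
  have he : (fun t => c * f t) = c • f := by
    funext t; simp [Pi.smul_apply]
  rw [he]; exact h

/-- Tangent-line upper bound for a differentiable concave function. -/
lemma concave_tangent_le {S : Set ℝ} {h : ℝ → ℝ} (hc : ConcaveOn ℝ S h) {x y d : ℝ}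
    (hx : x ∈ S) (hy : y ∈ S) (hd : HasDerivAt h d x) :
    h y ≤ h x + d * (y - x) := by
  rcases lt_trichotomy x y with hlt | rfl | hlt
  · have h1 := hc.slope_le_of_hasDerivAt hx hy hlt hd
    rw [slope_def_field] at h1
    have h2 : y - x > 0 := by linarith
    rw [div_le_iff₀ h2] at h1
    linarith
  · simp
  · have h1 := hc.le_slope_of_hasDerivAt hy hx hlt hd
    rw [slope_def_field] at h1
    have h2 : x - y > 0 := by linarith
    rw [le_div_iff₀ h2] at h1
    nlinarith

/-- Bi-`s*`-concavity (in the form of concavity of `F ^ s / s` and `(1-F) ^ s / s` on `J(F)`)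
implies differentiability of `F` on `J(F)`. -/
lemma hasDerivAt_of_biconcave {s : ℝ} (hs0 : s ≠ 0) {F : ℝ → ℝ}
    (hJ : IsOpen (JSet F))
    (hH1 : ConcaveOn ℝ (JSet F) (fun t => (1 / s) * F t ^ s))
    (hH2 : ConcaveOn ℝ (JSet F) (fun t => (1 / s) * (1 - F t) ^ s))
    {x : ℝ} (hx : x ∈ JSet F) :
    ∃ d : ℝ, HasDerivAt F d x := by
  obtain ⟨dl1, dr1, h1le, h1l, h1r⟩ := concaveOn_onesided_deriv hH1 hJ hx
  obtain ⟨dl2, dr2, h2le, h2l, h2r⟩ := concaveOn_onesided_deriv hH2 hJ hx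
  have hFx0 : (0:ℝ) < F x := hx.1
  have hFx1 : (0:ℝ) < 1 - F x := by have := hx.2; linarith
  have hv0 : (0:ℝ) < F x ^ s := Real.rpow_pos_of_pos hFx0 s
  have hw0 : (0:ℝ) < (1 - F x) ^ s := Real.rpow_pos_of_pos hFx1 s
  have hmem : JSet F ∈ 𝓝 x := hJ.mem_nhds hx
  set c1 : ℝ := (F x ^ s) ^ (1 / s - 1) with hc1
  set c2 : ℝ := ((1 - F x) ^ s) ^ (1 / s - 1) with hc2
  have hc1pos : 0 < c1 := Real.rpow_pos_of_pos hv0 _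
  have hc2pos : 0 < c2 := Real.rpow_pos_of_pos hw0 _
  have he1 : (fun t => F t ^ s) = (fun t => s * ((1 / s) * F t ^ s)) := by
    funext t; field_simp
  have he2 : (fun t => (1 - F t) ^ s) = (fun t => s * ((1 / s) * (1 - F t) ^ s)) := by
    funext t; field_simp
  have hψ1 : HasDerivAt (fun v : ℝ => v ^ (1 / s)) ((1 / s) * c1) (F x ^ s) :=
    Real.hasDerivAt_rpow_const (Or.inl hv0.ne')
  have hψ2 : HasDerivAt (fun v : ℝ => v ^ (1 / s)) ((1 / s) * c2) ((1 - F x) ^ s) :=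
    Real.hasDerivAt_rpow_const (Or.inl hw0.ne')
  -- recovering one-sided derivatives of `F` from those of `F ^ s / s`
  have hF1 : ∀ d : ℝ, ∀ T : Set ℝ, HasDerivWithinAt (fun t => (1 / s) * F t ^ s) d T x →
      HasDerivWithinAt F ((1 / s) * c1 * (s * d)) T x := by
    intro d T hd
    have hi : HasDerivWithinAt (fun t => F t ^ s) (s * d) T x := by
      rw [he1]; exact hd.const_mul s
    have hcomp : HasDerivWithinAt ((fun v : ℝ => v ^ (1 / s)) ∘ fun t => F t ^ s)
        ((1 / s) * c1 * (s * d)) T x := hψ1.comp_hasDerivWithinAt x hi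
    refine hcomp.congr_of_eventuallyEq ?_ ?_
    · filter_upwards [mem_nhdsWithin_of_mem_nhds hmem] with t ht
      show F t = (F t ^ s) ^ (1 / s)
      rw [← Real.rpow_mul ht.1.le, mul_one_div_cancel hs0, Real.rpow_one]
    · show F x = (F x ^ s) ^ (1 / s)
      rw [← Real.rpow_mul hFx0.le, mul_one_div_cancel hs0, Real.rpow_one]
  -- recovering one-sided derivatives of `F` from those of `(1 - F) ^ s / s`
  have hF2 : ∀ d : ℝ, ∀ T : Set ℝ, HasDerivWithinAt (fun t => (1 / s) * (1 - F t) ^ s) d T x →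
      HasDerivWithinAt F (-((1 / s) * c2 * (s * d))) T x := by
    intro d T hd
    have hi : HasDerivWithinAt (fun t => (1 - F t) ^ s) (s * d) T x := by
      rw [he2]; exact hd.const_mul s
    have hcomp : HasDerivWithinAt ((fun v : ℝ => v ^ (1 / s)) ∘ fun t => (1 - F t) ^ s)
        ((1 / s) * c2 * (s * d)) T x := hψ2.comp_hasDerivWithinAt x hi
    have hG : HasDerivWithinAt (fun t => 1 - F t) ((1 / s) * c2 * (s * d)) T x := by
      refine hcomp.congr_of_eventuallyEq ?_ ?_
      · filter_upwards [mem_nhdsWithin_of_mem_nhds hmem] with t ht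
        show 1 - F t = ((1 - F t) ^ s) ^ (1 / s)
        have h01 : (0:ℝ) < 1 - F t := by have := ht.2; linarith
        rw [← Real.rpow_mul h01.le, mul_one_div_cancel hs0, Real.rpow_one]
      · show 1 - F x = ((1 - F x) ^ s) ^ (1 / s)
        rw [← Real.rpow_mul hFx1.le, mul_one_div_cancel hs0, Real.rpow_one]
    have h' := hG.const_sub 1
    have heF : F = fun t => 1 - (1 - F t) := by funext t; ring
    rw [heF]
    exact h'
  have hFl1 := hF1 dl1 (Iio x) h1l
  have hFr1 := hF1 dr1 (Ioi x) h1r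
  have hFl2 := hF2 dl2 (Iio x) h2l
  have hFr2 := hF2 dr2 (Ioi x) h2r
  -- the two candidate one-sided derivatives agree by uniqueness
  have huL : (1 / s) * c1 * (s * dl1) = -((1 / s) * c2 * (s * dl2)) := by
    rw [← hFl1.derivWithin (uniqueDiffWithinAt_Iio x),
      ← hFl2.derivWithin (uniqueDiffWithinAt_Iio x)]
  have huR : (1 / s) * c1 * (s * dr1) = -((1 / s) * c2 * (s * dr2)) := by
    rw [← hFr1.derivWithin (uniqueDiffWithinAt_Ioi x),
      ← hFr2.derivWithin (uniqueDiffWithinAt_Ioi x)]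
  have hsimp : ∀ c d : ℝ, (1 / s) * c * (s * d) = c * d := by
    intro c d; field_simp
  have hord1 : (1 / s) * c1 * (s * dr1) ≤ (1 / s) * c1 * (s * dl1) := by
    rw [hsimp, hsimp]
    exact mul_le_mul_of_nonneg_left h1le hc1pos.le
  have hord2 : -((1 / s) * c2 * (s * dl2)) ≤ -((1 / s) * c2 * (s * dr2)) := by
    rw [hsimp, hsimp]
    have := mul_le_mul_of_nonneg_left h2le hc2pos.le
    linarith
  have heq : (1 / s) * c1 * (s * dl1) = (1 / s) * c1 * (s * dr1) := by
    rw [huL, huR] at *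
    linarith
  refine ⟨(1 / s) * c1 * (s * dl1), ?_⟩
  have hu : HasDerivWithinAt F ((1 / s) * c1 * (s * dl1)) (Iio x ∪ Ioi x) x :=
    hFl1.union (heq ▸ hFr1)
  rw [Iio_union_Ioi] at hu
  have h2 : HasDerivWithinAt F ((1 / s) * c1 * (s * dl1)) univ x := by
    rw [show (univ : Set ℝ) = insert x {x}ᶜ by simp [insert_eq]]
    exact HasFDerivWithinAt.insert hu
  exact hasDerivWithinAt_univ.1 h2

/-- Theorem 3, (i) ⇒ (ii): a non-degenerate bi-`s*`-concave distribution function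
(`s* ≤ 1`, `s* ≠ 0`) is differentiable on `J(F)` and satisfies the tangent-line inequalities for
`F ^ s* / s*` and `(1 - F) ^ s* / s*` there. -/
theorem biSStarConcave_implies_tangent_bounds
    (s : ℝ) (hs : s ≤ 1) (hs0 : s ≠ 0)
    (F : ℝ → ℝ) (hF : IsDistFun F) (hnd : NonDeg F)
    (hbi : IsBiSStarConcave s F) :
    Continuous F ∧
    (∀ x ∈ JSet F, DifferentiableAt ℝ F x) ∧
    (∀ x ∈ JSet F, ∀ y ∈ JSet F,
      (1 / s) * F y ^ s ≤ (1 / s) * F x ^ s + F x ^ (s - 1) * deriv F x * (y - x) ∧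
      (1 / s) * (1 - F y) ^ s ≤
        (1 / s) * (1 - F x) ^ s - (1 - F x) ^ (s - 1) * deriv F x * (y - x)) := by
  obtain ⟨hcont, hneg', _, hpos'⟩ := hbi
  have hJopen : IsOpen (JSet F) := by
    have h : JSet F = F ⁻¹' (Ioo 0 1) := rfl
    rw [h]; exact isOpen_Ioo.preimage hcont
  have hH1 : ConcaveOn ℝ (JSet F) (fun t => (1 / s) * F t ^ s) := by
    rcases hs0.lt_or_gt with h | h
    · exact mul_concaveOn_of_convexOn (le_of_lt (one_div_neg.2 h)) (hneg' h).1
    · exact mul_concaveOn_of_concaveOn (le_of_lt (one_div_pos.2 h)) (hpos' h).1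
  have hH2 : ConcaveOn ℝ (JSet F) (fun t => (1 / s) * (1 - F t) ^ s) := by
    rcases hs0.lt_or_gt with h | h
    · exact mul_concaveOn_of_convexOn (le_of_lt (one_div_neg.2 h)) (hneg' h).2
    · exact mul_concaveOn_of_concaveOn (le_of_lt (one_div_pos.2 h)) (hpos' h).2
  have hdiff : ∀ x ∈ JSet F, DifferentiableAt ℝ F x := by
    intro x hx
    obtain ⟨d, hd⟩ := hasDerivAt_of_biconcave hs0 hJopen hH1 hH2 hx
    exact hd.differentiableAt
  refine ⟨hcont, hdiff, ?_⟩
  intro x hx y hy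
  have hdFx : HasDerivAt F (deriv F x) x := (hdiff x hx).hasDerivAt
  have hFx0 : (0:ℝ) < F x := hx.1
  have hFx1 : (0:ℝ) < 1 - F x := by have := hx.2; linarith
  constructor
  · have hd1 : HasDerivAt (fun t => (1 / s) * F t ^ s)
        ((1 / s) * (deriv F x * s * F x ^ (s - 1))) x :=
      (hdFx.rpow_const (Or.inl hFx0.ne')).const_mul (1 / s)
    have ht1 := concave_tangent_le hH1 hx hy hd1
    have hdeq : (1 / s) * (deriv F x * s * F x ^ (s - 1)) = F x ^ (s - 1) * deriv F x := by
      field_simp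
    rw [hdeq] at ht1
    calc (1 / s) * F y ^ s ≤ (1 / s) * F x ^ s + F x ^ (s - 1) * deriv F x * (y - x) := by
          simpa [mul_assoc] using ht1
      _ = _ := rfl
  · have hinner : HasDerivAt (fun t => 1 - F t) (-(deriv F x)) x := hdFx.const_sub 1
    have hd2 : HasDerivAt (fun t => (1 / s) * (1 - F t) ^ s)
        ((1 / s) * (-(deriv F x) * s * (1 - F x) ^ (s - 1))) x :=
      (hinner.rpow_const (Or.inl hFx1.ne')).const_mul (1 / s)
    have ht2 := concave_tangent_le hH2 hx hy hd2
    have hdeq : (1 / s) * (-(deriv F x) * s * (1 - F x) ^ (s - 1)) =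
        -((1 - F x) ^ (s - 1) * deriv F x) := by
      field_simp
    rw [hdeq] at ht2
    have : (1 / s) * (1 - F y) ^ s ≤
        (1 / s) * (1 - F x) ^ s + -((1 - F x) ^ (s - 1) * deriv F x) * (y - x) := ht2
    linarith [this]
end

section
/- (Theorem 3, (ii) ⇒ (iii).) Let s* ≤ 1 with s* ≠ 0 and let F be a non-degenerate continuous distribution function that is differentiable at every point of J(F) with derivative f = F′, and suppose that for all x, y ∈ J(F): (1/s*) F(y)^{s*} ≤ (1/s*) F(x)^{s*} + F(x)^{s*−1} f(x)(y − x), and (1/s*)(1−F(y))^{s*} ≤ (1/s*)(1−F(x))^{s*} − (1−F(x))^{s*−1} f(x)(y − x). Then the s*-hazard function x ↦ f(x)/(1−F(x))^{1−s*} is nondecreasing on J(F), and the reverse s*-hazard function x ↦ f(x)/F(x)^{1−s*} is nonincreasing on J(F). -/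
open Set MeasureTheory Filter
open scoped NNReal ENNReal

/-- Theorem 3, (ii) ⇒ (iii): the tangent-line inequalities imply that the
`s*`-hazard function `f / (1 - F) ^ (1 - s*)` is nondecreasing on `J(F)` and the reverse
`s*`-hazard function `f / F ^ (1 - s*)` is nonincreasing on `J(F)`. -/
theorem hazard_monotone_of_tangent_bounds
    (s : ℝ) (hs : s ≤ 1) (hs0 : s ≠ 0)
    (F : ℝ → ℝ) (hF : IsDistFun F) (hnd : NonDeg F) (hcont : Continuous F)
    (f : ℝ → ℝ) (hderiv : ∀ x ∈ JSet F, HasDerivAt F (f x) x)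
    (hineq : ∀ x ∈ JSet F, ∀ y ∈ JSet F,
      (1 / s) * F y ^ s ≤ (1 / s) * F x ^ s + F x ^ (s - 1) * f x * (y - x) ∧
      (1 / s) * (1 - F y) ^ s ≤
        (1 / s) * (1 - F x) ^ s - (1 - F x) ^ (s - 1) * f x * (y - x)) :
    MonotoneOn (fun x => f x / (1 - F x) ^ (1 - s)) (JSet F) ∧
    AntitoneOn (fun x => f x / F x ^ (1 - s)) (JSet F) := by
  have conv : ∀ a : ℝ, 0 < a → ∀ b : ℝ, b / a ^ (1 - s) = a ^ (s - 1) * b := by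
    intro a ha b
    have h1 : a ^ (s - 1) = (a ^ (1 - s))⁻¹ := by
      rw [show s - 1 = -(1 - s) by ring, Real.rpow_neg ha.le]
    rw [h1, div_eq_mul_inv, mul_comm]
  constructor
  · intro x hx y hy hxy
    rcases eq_or_lt_of_le hxy with rfl | hlt
    · exact le_refl _
    · have h1 := (hineq x hx y hy).2
      have h2 := (hineq y hy x hx).2
      have hpos : (0:ℝ) < y - x := sub_pos.mpr hlt
      have key : (1 - F x) ^ (s - 1) * f x ≤ (1 - F y) ^ (s - 1) * f y := by
        nlinarith [h1, h2, hpos]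
      simp only
      rw [conv _ (by linarith [hx.2]) (f x), conv _ (by linarith [hy.2]) (f y)]
      exact key
  · intro x hx y hy hxy
    rcases eq_or_lt_of_le hxy with rfl | hlt
    · exact le_refl _
    · have h1 := (hineq x hx y hy).1
      have h2 := (hineq y hy x hx).1
      have hpos : (0:ℝ) < y - x := sub_pos.mpr hlt
      have key : F y ^ (s - 1) * f y ≤ F x ^ (s - 1) * f x := by
        nlinarith [h1, h2, hpos]
      simp only
      rw [conv _ hx.1 (f x), conv _ hy.1 (f y)]
      exact key
end

section
/- (Theorem 3, (iii) ⇒ (iv), regularity part.) Let s* ≤ 1 with s* ≠ 0 and let F be a non-degenerate continuous distribution function that is differentiable at every point of J(F) with derivative f = F′, such that x ↦ f(x)/(1−F(x))^{1−s*} is nondecreasing on J(F) and x ↦ f(x)/F(x)^{1−s*} is nonincreasing on J(F). Then f(x) > 0 for every x ∈ J(F), f is bounded on J(F), and f is Lipschitz continuous on every compact subinterval of J(F) (in particular f is differentiable at Lebesgue-almost every point of J(F)). -/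
open Set MeasureTheory Filter
open scoped NNReal ENNReal

private lemma rpow_le_add_one {a t q : ℝ} (ha : 0 < a) (hat : a ≤ t) (ht : t ≤ 1) :
    t ^ q ≤ a ^ q + 1 := by
  rcases le_or_gt 0 q with hq | hq
  · have h1 : t ^ q ≤ 1 := Real.rpow_le_one (ha.trans_le hat).le ht hq
    have h2 : (0:ℝ) ≤ a ^ q := (Real.rpow_pos_of_pos ha q).le
    linarith
  · have := Real.rpow_le_rpow_of_nonpos ha hat hq.le
    linarith

private lemma deriv_nonneg_of_monotone {F : ℝ → ℝ} {d x : ℝ} (hm : Monotone F)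
    (h : HasDerivAt F d x) : 0 ≤ d := by
  have ht := hasDerivAt_iff_tendsto_slope.mp h
  refine ge_of_tendsto ht (eventually_of_mem self_mem_nhdsWithin fun y hy => ?_)
  have hy' : y ≠ x := hy
  rcases hy'.lt_or_gt with hlt | hlt
  · have h1 : F y ≤ F x := hm hlt.le
    have h2 : y - x < 0 := by linarith
    rw [slope_def_field]
    exact div_nonneg_iff.mpr (Or.inr ⟨by linarith, h2.le⟩)
  · have h1 : F x ≤ F y := hm hlt.le
    have h2 : 0 < y - x := by linarith
    rw [slope_def_field]
    exact div_nonneg (by linarith) h2.le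

/-- Theorem 3, (iii) ⇒ (iv), regularity: monotonicity of the `s*`-hazard and
reverse `s*`-hazard functions implies that `f = F'` is strictly positive and bounded on `J(F)`,
Lipschitz on every compact subinterval of `J(F)`, and in particular differentiable at
Lebesgue-almost every point of `J(F)`. -/
theorem density_regular_of_hazard_monotone
    (s : ℝ) (hs : s ≤ 1) (hs0 : s ≠ 0)
    (F : ℝ → ℝ) (hF : IsDistFun F) (hnd : NonDeg F) (hcont : Continuous F)
    (f : ℝ → ℝ) (hderiv : ∀ x ∈ JSet F, HasDerivAt F (f x) x)
    (hhaz : MonotoneOn (fun x => f x / (1 - F x) ^ (1 - s)) (JSet F))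
    (hrev : AntitoneOn (fun x => f x / F x ^ (1 - s)) (JSet F)) :
    (∀ x ∈ JSet F, 0 < f x) ∧
    (∃ M : ℝ, ∀ x ∈ JSet F, f x ≤ M) ∧
    (∀ c d : ℝ, Icc c d ⊆ JSet F → ∃ K : ℝ≥0, LipschitzOnWith K f (Icc c d)) ∧
    (∀ᵐ x ∂(volume.restrict (JSet F)), DifferentiableAt ℝ f x) := by
  obtain ⟨hmono, hrange, _, hbot, htop⟩ := hF
  set p : ℝ := 1 - s with hp
  have hp0 : 0 ≤ p := by simp only [hp]; linarith
  have hJmem : ∀ {x : ℝ}, x ∈ JSet F → 0 < F x ∧ F x < 1 := fun hx => hx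
  have hJconv : Convex ℝ (JSet F) := by
    rw [convex_iff_ordConnected]
    exact ⟨fun x hx z hz y hy =>
      ⟨(hJmem hx).1.trans_le (hmono hy.1), (hmono hy.2).trans_lt (hJmem hz).2⟩⟩
  have hf0 : ∀ x ∈ JSet F, 0 ≤ f x := fun x hx =>
    deriv_nonneg_of_monotone hmono (hderiv x hx)
  -- positivity
  have hpos : ∀ x ∈ JSet F, 0 < f x := by
    intro x hx
    rcases (hf0 x hx).lt_or_eq with h | h
    · exact h
    exfalso
    have hzero : ∀ y ∈ JSet F ∩ Ici x, f y = 0 := by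
      rintro y ⟨hyJ, hxy⟩
      have h1 : f y / F y ^ p ≤ f x / F x ^ p := hrev hx hyJ hxy
      rw [← h, zero_div] at h1
      have hFyp : 0 < F y ^ p := Real.rpow_pos_of_pos (hJmem hyJ).1 p
      have h2 : 0 ≤ f y / F y ^ p := div_nonneg (hf0 y hyJ) hFyp.le
      have h3 : f y / F y ^ p = 0 := le_antisymm h1 h2
      exact (div_eq_zero_iff.mp h3).resolve_right hFyp.ne'
    have hS : Convex ℝ (JSet F ∩ Ici x) := hJconv.inter (convex_Ici x)
    have hconst : ∀ y ∈ JSet F ∩ Ici x, F y = F x := by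
      intro y hy
      have := hS.norm_image_sub_le_of_norm_hasDerivWithin_le
        (f' := f) (fun z hz => (hderiv z hz.1).hasDerivWithinAt)
        (C := 0) (fun z hz => by rw [hzero z hz]; simp) ⟨hx, le_refl x⟩ hy
      simp only [zero_mul, norm_le_zero_iff, sub_eq_zero] at this
      exact this
    obtain ⟨z, hz1, hz2⟩ : ∃ z, x ≤ z ∧ (F x + 1) / 2 < F z := by
      have h1 : ∀ᶠ z in atTop, (F x + 1) / 2 < F z :=
        htop.eventually_const_lt (by linarith [(hJmem hx).2])
      exact ((eventually_ge_atTop x).and h1).exists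
    obtain ⟨y, hy1, hy2⟩ := intermediate_value_Icc hz1 hcont.continuousOn
      (show (F x + 1) / 2 ∈ Icc (F x) (F z) from ⟨by linarith [(hJmem hx).2], hz2.le⟩)
    have hyJ : y ∈ JSet F :=
      ⟨by rw [hy2]; linarith [(hJmem hx).1, (hJmem hx).2],
       by rw [hy2]; linarith [(hJmem hx).2]⟩
    have := hconst y ⟨hyJ, hy1.1⟩
    rw [hy2] at this
    linarith [(hJmem hx).2]
  -- boundedness
  obtain ⟨x₀, hx₀⟩ := hnd
  have hx₀J : x₀ ∈ JSet F := hx₀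
  have hFx₀p : 0 < F x₀ ^ p := Real.rpow_pos_of_pos hx₀.1 p
  have h1Fx₀p : 0 < (1 - F x₀) ^ p := Real.rpow_pos_of_pos (by linarith [hx₀.2]) p
  have hA : 0 ≤ f x₀ / F x₀ ^ p := div_nonneg (hf0 x₀ hx₀J) hFx₀p.le
  have hB : 0 ≤ f x₀ / (1 - F x₀) ^ p := div_nonneg (hf0 x₀ hx₀J) h1Fx₀p.le
  obtain ⟨M, hM0, hMb⟩ : ∃ M : ℝ, 0 ≤ M ∧ ∀ x ∈ JSet F, f x ≤ M := by
    refine ⟨f x₀ / F x₀ ^ p + f x₀ / (1 - F x₀) ^ p, by linarith, ?_⟩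
    intro x hx
    rcases le_total x₀ x with hle | hle
    · have h1 : f x / F x ^ p ≤ f x₀ / F x₀ ^ p := hrev hx₀J hx hle
      have hFxp : 0 < F x ^ p := Real.rpow_pos_of_pos (hJmem hx).1 p
      have h2 : F x ^ p ≤ 1 := Real.rpow_le_one (hJmem hx).1.le (hrange x).2 hp0
      have h3 : f x / F x ^ p * F x ^ p ≤ f x₀ / F x₀ ^ p * 1 :=
        mul_le_mul h1 h2 hFxp.le hA
      rw [div_mul_cancel₀ _ hFxp.ne', mul_one] at h3
      linarith
    · have h1 : f x / (1 - F x) ^ p ≤ f x₀ / (1 - F x₀) ^ p := hhaz hx hx₀J hle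
      have hFxp : 0 < (1 - F x) ^ p := Real.rpow_pos_of_pos (by linarith [(hJmem hx).2]) p
      have h2 : (1 - F x) ^ p ≤ 1 :=
        Real.rpow_le_one (by linarith [(hJmem hx).2]) (by linarith [(hrange x).1]) hp0
      have h3 : f x / (1 - F x) ^ p * (1 - F x) ^ p ≤ f x₀ / (1 - F x₀) ^ p * 1 :=
        mul_le_mul h1 h2 hFxp.le hB
      rw [div_mul_cancel₀ _ hFxp.ne', mul_one] at h3
      linarith
  -- Lipschitz on compact subintervals
  have hlipIcc : ∀ c d : ℝ, Icc c d ⊆ JSet F → ∃ K : ℝ≥0, LipschitzOnWith K f (Icc c d) := by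
    intro c d hsub
    rcases le_or_gt c d with hcd | hcd
    swap
    · exact ⟨0, by rw [Set.Icc_eq_empty hcd.not_ge]; intro x hx; exact absurd hx (by simp)⟩
    have hcJ : c ∈ JSet F := hsub ⟨le_refl c, hcd⟩
    have hdJ : d ∈ JSet F := hsub ⟨hcd, le_refl d⟩
    have hFc : 0 < F c := (hJmem hcJ).1
    have hFd1 : F d < 1 := (hJmem hdJ).2
    obtain ⟨C1, hC1nn, hφ⟩ : ∃ C1 : ℝ, 0 ≤ C1 ∧
        ∀ x ∈ Icc c d, ∀ y ∈ Icc c d, ‖F y ^ p - F x ^ p‖ ≤ C1 * ‖y - x‖ := by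
      refine ⟨M * p * (F c ^ (p - 1) + 1),
        mul_nonneg (mul_nonneg hM0 hp0)
          (by positivity), ?_⟩
      intro x hx y hy
      refine Convex.norm_image_sub_le_of_norm_hasDerivWithin_le
        (f := fun t => F t ^ p) (f' := fun t => f t * p * F t ^ (p - 1))
        (fun z hz => ((hderiv z (hsub hz)).rpow_const
          (Or.inl (hJmem (hsub hz)).1.ne')).hasDerivWithinAt)
        (fun z hz => ?_) (convex_Icc c d) hx hy
      have hzJ := hsub hz
      have h1 : F z ^ (p - 1) ≤ F c ^ (p - 1) + 1 :=
        rpow_le_add_one hFc (hmono hz.1) (hrange z).2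
      have h2 : 0 < F z ^ (p - 1) := Real.rpow_pos_of_pos (hJmem hzJ).1 _
      have hfz := hf0 z hzJ
      have hfzM := hMb z hzJ
      rw [Real.norm_eq_abs, abs_of_nonneg (mul_nonneg (mul_nonneg hfz hp0) h2.le)]
      exact mul_le_mul (mul_le_mul hfzM le_rfl hp0 hM0) h1 h2.le
        (mul_nonneg hM0 hp0)
    obtain ⟨C2, hC2nn, hψ⟩ : ∃ C2 : ℝ, 0 ≤ C2 ∧
        ∀ x ∈ Icc c d, ∀ y ∈ Icc c d, ‖(1 - F y) ^ p - (1 - F x) ^ p‖ ≤ C2 * ‖y - x‖ := by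
      refine ⟨M * p * ((1 - F d) ^ (p - 1) + 1),
        mul_nonneg (mul_nonneg hM0 hp0)
          (by have := Real.rpow_pos_of_pos (by linarith : (0:ℝ) < 1 - F d) (p - 1); linarith), ?_⟩
      intro x hx y hy
      refine Convex.norm_image_sub_le_of_norm_hasDerivWithin_le
        (f := fun t => (1 - F t) ^ p) (f' := fun t => -f t * p * (1 - F t) ^ (p - 1))
        (fun z hz => (((hderiv z (hsub hz)).const_sub 1).rpow_const
          (Or.inl (by linarith [(hJmem (hsub hz)).2] : (1:ℝ) - F z ≠ 0))).hasDerivWithinAt)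
        (fun z hz => ?_) (convex_Icc c d) hx hy
      have hzJ := hsub hz
      have hz1 : 0 < 1 - F z := by linarith [(hJmem hzJ).2]
      have h1 : (1 - F z) ^ (p - 1) ≤ (1 - F d) ^ (p - 1) + 1 :=
        rpow_le_add_one (by linarith) (by linarith [hmono hz.2]) (by linarith [(hrange z).1])
      have h2 : 0 < (1 - F z) ^ (p - 1) := Real.rpow_pos_of_pos hz1 _
      have hfz := hf0 z hzJ
      have hfzM := hMb z hzJ
      have hnn : 0 ≤ f z * p * (1 - F z) ^ (p - 1) := mul_nonneg (mul_nonneg hfz hp0) h2.le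
      have habs : ‖(-f z) * p * (1 - F z) ^ (p - 1)‖ = f z * p * (1 - F z) ^ (p - 1) := by
        rw [Real.norm_eq_abs, abs_of_nonpos (by linarith)]; ring
      rw [habs]
      exact mul_le_mul (mul_le_mul hfzM le_rfl hp0 hM0) h1 h2.le
        (mul_nonneg hM0 hp0)
    have hHc0 : 0 ≤ f c / F c ^ p := div_nonneg (hf0 c hcJ) (Real.rpow_pos_of_pos hFc p).le
    have hGd0 : 0 ≤ f d / (1 - F d) ^ p :=
      div_nonneg (hf0 d hdJ) (Real.rpow_pos_of_pos (by linarith) p).le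
    have hK'0 : 0 ≤ (f c / F c ^ p) * C1 + (f d / (1 - F d) ^ p) * C2 :=
      add_nonneg (mul_nonneg hHc0 hC1nn) (mul_nonneg hGd0 hC2nn)
    have key : ∀ x ∈ Icc c d, ∀ y ∈ Icc c d, x ≤ y →
        |f y - f x| ≤ ((f c / F c ^ p) * C1 + (f d / (1 - F d) ^ p) * C2) * (y - x) := by
      intro x hx y hy hxy
      have hxJ := hsub hx
      have hyJ := hsub hy
      have hFxp : 0 < F x ^ p := Real.rpow_pos_of_pos (hJmem hxJ).1 p
      have hFyp : 0 < F y ^ p := Real.rpow_pos_of_pos (hJmem hyJ).1 p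
      have h1Fxp : 0 < (1 - F x) ^ p := Real.rpow_pos_of_pos (by linarith [(hJmem hxJ).2]) p
      have h1Fyp : 0 < (1 - F y) ^ p := Real.rpow_pos_of_pos (by linarith [(hJmem hyJ).2]) p
      -- upper bound
      have e1 : f y - f x = (f y / F y ^ p - f x / F x ^ p) * F y ^ p
          + (f x / F x ^ p) * (F y ^ p - F x ^ p) := by
        field_simp
        ring
      have hH : f y / F y ^ p - f x / F x ^ p ≤ 0 := sub_nonpos.mpr (hrev hxJ hyJ hxy)
      have hφm : 0 ≤ F y ^ p - F x ^ p :=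
        sub_nonneg.mpr (Real.rpow_le_rpow (hJmem hxJ).1.le (hmono hxy) hp0)
      have hHc : f x / F x ^ p ≤ f c / F c ^ p := hrev hcJ hxJ hx.1
      have hφb : F y ^ p - F x ^ p ≤ C1 * (y - x) := by
        have := hφ x hx y hy
        rw [Real.norm_eq_abs, Real.norm_eq_abs, abs_of_nonneg hφm,
          abs_of_nonneg (by linarith : (0:ℝ) ≤ y - x)] at this
        exact this
      have hup : f y - f x ≤ (f c / F c ^ p) * (C1 * (y - x)) := by
        have t1 : (f y / F y ^ p - f x / F x ^ p) * F y ^ p ≤ 0 :=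
          mul_nonpos_of_nonpos_of_nonneg hH hFyp.le
        have t2 : (f x / F x ^ p) * (F y ^ p - F x ^ p)
            ≤ (f c / F c ^ p) * (F y ^ p - F x ^ p) :=
          mul_le_mul_of_nonneg_right hHc hφm
        have t3 : (f c / F c ^ p) * (F y ^ p - F x ^ p)
            ≤ (f c / F c ^ p) * (C1 * (y - x)) :=
          mul_le_mul_of_nonneg_left hφb hHc0
        linarith [e1]
      -- lower bound
      have e2 : f y - f x = (f y / (1 - F y) ^ p - f x / (1 - F x) ^ p) * (1 - F x) ^ p
          + (f y / (1 - F y) ^ p) * ((1 - F y) ^ p - (1 - F x) ^ p) := by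
        field_simp
        ring
      have hG : 0 ≤ f y / (1 - F y) ^ p - f x / (1 - F x) ^ p :=
        sub_nonneg.mpr (hhaz hxJ hyJ hxy)
      have hψm : (1 - F y) ^ p - (1 - F x) ^ p ≤ 0 :=
        sub_nonpos.mpr (Real.rpow_le_rpow (by linarith [(hJmem hyJ).2])
          (by linarith [hmono hxy]) hp0)
      have hGd : f y / (1 - F y) ^ p ≤ f d / (1 - F d) ^ p := hhaz hyJ hdJ hy.2
      have hψb : -(C2 * (y - x)) ≤ (1 - F y) ^ p - (1 - F x) ^ p := by
        have := hψ x hx y hy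
        rw [Real.norm_eq_abs, Real.norm_eq_abs, abs_of_nonpos hψm,
          abs_of_nonneg (by linarith : (0:ℝ) ≤ y - x)] at this
        linarith
      have hlo : -((f d / (1 - F d) ^ p) * (C2 * (y - x))) ≤ f y - f x := by
        have t1 : 0 ≤ (f y / (1 - F y) ^ p - f x / (1 - F x) ^ p) * (1 - F x) ^ p :=
          mul_nonneg hG h1Fxp.le
        have t2 : (f d / (1 - F d) ^ p) * ((1 - F y) ^ p - (1 - F x) ^ p)
            ≤ (f y / (1 - F y) ^ p) * ((1 - F y) ^ p - (1 - F x) ^ p) :=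
          mul_le_mul_of_nonpos_right hGd hψm
        have t3 : -((f d / (1 - F d) ^ p) * (C2 * (y - x)))
            ≤ (f d / (1 - F d) ^ p) * ((1 - F y) ^ p - (1 - F x) ^ p) := by
          have := mul_le_mul_of_nonneg_left hψb hGd0
          linarith
        linarith [e2]
      have hyx0 : (0:ℝ) ≤ y - x := by linarith
      have q1 : 0 ≤ (f c / F c ^ p) * (C1 * (y - x)) :=
        mul_nonneg hHc0 (mul_nonneg hC1nn hyx0)
      have q2 : 0 ≤ (f d / (1 - F d) ^ p) * (C2 * (y - x)) :=
        mul_nonneg hGd0 (mul_nonneg hC2nn hyx0)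
      have hK'eq : ((f c / F c ^ p) * C1 + (f d / (1 - F d) ^ p) * C2) * (y - x)
          = (f c / F c ^ p) * (C1 * (y - x))
          + (f d / (1 - F d) ^ p) * (C2 * (y - x)) := by ring
      rw [abs_le]
      exact ⟨by linarith, by linarith⟩
    obtain ⟨K', hK'nn, key'⟩ : ∃ K' : ℝ, 0 ≤ K' ∧ ∀ x ∈ Icc c d, ∀ y ∈ Icc c d,
        x ≤ y → |f y - f x| ≤ K' * (y - x) := ⟨_, hK'0, key⟩
    refine ⟨K'.toNNReal, LipschitzOnWith.of_dist_le_mul fun x hx y hy => ?_⟩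
    rw [Real.dist_eq, Real.dist_eq, Real.coe_toNNReal _ hK'nn]
    rcases le_total x y with h | h
    · calc |f x - f y| = |f y - f x| := abs_sub_comm _ _
        _ ≤ K' * (y - x) := key' x hx y hy h
        _ = K' * |x - y| := by rw [abs_sub_comm, abs_of_nonneg (by linarith : (0:ℝ) ≤ y - x)]
    · calc |f x - f y| ≤ K' * (x - y) := key' y hy x hx h
        _ = K' * |x - y| := by rw [abs_of_nonneg (by linarith : (0:ℝ) ≤ x - y)]
  refine ⟨hpos, ⟨M, hMb⟩, hlipIcc, ?_⟩
  -- a.e. differentiability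
  have hJopen : IsOpen (JSet F) := by
    have : JSet F = F ⁻¹' (Ioo 0 1) := rfl
    rw [this]
    exact isOpen_Ioo.preimage hcont
  rw [ae_restrict_iff' hJopen.measurableSet, ae_iff]
  set N : Set ℝ := {x | ¬(x ∈ JSet F → DifferentiableAt ℝ f x)} with hN
  have hNsub : ∀ x ∈ N, x ∈ JSet F ∧ ¬ DifferentiableAt ℝ f x := by
    intro x hx
    by_cases h : x ∈ JSet F
    · exact ⟨h, fun hd => hx (fun _ => hd)⟩
    · exact absurd (fun h' => absurd h' h) hx
  refine measure_null_of_locally_null N fun x hx => ?_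
  obtain ⟨hxJ, -⟩ := hNsub x hx
  obtain ⟨ε, hε, hball⟩ := Metric.isOpen_iff.mp hJopen x hxJ
  have hIcc : Icc (x - ε/2) (x + ε/2) ⊆ JSet F := by
    intro z hz
    apply hball
    rw [Metric.mem_ball, Real.dist_eq, abs_lt]
    constructor <;> [linarith [hz.1]; linarith [hz.2]]
  obtain ⟨K, hK⟩ := hlipIcc _ _ hIcc
  obtain ⟨g, hg, hfg⟩ := hK.extend_real
  have hgae : ∀ᵐ y : ℝ, DifferentiableAt ℝ g y := hg.ae_differentiableAt
  refine ⟨N ∩ Ioo (x - ε/2) (x + ε/2), ?_, ?_⟩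
  · exact inter_mem_nhdsWithin N (Ioo_mem_nhds (by linarith) (by linarith))
  · refine measure_mono_null (fun y hy => ?_) (ae_iff.mp hgae)
    obtain ⟨hyN, hyI⟩ := hy
    obtain ⟨hyJ, hynd⟩ := hNsub y hyN
    simp only [mem_setOf_eq]
    intro hdg
    apply hynd
    have heq : f =ᶠ[nhds y] g :=
      eventually_of_mem (Ioo_mem_nhds hyI.1 hyI.2) fun z hz => hfg (Ioo_subset_Icc_self hz)
    exact hdg.congr_of_eventuallyEq heq
end

section
/- (Theorem 3, (iii) ⇒ (iv), derivative bounds.) Let s* ≤ 1 with s* ≠ 0 and let F be a non-degenerate continuous distribution function that is differentiable at every point of J(F) with derivative f = F′, such that x ↦ f(x)/(1−F(x))^{1−s*} is nondecreasing on J(F) and x ↦ f(x)/F(x)^{1−s*} is nonincreasing on J(F). Then for Lebesgue-almost every x ∈ J(F), f is differentiable at x with −(1−s*) f(x)²/(1−F(x)) ≤ f′(x) ≤ (1−s*) f(x)²/F(x). -/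
open Set MeasureTheory Filter
open scoped NNReal ENNReal

lemma deriv_nonneg_of_monotoneOn_nhds {g : ℝ → ℝ} {s : Set ℝ} {x d : ℝ}
    (hs : s ∈ nhds x) (hm : MonotoneOn g s) (hd : HasDerivAt g d x) : 0 ≤ d := by
  have hx : x ∈ s := mem_of_mem_nhds hs
  have ht : Tendsto (slope g x) (nhdsWithin x {x}ᶜ) (nhds d) :=
    hasDerivAt_iff_tendsto_slope.mp hd
  refine ge_of_tendsto ht ?_
  filter_upwards [nhdsWithin_le_nhds hs, self_mem_nhdsWithin] with y hy hyx
  have hyx' : y ≠ x := hyx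
  rw [slope_def_field]
  rcases lt_or_gt_of_ne hyx' with h | h
  · have : g y ≤ g x := hm hy hx h.le
    rw [div_nonneg_iff]; right; constructor <;> linarith
  · have : g x ≤ g y := hm hx hy h.le
    rw [div_nonneg_iff]; left; constructor <;> linarith

/-- Theorem 3, (iii) ⇒ (iv), derivative bounds: monotonicity of the `s*`-hazard
and reverse `s*`-hazard functions implies that for Lebesgue-almost every `x ∈ J(F)`, `f` is
differentiable at `x` with `-(1 - s*) f(x)² / (1 - F(x)) ≤ f'(x) ≤ (1 - s*) f(x)² / F(x)`. -/
theorem density_deriv_bounds_of_hazard_monotone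
    (s : ℝ) (hs : s ≤ 1) (hs0 : s ≠ 0)
    (F : ℝ → ℝ) (hF : IsDistFun F) (hnd : NonDeg F) (hcont : Continuous F)
    (f : ℝ → ℝ) (hderiv : ∀ x ∈ JSet F, HasDerivAt F (f x) x)
    (hhaz : MonotoneOn (fun x => f x / (1 - F x) ^ (1 - s)) (JSet F))
    (hrev : AntitoneOn (fun x => f x / F x ^ (1 - s)) (JSet F)) :
    ∀ᵐ x ∂(volume.restrict (JSet F)),
      DifferentiableAt ℝ f x ∧
      -(1 - s) * f x ^ 2 / (1 - F x) ≤ deriv f x ∧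
      deriv f x ≤ (1 - s) * f x ^ 2 / F x := by
  
  have hJopen : IsOpen (JSet F) := by
    have : JSet F = F ⁻¹' (Ioo 0 1) := rfl
    rw [this]; exact (isOpen_Ioo).preimage hcont
  have hJm : MeasurableSet (JSet F) := hJopen.measurableSet
  have hnegrev : MonotoneOn (fun x => -(f x / F x ^ (1 - s))) (JSet F) :=
    fun a ha b hb hab => neg_le_neg (hrev ha hb hab)
  have hg := hhaz.ae_differentiableWithinAt hJm
  have hk := hnegrev.ae_differentiableWithinAt hJm
  filter_upwards [hg, hk, ae_restrict_mem hJm] with x hgx hkx hxJ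
  have hFx : 0 < F x := hxJ.1
  have hFx1 : 0 < 1 - F x := sub_pos.2 hxJ.2
  have hJx : JSet F ∈ nhds x := hJopen.mem_nhds hxJ
  have hApos : (0:ℝ) < (1 - F x) ^ (1 - s) := Real.rpow_pos_of_pos hFx1 _
  have hBpos : (0:ℝ) < F x ^ (1 - s) := Real.rpow_pos_of_pos hFx _
  have hgd : DifferentiableAt ℝ (fun y => f y / (1 - F y) ^ (1 - s)) x :=
    hgx.differentiableAt hJx
  have hkd : DifferentiableAt ℝ (fun y => f y / F y ^ (1 - s)) x := by
    have := (hkx.differentiableAt hJx).neg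
    simpa using this
  set g := fun y => f y / (1 - F y) ^ (1 - s) with hgdef
  set k := fun y => f y / F y ^ (1 - s) with hkdef
  have hF' : HasDerivAt F (f x) x := hderiv x hxJ
  have h1F : HasDerivAt (fun y => 1 - F y) (-(f x)) x := by
    exact hF'.const_sub 1
  have hA : HasDerivAt (fun y => (1 - F y) ^ (1 - s))
      (-(f x) * (1 - s) * (1 - F x) ^ (1 - s - 1)) x :=
    h1F.rpow_const (Or.inl (ne_of_gt hFx1))
  have hB : HasDerivAt (fun y => F y ^ (1 - s))
      (f x * (1 - s) * F x ^ (1 - s - 1)) x :=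
    hF'.rpow_const (Or.inl (ne_of_gt hFx))
  -- f agrees with g * A and with k * B near x
  have heqA : f =ᶠ[nhds x] fun y => g y * (1 - F y) ^ (1 - s) := by
    filter_upwards [hJx] with y hy
    exact (div_mul_cancel₀ _ (ne_of_gt (Real.rpow_pos_of_pos (sub_pos.2 hy.2) _))).symm
  have heqB : f =ᶠ[nhds x] fun y => k y * F y ^ (1 - s) := by
    filter_upwards [hJx] with y hy
    exact (div_mul_cancel₀ _ (ne_of_gt (Real.rpow_pos_of_pos hy.1 _))).symm
  have hfA : HasDerivAt f (deriv g x * (1 - F x) ^ (1 - s) +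
      g x * (-(f x) * (1 - s) * (1 - F x) ^ (1 - s - 1))) x :=
    ((hgd.hasDerivAt.mul hA)).congr_of_eventuallyEq heqA
  have hfB : HasDerivAt f (deriv k x * F x ^ (1 - s) +
      k x * (f x * (1 - s) * F x ^ (1 - s - 1))) x :=
    ((hkd.hasDerivAt.mul hB)).congr_of_eventuallyEq heqB
  have hdg : 0 ≤ deriv g x :=
    deriv_nonneg_of_monotoneOn_nhds hJx hhaz hgd.hasDerivAt
  have hdk : deriv k x ≤ 0 := by
    have : 0 ≤ -deriv k x :=
      deriv_nonneg_of_monotoneOn_nhds hJx hnegrev hkd.hasDerivAt.neg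
    linarith
  have hs1 : 0 ≤ 1 - s := by linarith
  refine ⟨hfA.differentiableAt, ?_, ?_⟩
  · rw [hfA.deriv]
    have h1 : (1 - F x) ^ (1 - s - 1) = (1 - F x) ^ (1 - s) / (1 - F x) := by
      rw [Real.rpow_sub hFx1, Real.rpow_one]
    have key : g x * (-(f x) * (1 - s) * (1 - F x) ^ (1 - s - 1)) =
        -(1 - s) * f x ^ 2 / (1 - F x) := by
      rw [hgdef, h1]
      field_simp
    have : 0 ≤ deriv g x * (1 - F x) ^ (1 - s) := mul_nonneg hdg hApos.le
    linarith [key, this]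
  · rw [hfB.deriv]
    have h1 : F x ^ (1 - s - 1) = F x ^ (1 - s) / F x := by
      rw [Real.rpow_sub hFx, Real.rpow_one]
    have key : k x * (f x * (1 - s) * F x ^ (1 - s - 1)) =
        (1 - s) * f x ^ 2 / F x := by
      rw [hkdef, h1]
      field_simp
    have : deriv k x * F x ^ (1 - s) ≤ 0 := mul_nonpos_of_nonpos_of_nonneg hdk hBpos.le
    linarith [key, this]
end

section
/- (Remark 1(ii).) Let 0 < s* ≤ 1 and let F be a non-degenerate bi-s*-concave distribution function. Then the support interval is bounded: inf J(F) > −∞ and sup J(F) < +∞. -/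
open Set MeasureTheory Filter
open scoped NNReal ENNReal

/-- Remark 1(ii): for `0 < s* ≤ 1`, a non-degenerate bi-`s*`-concave distribution
function has bounded support interval: `inf J(F) > -∞` and `sup J(F) < +∞`. -/
theorem support_bounded_of_biSStarConcave_pos
    (s : ℝ) (hs0 : 0 < s) (hs1 : s ≤ 1)
    (F : ℝ → ℝ) (hF : IsDistFun F) (hnd : NonDeg F)
    (hbi : IsBiSStarConcave s F) :
    BddBelow (JSet F) ∧ BddAbove (JSet F) := by
  obtain ⟨x₀, hx₀0, hx₀1⟩ := hnd
  have hx₀J : x₀ ∈ JSet F := ⟨hx₀0, hx₀1⟩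
  have hmono := hF.1
  have h01 := hF.2.1
  obtain ⟨hgc, hhc⟩ := hbi.2.2.2 hs0
  constructor
  · -- BddBelow, using concavity of F^s
    by_contra hub
    rw [not_bddBelow_iff] at hub
    -- all points ≤ x₀ are in J
    have hJ : ∀ t : ℝ, t ≤ x₀ → t ∈ JSet F := by
      intro t ht
      obtain ⟨y, hyJ, hyt⟩ := hub t
      exact ⟨lt_of_lt_of_le hyJ.1 (hmono hyt.le), lt_of_le_of_lt (hmono ht) hx₀1⟩
    -- pick a < x₀ with F a < F x₀
    have hev : ∀ᶠ x in atBot, F x < F x₀ := hF.2.2.2.1.eventually (eventually_lt_nhds hx₀0)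
    obtain ⟨a, haF, ha1⟩ := (hev.and (eventually_le_atBot (x₀ - 1))).exists
    have hab : a < x₀ := by linarith
    have haJ : a ∈ JSet F := hJ a (by linarith)
    set g : ℝ → ℝ := fun x => F x ^ s with hg
    have hga : 0 < g a := Real.rpow_pos_of_pos haJ.1 s
    have hgab : g a < g x₀ := Real.rpow_lt_rpow haJ.1.le haF hs0
    set A := g a
    set B := g x₀
    -- choose c very small
    set c : ℝ := min (a - 1) ((a * B - x₀ * A) / (B - A) - 1) with hc
    have hca : c < a := lt_of_le_of_lt (min_le_left _ _) (by linarith)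
    have hcJ : c ∈ JSet F := hJ c (by linarith)
    have hgc0 : 0 ≤ g c := Real.rpow_nonneg (h01 c).1 s
    have hsec := (hgc.neg).secant_mono_aux1 hcJ hx₀J hca hab
    simp only [Pi.neg_apply] at hsec
    have hBA : 0 < B - A := by linarith
    have hcle : c ≤ (a * B - x₀ * A) / (B - A) - 1 := min_le_right _ _
    have hclt : c * (B - A) ≤ (a * B - x₀ * A) - (B - A) := by
      have := (mul_le_mul_iff_of_pos_right hBA).mpr hcle
      calc c * (B - A) ≤ ((a * B - x₀ * A) / (B - A) - 1) * (B - A) := this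
        _ = (a * B - x₀ * A) - (B - A) := by field_simp
    nlinarith [hsec, hgc0, hclt, hBA]
  · -- BddAbove, using concavity of (1-F)^s
    by_contra hub
    rw [not_bddAbove_iff] at hub
    have hJ : ∀ t : ℝ, x₀ ≤ t → t ∈ JSet F := by
      intro t ht
      obtain ⟨y, hyJ, hyt⟩ := hub t
      exact ⟨lt_of_lt_of_le hx₀0 (hmono ht), lt_of_le_of_lt (hmono hyt.le) hyJ.2⟩
    have hev : ∀ᶠ x in atTop, F x₀ < F x := hF.2.2.2.2.eventually (eventually_gt_nhds hx₀1)
    obtain ⟨b, hbF, hb1⟩ := (hev.and (eventually_ge_atTop (x₀ + 1))).exists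
    have hab : x₀ < b := by linarith
    have hbJ : b ∈ JSet F := hJ b (by linarith)
    set h : ℝ → ℝ := fun x => (1 - F x) ^ s with hh
    have hha : 0 < h x₀ := Real.rpow_pos_of_pos (by linarith) s
    have hhab : h b < h x₀ := Real.rpow_lt_rpow (by linarith [hbJ.2]) (by linarith) hs0
    set A := h x₀
    set B := h b
    set c : ℝ := max (b + 1) ((b * A - x₀ * B) / (A - B) + 1) with hc
    have hcb : b < c := lt_of_lt_of_le (by linarith) (le_max_left _ _)
    have hcJ : c ∈ JSet F := hJ c (by linarith)
    have hhc0 : 0 ≤ h c := Real.rpow_nonneg (by linarith [(h01 c).2]) s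
    have hsec := (hhc.neg).secant_mono_aux1 hx₀J hcJ hab hcb
    simp only [Pi.neg_apply] at hsec
    have hAB : 0 < A - B := by linarith
    have hcge : (b * A - x₀ * B) / (A - B) + 1 ≤ c := le_max_right _ _
    have hcgt : (b * A - x₀ * B) + (A - B) ≤ c * (A - B) := by
      have := (mul_le_mul_iff_of_pos_right hAB).mpr hcge
      calc (b * A - x₀ * B) + (A - B) = ((b * A - x₀ * B) / (A - B) + 1) * (A - B) := by
            field_simp
        _ ≤ c * (A - B) := this
    nlinarith [hsec, hhc0, hcgt, hAB]
end

section
/- (Remark 1(iii), moment bound.) Let s* < 0 and let F be a non-degenerate bi-s*-concave distribution function, and let μ_F be the Lebesgue–Stieltjes probability measure on ℝ determined by μ_F((−∞, x]) = F(x). Then for every t with 0 < t < −1/s*, the moment ∫_ℝ |x|^t dμ_F(x) is finite. -/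
open Set MeasureTheory Filter
open scoped NNReal ENNReal

/-- Existence of two strict increase points of a non-degenerate continuous CDF inside `J(F)`. -/
lemma exists_points_aux (F : ℝ → ℝ) (hmono : Monotone F) (h01 : ∀ x, 0 ≤ F x ∧ F x ≤ 1)
    (hcont : Continuous F) (hbot : Tendsto F atBot (nhds 0)) (htop : Tendsto F atTop (nhds 1))
    (hnd : ∃ x, 0 < F x ∧ F x < 1) :
    ∃ x0 c x1, x0 < c ∧ c < x1 ∧ x0 ∈ JSet F ∧ c ∈ JSet F ∧ x1 ∈ JSet F ∧
      F x0 < F c ∧ F c < F x1 := by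
  obtain ⟨c, hc0, hc1⟩ := hnd
  obtain ⟨a, ha, hac⟩ := ((hbot.eventually_lt_const hc0).and (eventually_le_atBot c)).exists
  obtain ⟨b, hb, hcb⟩ := ((htop.eventually_const_lt hc1).and (eventually_ge_atTop c)).exists
  have h1 : F a < (F a + F c) / 2 := by linarith
  have h2 : (F a + F c) / 2 < F c := by linarith
  obtain ⟨x0, hx0mem, hx0⟩ := intermediate_value_Icc hac (hcont.continuousOn)
    ⟨le_of_lt h1, le_of_lt h2⟩
  have h3 : F c < (F c + F b) / 2 := by linarith
  have h4 : (F c + F b) / 2 < F b := by linarith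
  obtain ⟨x1, hx1mem, hx1⟩ := intermediate_value_Icc hcb (hcont.continuousOn)
    ⟨le_of_lt h3, le_of_lt h4⟩
  have hFx0 : F x0 < F c := by rw [hx0]; exact h2
  have hFx1 : F c < F x1 := by rw [hx1]; exact h3
  have hx0c : x0 < c := by
    by_contra h
    exact absurd (hmono (not_lt.mp h)) (not_le.mpr hFx0)
  have hcx1 : c < x1 := by
    by_contra h
    exact absurd (hmono (not_lt.mp h)) (not_le.mpr hFx1)
  refine ⟨x0, c, x1, hx0c, hcx1, ?_, ⟨hc0, hc1⟩, ?_, hFx0, hFx1⟩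
  · constructor
    · rw [hx0]; have := (h01 a).1; linarith
    · exact lt_trans hFx0 hc1
  · constructor
    · exact lt_trans hc0 hFx1
    · rw [hx1]; have := (h01 b).2; linarith

/-- Left tail bound: convexity of `F ^ s` on `J(F)` forces a polynomial decay of `F` at `-∞`. -/
lemma left_tail_aux (s : ℝ) (hs : s < 0) (F : ℝ → ℝ) (hmono : Monotone F)
    (h01 : ∀ x, 0 ≤ F x ∧ F x ≤ 1)
    (x0 c : ℝ) (hx0c : x0 < c) (hx0 : x0 ∈ JSet F) (hcJ : c ∈ JSet F)
    (hFlt : F x0 < F c)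
    (hconv : ConvexOn ℝ (JSet F) (fun x => F x ^ s)) :
    ∃ C > (0:ℝ), ∃ M > (0:ℝ), ∀ l ≥ M, F (-l) ≤ C * l ^ (1/s) := by
  set G : ℝ → ℝ := fun x => F x ^ s with hG
  have hGx0c : G c < G x0 := Real.rpow_lt_rpow_of_neg hx0.1 hFlt hs
  set B : ℝ := (G x0 - G c) / (c - x0) with hB
  have hBpos : 0 < B := div_pos (by linarith) (by linarith)
  have key : ∀ x < x0, F x ≤ (B * (x0 - x)) ^ (1/s) := by
    intro x hx
    have hBx : 0 < B * (x0 - x) := mul_pos hBpos (by linarith)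
    rcases eq_or_lt_of_le (h01 x).1 with h0 | h0
    · rw [← h0]; exact (Real.rpow_pos_of_pos hBx _).le
    · have hxJ : x ∈ JSet F := ⟨h0, lt_of_le_of_lt (hmono hx.le) hx0.2⟩
      have hslope := hconv.slope_mono_adjacent hxJ hcJ hx (by linarith)
      have h1' : (G x0 - G x) / (x0 - x) ≤ -B := by
        calc (G x0 - G x) / (x0 - x) ≤ (G c - G x0) / (c - x0) := hslope
        _ = -((G x0 - G c) / (c - x0)) := by ring
        _ = -B := by rw [hB]
      have h2 : B * (x0 - x) + G x0 ≤ G x := by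
        have hd : 0 < x0 - x := by linarith
        have := (div_le_iff₀ hd).mp h1'
        nlinarith
      have h3 : B * (x0 - x) ≤ G x := by
        have : 0 < G x0 := Real.rpow_pos_of_pos hx0.1 _
        linarith
      have hFx : F x = (G x) ^ (1/s) := by
        rw [hG]
        simp only
        rw [← Real.rpow_mul (h01 x).1, mul_one_div_cancel hs.ne, Real.rpow_one]
      rw [hFx]
      exact Real.rpow_le_rpow_of_nonpos hBx h3 (one_div_neg.mpr hs).le
  refine ⟨(B/2) ^ (1/s), Real.rpow_pos_of_pos (by linarith) _, 2*|x0| + 2, by positivity, ?_⟩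
  intro l hl
  have habs1 : -x0 ≤ |x0| := neg_le_abs x0
  have habs2 : x0 ≤ |x0| := le_abs_self x0
  have hl0 : 0 < l := by have : 0 ≤ |x0| := abs_nonneg x0; linarith
  have hxl : -l < x0 := by linarith
  have h1 : B/2 * l ≤ B * (x0 - (-l)) := by nlinarith
  calc F (-l) ≤ (B * (x0 - (-l))) ^ (1/s) := key (-l) hxl
  _ ≤ (B/2 * l) ^ (1/s) :=
      Real.rpow_le_rpow_of_nonpos (by nlinarith) h1 (one_div_neg.mpr hs).le
  _ = (B/2) ^ (1/s) * l ^ (1/s) := Real.mul_rpow (by linarith) hl0.le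

/-- Right tail bound: convexity of `(1 - F) ^ s` on `J(F)` forces polynomial decay of `1 - F`
at `+∞`. -/
lemma right_tail_aux (s : ℝ) (hs : s < 0) (F : ℝ → ℝ) (hmono : Monotone F)
    (h01 : ∀ x, 0 ≤ F x ∧ F x ≤ 1)
    (c x1 : ℝ) (hcx1 : c < x1) (hcJ : c ∈ JSet F) (hx1 : x1 ∈ JSet F)
    (hFlt : F c < F x1)
    (hconv : ConvexOn ℝ (JSet F) (fun x => (1 - F x) ^ s)) :
    ∃ C > (0:ℝ), ∃ M > (0:ℝ), ∀ l ≥ M, 1 - F l ≤ C * l ^ (1/s) := by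
  set H : ℝ → ℝ := fun x => (1 - F x) ^ s with hH
  have hHlt : H c < H x1 := Real.rpow_lt_rpow_of_neg (by have := hx1.2; linarith)
    (by linarith) hs
  set B : ℝ := (H x1 - H c) / (x1 - c) with hB
  have hBpos : 0 < B := div_pos (by linarith) (by linarith)
  have key : ∀ x, x1 < x → 1 - F x ≤ (B * (x - x1)) ^ (1/s) := by
    intro x hx
    have hBx : 0 < B * (x - x1) := mul_pos hBpos (by linarith)
    rcases eq_or_lt_of_le (h01 x).2 with h0 | h0
    · rw [h0]; simp only [sub_self]; exact (Real.rpow_pos_of_pos hBx _).le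
    · have hxJ : x ∈ JSet F := ⟨lt_of_lt_of_le hx1.1 (hmono hx.le), h0⟩
      have hslope := hconv.slope_mono_adjacent hcJ hxJ hcx1 hx
      have h1' : B ≤ (H x - H x1) / (x - x1) := by
        calc B = (H x1 - H c) / (x1 - c) := hB
        _ ≤ (H x - H x1) / (x - x1) := hslope
      have h2 : B * (x - x1) + H x1 ≤ H x := by
        have hd : 0 < x - x1 := by linarith
        have := (le_div_iff₀ hd).mp h1'
        nlinarith
      have h3 : B * (x - x1) ≤ H x := by
        have : 0 < H x1 := Real.rpow_pos_of_pos (by have := hx1.2; linarith) _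
        linarith
      have hFx : 1 - F x = (H x) ^ (1/s) := by
        rw [hH]
        simp only
        rw [← Real.rpow_mul (by linarith), mul_one_div_cancel hs.ne, Real.rpow_one]
      rw [hFx]
      exact Real.rpow_le_rpow_of_nonpos hBx h3 (one_div_neg.mpr hs).le
  refine ⟨(B/2) ^ (1/s), Real.rpow_pos_of_pos (by linarith) _, 2*|x1| + 2, by positivity, ?_⟩
  intro l hl
  have habs1 : -x1 ≤ |x1| := neg_le_abs x1
  have habs2 : x1 ≤ |x1| := le_abs_self x1
  have hl0 : 0 < l := by have : 0 ≤ |x1| := abs_nonneg x1; linarith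
  have hxl : x1 < l := by linarith
  have h1 : B/2 * l ≤ B * (l - x1) := by nlinarith
  calc 1 - F l ≤ (B * (l - x1)) ^ (1/s) := key l hxl
  _ ≤ (B/2 * l) ^ (1/s) :=
      Real.rpow_le_rpow_of_nonpos (by nlinarith) h1 (one_div_neg.mpr hs).le
  _ = (B/2) ^ (1/s) * l ^ (1/s) := Real.mul_rpow (by linarith) hl0.le

/-- The Lebesgue–Stieltjes measure of a CDF is a probability measure. -/
lemma measure_univ_eq_one_aux (F : ℝ → ℝ) (htop : Tendsto F atTop (nhds 1))
    (μ : Measure ℝ) (hμ : ∀ x, μ (Iic x) = ENNReal.ofReal (F x)) :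
    μ (univ : Set ℝ) = 1 := by
  have hunion : ⋃ n : ℕ, Iic ((n : ℝ)) = univ := by
    ext x
    simp only [mem_iUnion, mem_Iic, mem_univ, iff_true]
    exact exists_nat_ge x
  have hmono : Monotone fun n : ℕ => Iic ((n : ℝ)) := fun m n h =>
    Iic_subset_Iic.mpr (by exact_mod_cast h)
  have h1 : Tendsto (fun n : ℕ => μ (Iic ((n : ℝ)))) atTop (nhds (μ (⋃ n : ℕ, Iic ((n : ℝ))))) :=
    tendsto_measure_iUnion_atTop hmono
  rw [hunion] at h1
  have h2 : Tendsto (fun n : ℕ => μ (Iic ((n : ℝ)))) atTop (nhds 1) := by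
    simp only [hμ]
    have : Tendsto (fun n : ℕ => ENNReal.ofReal (F (n : ℝ))) atTop (nhds (ENNReal.ofReal 1)) :=
      (ENNReal.continuous_ofReal.tendsto 1).comp (htop.comp tendsto_natCast_atTop_atTop)
    simpa using this
  exact tendsto_nhds_unique h1 h2

/-- Remark 1(iii), moment bound: for `s* < 0` and a non-degenerate
bi-`s*`-concave distribution function `F` with Lebesgue–Stieltjes measure `μ`, every absolute
moment of order `t ∈ (0, -1/s*)` is finite. -/
theorem moments_finite_of_biSStarConcave
    (s : ℝ) (hs : s < 0)
    (F : ℝ → ℝ) (hF : IsDistFun F) (hnd : NonDeg F)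
    (hbi : IsBiSStarConcave s F)
    (μ : Measure ℝ) (hμ : ∀ x, μ (Iic x) = ENNReal.ofReal (F x))
    (t : ℝ) (ht0 : 0 < t) (ht1 : t < -1 / s) :
    ∫⁻ x, ENNReal.ofReal (|x| ^ t) ∂μ < ⊤ := by
  obtain ⟨hmono, h01, _, hbot, htop⟩ := hF
  obtain ⟨hcont, hneg, -, -⟩ := hbi
  obtain ⟨hconvF, hconvG⟩ := hneg hs
  obtain ⟨x0, c, x1, hx0c, hcx1, hx0J, hcJ, hx1J, hlt01, hlt12⟩ :=
    exists_points_aux F hmono h01 hcont hbot htop hnd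
  obtain ⟨CL, hCL, ML, hML, hleft⟩ :=
    left_tail_aux s hs F hmono h01 x0 c hx0c hx0J hcJ hlt01 hconvF
  obtain ⟨CR, hCR, MR, hMR, hright⟩ :=
    right_tail_aux s hs F hmono h01 c x1 hcx1 hcJ hx1J hlt12 hconvG
  have huniv : μ univ = 1 := measure_univ_eq_one_aux F htop μ hμ
  have hfin : IsFiniteMeasure μ := ⟨by rw [huniv]; exact ENNReal.one_lt_top⟩
  have hIoi : ∀ l : ℝ, μ (Ioi l) = ENNReal.ofReal (1 - F l) := by
    intro l
    rw [← compl_Iic, measure_compl measurableSet_Iic (measure_ne_top μ _), huniv, hμ,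
      ENNReal.ofReal_sub _ (h01 l).1, ENNReal.ofReal_one]
  set M : ℝ := max (max ML MR) 1 with hM
  have hM0 : (0:ℝ) < M := lt_of_lt_of_le one_pos (le_max_right _ _)
  rw [MeasureTheory.lintegral_rpow_eq_lintegral_meas_lt_mul μ
    (ae_of_all _ fun x => abs_nonneg x) measurable_abs.aemeasurable ht0]
  have hsplit : Ioi (0:ℝ) = Ioc 0 M ∪ Ioi M := (Ioc_union_Ioi_eq_Ioi hM0.le).symm
  rw [hsplit, lintegral_union measurableSet_Ioi (Ioc_disjoint_Ioi le_rfl)]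
  have part1 : ∫⁻ l in Ioc 0 M, μ {a : ℝ | l < |a|} * ENNReal.ofReal (l ^ (t-1)) < ⊤ := by
    have hbound : ∫⁻ l in Ioc 0 M, μ {a : ℝ | l < |a|} * ENNReal.ofReal (l ^ (t-1)) ≤
        ∫⁻ l in Ioc 0 M, ENNReal.ofReal (l ^ (t-1)) := by
      refine lintegral_mono fun l => ?_
      calc μ {a : ℝ | l < |a|} * ENNReal.ofReal (l ^ (t-1))
          ≤ 1 * ENNReal.ofReal (l ^ (t-1)) := by
            gcongr
            rw [← huniv]; exact measure_mono (subset_univ _)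
      _ = _ := one_mul _
    refine lt_of_le_of_lt hbound ?_
    have hint : IntegrableOn (fun l : ℝ => l ^ (t-1)) (Ioc 0 M) := by
      have h := (intervalIntegral.integrableOn_Ioo_rpow_iff hM0).mpr (by linarith : (-1:ℝ) < t - 1)
      exact h.congr_set_ae Ioo_ae_eq_Ioc.symm
    exact hint.lintegral_lt_top
  have hq : 1/s + (t-1) < -1 := by
    have h1 : -1/s = -(1/s) := by ring
    rw [h1] at ht1
    linarith
  have part2 : ∫⁻ l in Ioi M, μ {a : ℝ | l < |a|} * ENNReal.ofReal (l ^ (t-1)) < ⊤ := by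
    have hbound : ∫⁻ l in Ioi M, μ {a : ℝ | l < |a|} * ENNReal.ofReal (l ^ (t-1)) ≤
        ∫⁻ l in Ioi M, ENNReal.ofReal ((CL + CR) * l ^ (1/s + (t-1))) := by
      refine lintegral_mono_ae ?_
      filter_upwards [ae_restrict_mem measurableSet_Ioi] with l hl
      have hl0 : (0:ℝ) < l := lt_trans hM0 hl
      have hsub : {a : ℝ | l < |a|} ⊆ Iic (-l) ∪ Ioi l := by
        intro a ha
        have ha' : l < |a| := ha
        rcases le_or_gt a 0 with h | h
        · left
          simp only [mem_Iic]
          rw [abs_of_nonpos h] at ha'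
          linarith
        · right
          simp only [mem_Ioi]
          rwa [abs_of_pos h] at ha'
      have hmeas : μ {a : ℝ | l < |a|} ≤ ENNReal.ofReal ((CL + CR) * l ^ (1/s)) := by
        calc μ {a : ℝ | l < |a|} ≤ μ (Iic (-l) ∪ Ioi l) := measure_mono hsub
        _ ≤ μ (Iic (-l)) + μ (Ioi l) := measure_union_le _ _
        _ = ENNReal.ofReal (F (-l)) + ENNReal.ofReal (1 - F l) := by rw [hμ, hIoi]
        _ ≤ ENNReal.ofReal (CL * l ^ (1/s)) + ENNReal.ofReal (CR * l ^ (1/s)) := by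
            gcongr
            · exact hleft l (le_trans (le_trans (le_max_left _ _) (le_max_left _ _)) hl.le)
            · exact hright l (le_trans (le_trans (le_max_right _ _) (le_max_left _ _)) hl.le)
        _ = ENNReal.ofReal ((CL + CR) * l ^ (1/s)) := by
            rw [← ENNReal.ofReal_add (by positivity) (by positivity)]
            ring_nf
      calc μ {a : ℝ | l < |a|} * ENNReal.ofReal (l ^ (t-1))
          ≤ ENNReal.ofReal ((CL + CR) * l ^ (1/s)) * ENNReal.ofReal (l ^ (t-1)) :=
            mul_le_mul_left hmeas _
      _ = ENNReal.ofReal ((CL + CR) * l ^ (1/s) * l ^ (t-1)) := by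
            rw [← ENNReal.ofReal_mul (by positivity)]
      _ = ENNReal.ofReal ((CL + CR) * l ^ (1/s + (t-1))) := by
            rw [Real.rpow_add hl0, mul_assoc]
    refine lt_of_le_of_lt hbound ?_
    have hint : IntegrableOn (fun l : ℝ => (CL + CR) * l ^ (1/s + (t-1))) (Ioi M) :=
      ((integrableOn_Ioi_rpow_iff hM0).mpr hq).const_mul _
    exact hint.lintegral_lt_top
  exact ENNReal.mul_lt_top ENNReal.ofReal_lt_top (ENNReal.add_lt_top.mpr ⟨part1, part2⟩)
end

section
/- (Remark 2.) Let s* < 0 and let F be a non-degenerate bi-s*-concave distribution function with derivative f = F′ on J(F). Then T₁(F) := sup_{x ∈ J(F)} f(x)/F(x)^{1−s*} equals the limit of f(x)/F(x)^{1−s*} as x decreases to inf J(F), and T₁(F) > 0; moreover, if inf J(F) > −∞ then T₁(F) = +∞. Analogously, T₂(F) := sup_{x ∈ J(F)} f(x)/(1−F(x))^{1−s*} equals the limit of f(x)/(1−F(x))^{1−s*} as x increases to sup J(F), T₂(F) > 0, and if sup J(F) < +∞ then T₂(F) = +∞. -/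
open Set MeasureTheory Filter
open scoped NNReal ENNReal

open Classical in
/-- Filter describing `x` decreasing to `inf J` within `J` (`atBot` within `J` when `J` is
unbounded below). -/
noncomputable def leftEndFilter (J : Set ℝ) : Filter ℝ :=
  if BddBelow J then nhdsWithin (sInf J) J else Filter.atBot ⊓ Filter.principal J

open Classical in
/-- Filter describing `x` increasing to `sup J` within `J` (`atTop` within `J` when `J` is
unbounded above). -/
noncomputable def rightEndFilter (J : Set ℝ) : Filter ℝ :=
  if BddAbove J then nhdsWithin (sSup J) J else Filter.atTop ⊓ Filter.principal J

lemma leftEndFilter_le_principal (J : Set ℝ) : leftEndFilter J ≤ Filter.principal J := by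
  unfold leftEndFilter; split
  · exact inf_le_right
  · exact inf_le_right

lemma exists_lt_of_isOpen_mem {J : Set ℝ} (hJ : IsOpen J) {x : ℝ} (hx : x ∈ J) :
    ∃ y ∈ J, y < x := by
  obtain ⟨l, u, hmem, hsub⟩ := mem_nhds_iff_exists_Ioo_subset.mp (hJ.mem_nhds hx)
  refine ⟨(l + x) / 2, hsub ⟨by linarith [hmem.1], by linarith [hmem.1, hmem.2]⟩,
    by linarith [hmem.1]⟩

lemma eventually_le_leftEndFilter {J : Set ℝ} (hJ : IsOpen J) {x : ℝ} (hx : x ∈ J) :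
    ∀ᶠ y in leftEndFilter J, y ≤ x := by
  unfold leftEndFilter
  split_ifs with hb
  · have hlt : sInf J < x := by
      obtain ⟨y, hyJ, hyx⟩ := exists_lt_of_isOpen_mem hJ hx
      exact lt_of_le_of_lt (csInf_le hb hyJ) hyx
    exact ((eventually_lt_nhds hlt).mono fun y hy => hy.le).filter_mono nhdsWithin_le_nhds
  · exact (eventually_le_atBot x).filter_mono inf_le_left

lemma tendsto_biSup_of_antitoneOn {J : Set ℝ} {L : Filter ℝ}
    (hL : L ≤ Filter.principal J) (h2 : ∀ x ∈ J, ∀ᶠ y in L, y ≤ x)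
    {h : ℝ → ℝ≥0∞} (hanti : ∀ ⦃x⦄, x ∈ J → ∀ ⦃y⦄, y ∈ J → x ≤ y → h y ≤ h x) :
    Tendsto h L (nhds (⨆ x ∈ J, h x)) := by
  have hmemJ : ∀ᶠ y in L, y ∈ J := hL (mem_principal_self J)
  refine tendsto_order.2 ⟨?_, ?_⟩
  · intro l hl
    obtain ⟨x, hlx⟩ := lt_iSup_iff.mp hl
    obtain ⟨hxJ, hlx⟩ := lt_iSup_iff.mp hlx
    filter_upwards [h2 x hxJ, hmemJ] with y hyx hyJ
    exact hlx.trans_le (hanti hyJ hxJ hyx)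
  · intro u hu
    filter_upwards [hmemJ] with y hyJ
    exact lt_of_le_of_lt (le_iSup₂ (f := fun x (_ : x ∈ J) => h x) y hyJ) hu

lemma core_T1 (s : ℝ) (hs : s < 0) (F : ℝ → ℝ)
    (hmono : Monotone F) (hcont : Continuous F)
    (h0 : ∀ x, 0 ≤ F x) (hbot : Tendsto F atBot (nhds 0))
    (hne : (JSet F).Nonempty)
    (hconv : ConvexOn ℝ (JSet F) (fun x => F x ^ s))
    (f : ℝ → ℝ) (hderiv : ∀ x ∈ JSet F, HasDerivAt F (f x) x) :
    Tendsto (fun x => ENNReal.ofReal (f x / F x ^ (1 - s))) (leftEndFilter (JSet F))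
        (nhds (⨆ x ∈ JSet F, ENNReal.ofReal (f x / F x ^ (1 - s)))) ∧
      0 < ⨆ x ∈ JSet F, ENNReal.ofReal (f x / F x ^ (1 - s)) ∧
      (BddBelow (JSet F) →
        (⨆ x ∈ JSet F, ENNReal.ofReal (f x / F x ^ (1 - s))) = ⊤) := by
  set J := JSet F with hJdef
  have hJopen : IsOpen J := by
    have : J = F ⁻¹' (Set.Ioo 0 1) := rfl
    rw [this]; exact isOpen_Ioo.preimage hcont
  have hord : ∀ ⦃x⦄, x ∈ J → ∀ ⦃y⦄, y ∈ J → Set.Icc x y ⊆ J :=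
    fun x hx y hy => hconv.1.ordConnected.out hx hy
  -- rewriting division as multiplication
  have h_eq : ∀ x ∈ J, f x / F x ^ (1 - s) = f x * F x ^ (s - 1) := by
    intro x hx
    rw [show (1 : ℝ) - s = -(s - 1) by ring, Real.rpow_neg (h0 x), div_eq_mul_inv, inv_inv]
  -- derivative of F ^ s
  have hg : ∀ x ∈ J, HasDerivAt (fun y => F y ^ s) (f x * s * F x ^ (s - 1)) x :=
    fun x hx => (hderiv x hx).rpow_const (Or.inl hx.1.ne')
  -- antitonicity of f * F ^ (s-1) on J
  have key : ∀ ⦃x⦄, x ∈ J → ∀ ⦃y⦄, y ∈ J → x ≤ y →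
      f y * F y ^ (s - 1) ≤ f x * F x ^ (s - 1) := by
    intro x hx y hy hxy
    rcases eq_or_lt_of_le hxy with rfl | hlt
    · exact le_refl _
    have h1 := hconv.le_slope_of_hasDerivAt hx hy hlt (hg x hx)
    have h2 := hconv.slope_le_of_hasDerivAt hx hy hlt (hg y hy)
    have hchain : f x * s * F x ^ (s - 1) ≤ f y * s * F y ^ (s - 1) := h1.trans h2
    nlinarith [hchain, hs]
  -- nonnegativity of f on J
  have hfnn : ∀ x ∈ J, 0 ≤ f x := by
    intro x hx
    refine ge_of_tendsto (hasDerivAt_iff_tendsto_slope.mp (hderiv x hx)) ?_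
    refine Eventually.of_forall fun y => ?_
    rw [slope_def_field]
    rcases lt_trichotomy x y with h | h | h
    · exact div_nonneg (by linarith [hmono h.le]) (by linarith)
    · simp [h]
    · exact div_nonneg_iff.mpr (Or.inr ⟨by linarith [hmono h.le], by linarith⟩)
  set S := ⨆ x ∈ J, ENNReal.ofReal (f x / F x ^ (1 - s)) with hSdef
  have hSalt : S = ⨆ x ∈ J, ENNReal.ofReal (f x * F x ^ (s - 1)) :=
    biSup_congr fun x hx => by rw [h_eq x hx]
  -- Part 3 : BddBelow → S = ⊤
  have part3 : BddBelow J → S = ⊤ := by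
    intro hbb
    by_contra hS
    set a := sInf J with hadef
    obtain ⟨y, hy⟩ := hne
    have haJ : a ∉ J := by
      intro haJ
      obtain ⟨z, hzJ, hza⟩ := exists_lt_of_isOpen_mem hJopen haJ
      exact absurd (csInf_le hbb hzJ) (not_le.mpr hza)
    have hay : a < y := lt_of_le_of_ne (csInf_le hbb hy) (fun h => haJ (h ▸ hy))
    have hIooJ : Set.Ioo a y ⊆ J := by
      intro x hx
      obtain ⟨z, hzJ, hzx⟩ := exists_lt_of_csInf_lt ⟨y, hy⟩ hx.1
      exact hord hzJ hy ⟨hzx.le, hx.2.le⟩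
    set M := S.toReal with hMdef
    have hM : ∀ x ∈ J, f x * F x ^ (s - 1) ≤ M := by
      intro x hx
      have hle : ENNReal.ofReal (f x * F x ^ (s - 1)) ≤ S := by
        rw [hSalt]
        exact le_iSup₂ (f := fun x (_ : x ∈ J) => ENNReal.ofReal (f x * F x ^ (s - 1))) x hx
      exact (ENNReal.ofReal_le_iff_le_toReal hS).mp hle
    have hMnn : 0 ≤ M := ENNReal.toReal_nonneg
    set B := F y ^ s + (-s) * M * (y - a) with hBdef
    have hFyspos : 0 < F y ^ s := Real.rpow_pos_of_pos hy.1 s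
    have hB : 0 < B := by
      have : 0 ≤ (-s) * M * (y - a) := by
        apply mul_nonneg (mul_nonneg (by linarith) hMnn) (by linarith)
      simp only [hBdef]; linarith
    have hbound : ∀ x ∈ Set.Ioo a y, F x ^ s ≤ B := by
      intro x hx
      have hxJ : x ∈ J := hIooJ hx
      have hslope := hconv.le_slope_of_hasDerivAt hxJ hy hx.2 (hg x hxJ)
      rw [slope_def_field] at hslope
      have hyx : (0 : ℝ) < y - x := by linarith [hx.2]
      have hlb : s * M ≤ f x * s * F x ^ (s - 1) := by
        nlinarith [hM x hxJ, hs]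
      have := (le_div_iff₀ hyx).mp (hlb.trans hslope)
      have h2 : (-s) * M * (y - x) ≤ (-s) * M * (y - a) := by
        apply mul_le_mul_of_nonneg_left (by linarith [hx.1])
          (mul_nonneg (by linarith) hMnn)
      simp only [hBdef]; nlinarith
    set c := B ^ s⁻¹ with hcdef
    have hc : 0 < c := Real.rpow_pos_of_pos hB _
    have hcF : ∀ x ∈ Set.Ioo a y, c ≤ F x := by
      intro x hx
      have hxJ : x ∈ J := hIooJ hx
      exact (Real.rpow_inv_le_iff_of_neg hB hxJ.1 hs).mpr (hbound x hx)
    have hFa : c ≤ F a := by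
      refine ge_of_tendsto ((hcont.tendsto a).mono_left (nhdsWithin_le_nhds (s := Set.Ioi a))) ?_
      filter_upwards [Ioo_mem_nhdsGT hay] with x hx using hcF x hx
    have hFa0 : F a ≤ 0 := by
      by_contra h
      push_neg at h
      exact haJ ⟨h, lt_of_le_of_lt (hmono hay.le) hy.2⟩
    linarith
  -- Part 1 : the limit statement
  have part1 : Tendsto (fun x => ENNReal.ofReal (f x / F x ^ (1 - s))) (leftEndFilter J)
      (nhds S) := by
    have hanti : ∀ ⦃x⦄, x ∈ J → ∀ ⦃y⦄, y ∈ J → x ≤ y →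
        ENNReal.ofReal (f y * F y ^ (s - 1)) ≤ ENNReal.ofReal (f x * F x ^ (s - 1)) :=
      fun x hx y hy hxy => ENNReal.ofReal_le_ofReal (key hx hy hxy)
    have ht := tendsto_biSup_of_antitoneOn (leftEndFilter_le_principal J)
      (fun x hx => eventually_le_leftEndFilter hJopen hx) hanti
    rw [← hSalt] at ht
    refine ht.congr' ?_
    filter_upwards [leftEndFilter_le_principal J (mem_principal_self J)] with x hx
    rw [h_eq x hx]
  -- Part 2 : S > 0
  have part2 : 0 < S := by
    by_cases hbb : BddBelow J
    · rw [part3 hbb]; exact ENNReal.zero_lt_top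
    · obtain ⟨y, hy⟩ := hne
      have hev : ∀ᶠ x in atBot, F x < F y := hbot.eventually (eventually_lt_nhds hy.1)
      obtain ⟨N, hN⟩ := eventually_atBot.mp hev
      obtain ⟨x, hxJ, hxlt⟩ := not_bddBelow_iff.mp hbb (min N y)
      have hxy : x < y := lt_of_lt_of_le hxlt (min_le_right _ _)
      have hFxy : F x < F y := hN x (le_of_lt (lt_of_lt_of_le hxlt (min_le_left _ _)))
      have hIoo : ∀ z ∈ Set.Ioo x y, z ∈ J := fun z hz => hord hxJ hy ⟨hz.1.le, hz.2.le⟩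
      obtain ⟨c, hcmem, hc⟩ := exists_hasDerivAt_eq_slope F f hxy
        (hcont.continuousOn) (fun z hz => hderiv z (hIoo z hz))
      have hcJ : c ∈ J := hIoo c hcmem
      have hfc : 0 < f c := by
        rw [hc]; exact div_pos (by linarith) (by linarith)
      have hterm : 0 < ENNReal.ofReal (f c * F c ^ (s - 1)) :=
        ENNReal.ofReal_pos.mpr (mul_pos hfc (Real.rpow_pos_of_pos hcJ.1 _))
      calc (0 : ℝ≥0∞) < ENNReal.ofReal (f c * F c ^ (s - 1)) := hterm
        _ ≤ S := by
            rw [hSalt]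
            exact le_iSup₂ (f := fun x (_ : x ∈ J) => ENNReal.ofReal (f x * F x ^ (s - 1))) c hcJ
  exact ⟨part1, part2, part3⟩

lemma tendsto_neg_rightEnd {J : Set ℝ} (hne : J.Nonempty) :
    Tendsto Neg.neg (rightEndFilter J) (leftEndFilter (-J)) := by
  unfold rightEndFilter leftEndFilter
  by_cases hb : BddAbove J
  · rw [if_pos hb, if_pos (bddBelow_neg.mpr hb)]
    have hsInf : sInf (-J) = -sSup J :=
      ((isLUB_csSup hne hb).neg).csInf_eq hne.neg
    rw [hsInf]
    exact Filter.Tendsto.inf (Continuous.tendsto continuous_neg _)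
      (tendsto_principal_principal.2 fun x hx => Set.neg_mem_neg.mpr hx)
  · rw [if_neg hb, if_neg (fun h => hb (by simpa using bddBelow_neg.mp h))]
    exact Filter.Tendsto.inf tendsto_neg_atTop_atBot
      (tendsto_principal_principal.2 fun x hx => Set.neg_mem_neg.mpr hx)

/-- Remark 2: for a non-degenerate bi-`s*`-concave `F` with `s* < 0` and
derivative `f` on `J(F)`, `T₁(F) = sup_{J(F)} f / F ^ (1 - s*)` is the limit of
`f / F ^ (1 - s*)` as `x` decreases to `inf J(F)`, it is strictly positive, and it is infinite
whenever `inf J(F) > -∞`; analogously for `T₂(F) = sup_{J(F)} f / (1 - F) ^ (1 - s*)` at the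
right endpoint. -/
theorem remark2_T1_T2
    (s : ℝ) (hs : s < 0)
    (F : ℝ → ℝ) (hF : IsDistFun F) (hnd : NonDeg F)
    (hbi : IsBiSStarConcave s F)
    (f : ℝ → ℝ) (hderiv : ∀ x ∈ JSet F, HasDerivAt F (f x) x) :
    (Tendsto (fun x => ENNReal.ofReal (f x / F x ^ (1 - s))) (leftEndFilter (JSet F))
        (nhds (⨆ x ∈ JSet F, ENNReal.ofReal (f x / F x ^ (1 - s)))) ∧
      0 < ⨆ x ∈ JSet F, ENNReal.ofReal (f x / F x ^ (1 - s)) ∧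
      (BddBelow (JSet F) →
        (⨆ x ∈ JSet F, ENNReal.ofReal (f x / F x ^ (1 - s))) = ⊤)) ∧
    (Tendsto (fun x => ENNReal.ofReal (f x / (1 - F x) ^ (1 - s))) (rightEndFilter (JSet F))
        (nhds (⨆ x ∈ JSet F, ENNReal.ofReal (f x / (1 - F x) ^ (1 - s)))) ∧
      0 < ⨆ x ∈ JSet F, ENNReal.ofReal (f x / (1 - F x) ^ (1 - s)) ∧
      (BddAbove (JSet F) →
        (⨆ x ∈ JSet F, ENNReal.ofReal (f x / (1 - F x) ^ (1 - s))) = ⊤)) := by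
  obtain ⟨hmono, hbd, _, hbot, htop⟩ := hF
  have hcont : Continuous F := hbi.1
  have hne : (JSet F).Nonempty := hnd
  constructor
  · exact core_T1 s hs F hmono hcont (fun x => (hbd x).1) hbot hne (hbi.2.1 hs).1 f hderiv
  · -- the reflected distribution function
    set G : ℝ → ℝ := fun x => 1 - F (-x) with hGdef
    set g : ℝ → ℝ := fun x => f (-x) with hgdef
    have hmonoG : Monotone G := by
      intro x y hxy
      have := hmono (neg_le_neg hxy)
      simp only [hGdef]
      linarith
    have hcontG : Continuous G := continuous_const.sub (hcont.comp continuous_neg)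
    have h0G : ∀ x, 0 ≤ G x := fun x => by
      have := (hbd (-x)).2; simp only [hGdef]; linarith
    have hbotG : Tendsto G atBot (nhds 0) := by
      have h1 : Tendsto (fun x => F (-x)) atBot (nhds 1) :=
        htop.comp tendsto_neg_atBot_atTop
      simpa using (tendsto_const_nhds (x := (1 : ℝ)) (f := atBot)).sub h1
    have hJG : JSet G = -(JSet F) := by
      ext x
      simp only [JSet, Set.mem_neg, Set.mem_setOf_eq, hGdef]
      constructor
      · rintro ⟨h1, h2⟩; exact ⟨by linarith, by linarith⟩
      · rintro ⟨h1, h2⟩; exact ⟨by linarith, by linarith⟩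
    have hmemG : ∀ {x : ℝ}, x ∈ JSet G ↔ -x ∈ JSet F := by
      intro x; rw [hJG]; exact Set.mem_neg
    have hneG : (JSet G).Nonempty := by
      obtain ⟨x, hx⟩ := hne
      exact ⟨-x, hmemG.mpr (by simpa using hx)⟩
    have hbase := (hbi.2.1 hs).2
    have hconvG : ConvexOn ℝ (JSet G) (fun x => G x ^ s) := by
      constructor
      · rw [hJG]; exact hbase.1.neg
      · intro x hx y hy a b ha hb hab
        have h := hbase.2 (hmemG.mp hx) (hmemG.mp hy) ha hb hab
        have harg : -(a • x + b • y) = a • (-x) + b • (-y) := by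
          simp only [smul_eq_mul]; ring
        simpa only [hGdef, harg] using h
    have hderivG : ∀ x ∈ JSet G, HasDerivAt G (g x) x := by
      intro x hx
      have h1 : HasDerivAt F (f (-x)) (-x) := hderiv (-x) (hmemG.mp hx)
      have h2 : HasDerivAt (fun y : ℝ => F (-y)) (f (-x) * (-1)) x :=
        h1.comp x (hasDerivAt_neg x)
      have h3 := h2.const_sub 1
      simpa only [hGdef, hgdef, mul_neg_one, neg_neg] using h3
    have hcore := core_T1 s hs G hmonoG hcontG h0G hbotG hneG hconvG g hderivG
    -- transport the supremum
    have hsup : (⨆ x ∈ JSet G, ENNReal.ofReal (g x / G x ^ (1 - s))) =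
        ⨆ x ∈ JSet F, ENNReal.ofReal (f x / (1 - F x) ^ (1 - s)) := by
      apply le_antisymm
      · refine iSup₂_le fun x hx => ?_
        exact le_iSup₂_of_le (-x) (hmemG.mp hx) (le_refl _)
      · refine iSup₂_le fun y hy => ?_
        refine le_iSup₂_of_le (-y) (hmemG.mpr (by simpa using hy)) (le_of_eq ?_)
        simp [hGdef, hgdef]
    -- transport boundedness
    have hbddG : BddAbove (JSet F) → BddBelow (JSet G) := by
      intro h; rw [hJG]; exact bddBelow_neg.mpr h
    refine ⟨?_, ?_, ?_⟩
    · have hneg := tendsto_neg_rightEnd hne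
      rw [← hJG] at hneg
      have := hcore.1.comp hneg
      rw [hsup] at this
      refine this.congr fun y => ?_
      simp only [Function.comp, hGdef, hgdef, neg_neg]
    · rw [← hsup]; exact hcore.2.1
    · intro hba
      rw [← hsup]; exact hcore.2.2 (hbddG hba)
end

section
/- (Corollary 4, connection with the Csörgő–Révész constant.) Let s* ≤ 1 and let F be a non-degenerate bi-s*-concave distribution function, with derivative f = F′ on J(F); f is positive on J(F) and is differentiable at Lebesgue-almost every point of J(F) with derivative f′. Define, with essential suprema taken with respect to Lebesgue measure on J(F): γ̃(F) = ess sup_{x ∈ J(F)} F(x)(1−F(x)) |f′(x)| / f(x)², γ(F) = ess sup_{x ∈ J(F)} min{F(x), 1−F(x)} |f′(x)| / f(x)², and γ̄(F) = max{ ess sup_{x ∈ J(F)} F(x) f′(x) / f(x)², ess sup_{x ∈ J(F)} −(1−F(x)) f′(x) / f(x)² }. Then (1/2) γ(F) ≤ γ̃(F) ≤ γ(F) ≤ γ̄(F) ≤ 1 − s*. -/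
open Set MeasureTheory Filter
open scoped NNReal ENNReal

/-- The Csörgő–Révész constant `γ̃(F)`, as an essential supremum (w.r.t. Lebesgue measure on
`J(F)`) in the extended reals. -/
noncomputable def gammaTilde (F f f' : ℝ → ℝ) : EReal :=
  essSup (fun x => ((F x * (1 - F x) * |f' x| / f x ^ 2 : ℝ) : EReal))
    (volume.restrict (JSet F))

/-- The variant `γ(F)` with `min{F, 1-F}` in place of `F(1-F)`. -/
noncomputable def gammaMin (F f f' : ℝ → ℝ) : EReal :=
  essSup (fun x => ((min (F x) (1 - F x) * |f' x| / f x ^ 2 : ℝ) : EReal))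
    (volume.restrict (JSet F))

/-- The variant `γ̄(F) = max{ess sup F f'/f², ess sup −(1−F) f'/f²}`. -/
noncomputable def gammaBar (F f f' : ℝ → ℝ) : EReal :=
  max
    (essSup (fun x => ((F x * f' x / f x ^ 2 : ℝ) : EReal)) (volume.restrict (JSet F)))
    (essSup (fun x => ((-((1 - F x) * f' x) / f x ^ 2 : ℝ) : EReal))
      (volume.restrict (JSet F)))

open Topology in
lemma slope_deriv_nonpos {S : Set ℝ} (hS : IsOpen S) {h : ℝ → ℝ} {x d : ℝ}
    (hx : x ∈ S) (hanti : AntitoneOn h S) (hd : HasDerivAt h d x) : d ≤ 0 := by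
  have htend : Tendsto (slope h x) (𝓝[>] x) (𝓝 d) :=
    (hasDerivAt_iff_tendsto_slope.1 hd).mono_left
      (nhdsWithin_mono x fun y hy => hy.ne')
  refine le_of_tendsto htend ?_
  filter_upwards [self_mem_nhdsWithin,
    mem_nhdsWithin_of_mem_nhds (hS.mem_nhds hx)] with y hy hyS
  rw [slope_def_field]
  apply div_nonpos_of_nonpos_of_nonneg
  · exact sub_nonpos.2 (hanti hx hyS (le_of_lt hy))
  · exact sub_nonneg.2 (le_of_lt hy)

lemma second_deriv_bound (s : ℝ) {S : Set ℝ} (hS : IsOpen S) {φ d : ℝ → ℝ}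
    (hφpos : ∀ y ∈ S, 0 < φ y)
    (hφd : ∀ y ∈ S, HasDerivAt φ (d y) y)
    (hneg : s < 0 → ConvexOn ℝ S (fun y => φ y ^ s))
    (hzero : s = 0 → ConcaveOn ℝ S (fun y => Real.log (φ y)))
    (hposc : 0 < s → ConcaveOn ℝ S (fun y => φ y ^ s))
    {x : ℝ} (hx : x ∈ S) {d' : ℝ} (hd' : HasDerivAt d d' x) :
    φ x * d' ≤ (1 - s) * d x ^ 2 := by
  have hu : 0 < φ x := hφpos x hx
  rcases lt_trichotomy s 0 with hlt | rfl | hgt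
  · set h : ℝ → ℝ := fun y => d y * s * φ y ^ (s - 1) with hh
    have hgd : ∀ y ∈ S, HasDerivAt (fun z => φ z ^ s) (h y) y := fun y hy =>
      (hφd y hy).rpow_const (Or.inl (hφpos y hy).ne')
    have hmono : MonotoneOn h S := by
      have h1 := (hneg hlt).monotoneOn_deriv (fun y hy => (hgd y hy).differentiableAt)
      intro a ha b hb hab
      have h2 := h1 ha hb hab
      rwa [(hgd a ha).deriv, (hgd b hb).deriv] at h2
    have hD : HasDerivAt h (d' * s * φ x ^ (s - 1)
        + d x * s * (d x * (s - 1) * φ x ^ (s - 1 - 1))) x := by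
      have h3 : HasDerivAt (fun y => d y * s) (d' * s) x := hd'.mul_const s
      have h4 : HasDerivAt (fun y => φ y ^ (s - 1)) (d x * (s - 1) * φ x ^ (s - 1 - 1)) x :=
        (hφd x hx).rpow_const (Or.inl hu.ne')
      exact h3.mul h4
    have h5 : 0 ≤ d' * s * φ x ^ (s - 1) + d x * s * (d x * (s - 1) * φ x ^ (s - 1 - 1)) := by
      have := slope_deriv_nonpos hS hx
        (fun a ha b hb hab => neg_le_neg (hmono ha hb hab)) hD.neg
      linarith
    have hB : 0 < φ x ^ (s - 1 - 1) := Real.rpow_pos_of_pos hu _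
    have hA : φ x ^ (s - 1) = φ x ^ (s - 1 - 1) * φ x := by
      rw [← Real.rpow_add_one hu.ne' (s - 1 - 1)]; ring_nf
    rw [hA] at h5
    nlinarith [mul_pos (neg_pos.mpr hlt) hB, h5]
  · have hgd : ∀ y ∈ S, HasDerivAt (fun z => Real.log (φ z)) (d y / φ y) y := fun y hy =>
      (hφd y hy).log (hφpos y hy).ne'
    have hanti : AntitoneOn (fun y => d y / φ y) S := by
      have h1 := (hzero rfl).antitoneOn_deriv (fun y hy => (hgd y hy).differentiableAt)
      intro a ha b hb hab
      have h2 := h1 ha hb hab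
      rwa [(hgd a ha).deriv, (hgd b hb).deriv] at h2
    have hD : HasDerivAt (fun y => d y / φ y) ((d' * φ x - d x * d x) / φ x ^ 2) x :=
      hd'.div (hφd x hx) hu.ne'
    have h5 := slope_deriv_nonpos hS hx hanti hD
    have h6 : d' * φ x - d x * d x ≤ 0 := by
      by_contra hcon
      push_neg at hcon
      have := div_pos hcon (pow_pos hu 2)
      linarith
    nlinarith
  · set h : ℝ → ℝ := fun y => d y * s * φ y ^ (s - 1) with hh
    have hgd : ∀ y ∈ S, HasDerivAt (fun z => φ z ^ s) (h y) y := fun y hy =>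
      (hφd y hy).rpow_const (Or.inl (hφpos y hy).ne')
    have hanti : AntitoneOn h S := by
      have h1 := (hposc hgt).antitoneOn_deriv (fun y hy => (hgd y hy).differentiableAt)
      intro a ha b hb hab
      have h2 := h1 ha hb hab
      rwa [(hgd a ha).deriv, (hgd b hb).deriv] at h2
    have hD : HasDerivAt h (d' * s * φ x ^ (s - 1)
        + d x * s * (d x * (s - 1) * φ x ^ (s - 1 - 1))) x := by
      have h3 : HasDerivAt (fun y => d y * s) (d' * s) x := hd'.mul_const s
      have h4 : HasDerivAt (fun y => φ y ^ (s - 1)) (d x * (s - 1) * φ x ^ (s - 1 - 1)) x :=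
        (hφd x hx).rpow_const (Or.inl hu.ne')
      exact h3.mul h4
    have h5 : d' * s * φ x ^ (s - 1) + d x * s * (d x * (s - 1) * φ x ^ (s - 1 - 1)) ≤ 0 :=
      slope_deriv_nonpos hS hx hanti hD
    have hB : 0 < φ x ^ (s - 1 - 1) := Real.rpow_pos_of_pos hu _
    have hA : φ x ^ (s - 1) = φ x ^ (s - 1 - 1) * φ x := by
      rw [← Real.rpow_add_one hu.ne' (s - 1 - 1)]; ring_nf
    rw [hA] at h5
    nlinarith [mul_pos hgt hB, h5]

/-- Corollary 4, connection with the Csörgő–Révész constant: for a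
non-degenerate bi-`s*`-concave distribution function `F` (`s* ≤ 1`) with derivative `f > 0` on
`J(F)` and a.e. derivative `f'` of `f`, one has
`(1/2) γ(F) ≤ γ̃(F) ≤ γ(F) ≤ γ̄(F) ≤ 1 - s*`. -/
theorem csorgo_revesz_constant_bounds
    (s : ℝ) (hs : s ≤ 1)
    (F : ℝ → ℝ) (hF : IsDistFun F) (hnd : NonDeg F)
    (hbi : IsBiSStarConcave s F)
    (f f' : ℝ → ℝ)
    (hderiv : ∀ x ∈ JSet F, HasDerivAt F (f x) x)
    (hpos : ∀ x ∈ JSet F, 0 < f x)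
    (hderiv2 : ∀ᵐ x ∂(volume.restrict (JSet F)), HasDerivAt f (f' x) x) :
    (1 / 2 : EReal) * gammaMin F f f' ≤ gammaTilde F f f' ∧
    gammaTilde F f f' ≤ gammaMin F f f' ∧
    gammaMin F f f' ≤ gammaBar F f f' ∧
    gammaBar F f f' ≤ ((1 - s : ℝ) : EReal) := by
  obtain ⟨hFcont, hbineg, hbizero, hbipos⟩ := hbi
  have hSopen : IsOpen (JSet F) := by
    have hJ : JSet F = F ⁻¹' (Ioo 0 1) := rfl
    rw [hJ]; exact isOpen_Ioo.preimage hFcont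
  have hmemae : ∀ᵐ x ∂(volume.restrict (JSet F)), x ∈ JSet F :=
    ae_restrict_mem hSopen.measurableSet
  have hhalf : (1/2 : EReal) = ((1/2 : ℝ) : EReal) := by
    rw [one_div, show (2:EReal) = ((2:ℝ):EReal) by norm_cast, ← EReal.coe_inv]
    norm_num
  -- key a.e. second-derivative bounds
  have hkey : ∀ᵐ x ∂(volume.restrict (JSet F)),
      x ∈ JSet F ∧ F x * f' x / f x ^ 2 ≤ 1 - s ∧
        -((1 - F x) * f' x) / f x ^ 2 ≤ 1 - s := by
    filter_upwards [hmemae, hderiv2] with x hxJ hdx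
    have hf2 : (0:ℝ) < f x ^ 2 := pow_pos (hpos x hxJ) 2
    have hkey1 : F x * f' x ≤ (1 - s) * f x ^ 2 :=
      second_deriv_bound s hSopen (fun y hy => hy.1) hderiv
        (fun h => (hbineg h).1) (fun h => (hbizero h).1) (fun h => (hbipos h).1) hxJ hdx
    have h1F : ∀ y ∈ JSet F, HasDerivAt (fun z => 1 - F z) (-f y) y := by
      intro y hy
      exact (hderiv y hy).const_sub 1
    have hkey2 : (1 - F x) * (-f' x) ≤ (1 - s) * (-f x) ^ 2 :=
      second_deriv_bound s hSopen (φ := fun z => 1 - F z) (d := fun y => -f y)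
        (fun y hy => by show (0:ℝ) < 1 - F y; linarith [hy.2]) h1F
        (fun h => (hbineg h).2) (fun h => (hbizero h).2) (fun h => (hbipos h).2) hxJ hdx.neg
    refine ⟨hxJ, ?_, ?_⟩
    · rw [div_le_iff₀ hf2]; linarith
    · rw [div_le_iff₀ hf2]; nlinarith [hkey2]
  constructor
  · -- (1/2) γ ≤ γ̃
    have hTle := ae_le_essSup
      (f := fun x => ((F x * (1 - F x) * |f' x| / f x ^ 2 : ℝ) : EReal))
      (μ := volume.restrict (JSet F))
    have hG2T : gammaMin F f f' ≤ ((2:ℝ):EReal) * gammaTilde F f f' := by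
      unfold gammaMin
      refine essSup_le_of_ae_le _ ?_
      filter_upwards [hmemae, hTle] with x hxJ hTx
      have hf2 : (0:ℝ) < f x ^ 2 := pow_pos (hpos x hxJ) 2
      calc ((min (F x) (1 - F x) * |f' x| / f x ^ 2 : ℝ) : EReal)
          ≤ ((2 * (F x * (1 - F x) * |f' x| / f x ^ 2) : ℝ) : EReal) := by
            refine EReal.coe_le_coe_iff.2 ?_
            rw [← mul_div_assoc, div_le_div_iff₀ hf2 hf2]
            have hmin : min (F x) (1 - F x) ≤ 2 * (F x * (1 - F x)) := by
              rcases le_total (F x) (1 - F x) with h | h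
              · rw [min_eq_left h]; nlinarith [hxJ.1, hxJ.2]
              · rw [min_eq_right h]; nlinarith [hxJ.1, hxJ.2]
            have := mul_le_mul_of_nonneg_right
              (mul_le_mul_of_nonneg_right hmin (abs_nonneg (f' x))) hf2.le
            nlinarith [this]
        _ = ((2:ℝ):EReal) * ((F x * (1 - F x) * |f' x| / f x ^ 2 : ℝ) : EReal) := by
            rw [EReal.coe_mul]
        _ ≤ ((2:ℝ):EReal) * gammaTilde F f f' :=
            mul_le_mul_of_nonneg_left hTx (by norm_num)
    calc (1/2 : EReal) * gammaMin F f f'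
        ≤ (1/2 : EReal) * (((2:ℝ):EReal) * gammaTilde F f f') :=
          mul_le_mul_of_nonneg_left hG2T (by rw [hhalf]; norm_num)
      _ = gammaTilde F f f' := by
          rw [hhalf, ← mul_assoc, ← EReal.coe_mul]; norm_num
  refine ⟨?_, ?_, ?_⟩
  · -- γ̃ ≤ γ
    unfold gammaTilde gammaMin
    refine essSup_mono_ae ?_
    filter_upwards [hmemae] with x hxJ
    refine EReal.coe_le_coe_iff.2 ?_
    have hf2 : (0:ℝ) < f x ^ 2 := pow_pos (hpos x hxJ) 2
    rw [div_le_div_iff₀ hf2 hf2]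
    have hmin : F x * (1 - F x) ≤ min (F x) (1 - F x) := by
      rcases le_total (F x) (1 - F x) with h | h
      · rw [min_eq_left h]; nlinarith [hxJ.1, hxJ.2]
      · rw [min_eq_right h]; nlinarith [hxJ.1, hxJ.2]
    have := mul_le_mul_of_nonneg_right
      (mul_le_mul_of_nonneg_right hmin (abs_nonneg (f' x))) hf2.le
    linarith
  · -- γ ≤ γ̄
    have hle1 := ae_le_essSup
      (f := fun x => ((F x * f' x / f x ^ 2 : ℝ) : EReal))
      (μ := volume.restrict (JSet F))
    have hle2 := ae_le_essSup
      (f := fun x => ((-((1 - F x) * f' x) / f x ^ 2 : ℝ) : EReal))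
      (μ := volume.restrict (JSet F))
    unfold gammaMin gammaBar
    refine essSup_le_of_ae_le _ ?_
    filter_upwards [hmemae, hle1, hle2] with x hxJ h1 h2
    have hf2 : (0:ℝ) < f x ^ 2 := pow_pos (hpos x hxJ) 2
    rcases le_or_gt 0 (f' x) with hf' | hf'
    · refine le_trans ?_ (le_trans h1 (le_max_left _ _))
      refine EReal.coe_le_coe_iff.2 ?_
      rw [abs_of_nonneg hf', div_le_div_iff₀ hf2 hf2]
      have := mul_le_mul_of_nonneg_right
        (mul_le_mul_of_nonneg_right (min_le_left (F x) (1 - F x)) hf') hf2.le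
      linarith
    · refine le_trans ?_ (le_trans h2 (le_max_right _ _))
      refine EReal.coe_le_coe_iff.2 ?_
      rw [abs_of_neg hf', div_le_div_iff₀ hf2 hf2]
      have := mul_le_mul_of_nonneg_right
        (mul_le_mul_of_nonneg_right (min_le_right (F x) (1 - F x))
          (neg_nonneg.2 hf'.le)) hf2.le
      nlinarith [this]
  · -- γ̄ ≤ 1 - s
    unfold gammaBar
    refine max_le (essSup_le_of_ae_le _ ?_) (essSup_le_of_ae_le _ ?_)
    · filter_upwards [hkey] with x hx
      exact EReal.coe_le_coe_iff.2 hx.2.1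
    · filter_upwards [hkey] with x hx
      exact EReal.coe_le_coe_iff.2 hx.2.2
end

section
/- (Corollary 5, bounds for F ∈ P_{s*} with s* ≠ 0.) Let s* ≤ 1 with s* ≠ 0 and let F be a non-degenerate bi-s*-concave distribution function. Define F_L(x) = (F(x)^{s*} − (1 − s*))/s* and F_U(x) = (1 − (1 − F(x))^{s*})/s*. Then F_L(x) ≤ F(x) ≤ F_U(x) for all x ∈ J(F); moreover F_U is a convex function on J(F) and F_L is a concave function on J(F). -/
open Set MeasureTheory Filter
open scoped NNReal ENNReal

/-- Bernoulli's inequality for negative exponents: for `u > 0` and `p < 0`,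
`1 + p * (u - 1) ≤ u ^ p`. -/
lemma bern_neg {u p : ℝ} (hu : 0 < u) (hp : p < 0) : 1 + p * (u - 1) ≤ u ^ p := by
  have hlog : Real.log u ≤ u - 1 := Real.log_le_sub_one_of_pos hu
  have h1 : p * (u - 1) ≤ p * Real.log u := mul_le_mul_of_nonpos_left hlog hp.le
  have h2 : 1 + p * (u - 1) ≤ Real.exp (p * (u - 1)) := by
    linarith [Real.add_one_le_exp (p * (u - 1))]
  calc 1 + p * (u - 1) ≤ Real.exp (p * (u - 1)) := h2
    _ ≤ Real.exp (p * Real.log u) := Real.exp_le_exp.mpr h1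
    _ = u ^ p := by rw [Real.rpow_def_of_pos hu p, mul_comm]

/-- Corollary 5: for `s* ≤ 1`, `s* ≠ 0`, and a non-degenerate bi-`s*`-concave
distribution function `F`, with `F_L = (F^{s*} - (1 - s*))/s*` and
`F_U = (1 - (1 - F)^{s*})/s*`, one has `F_L ≤ F ≤ F_U` on `J(F)`; moreover `F_U` is convex on
`J(F)` and `F_L` is concave on `J(F)`. -/
theorem bounds_for_biSStarConcave
    (s : ℝ) (hs : s ≤ 1) (hs0 : s ≠ 0)
    (F : ℝ → ℝ) (hF : IsDistFun F) (hnd : NonDeg F)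
    (hbi : IsBiSStarConcave s F) :
    (∀ x ∈ JSet F,
      (F x ^ s - (1 - s)) / s ≤ F x ∧ F x ≤ (1 - (1 - F x) ^ s) / s) ∧
    ConvexOn ℝ (JSet F) (fun x => (1 - (1 - F x) ^ s) / s) ∧
    ConcaveOn ℝ (JSet F) (fun x => (F x ^ s - (1 - s)) / s) := by

  obtain ⟨hcont, hnegc, -, hposc⟩ := hbi
  rcases lt_or_gt_of_ne hs0 with hneg | hpos
  · obtain ⟨hc1, hc2⟩ := hnegc hneg
    have hcinv : (0:ℝ) ≤ (-s)⁻¹ := by rw [inv_nonneg]; linarith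
    refine ⟨?_, ?_, ?_⟩
    · rintro x ⟨h0, h1⟩
      have b1 := bern_neg h0 hneg
      have b2 := bern_neg (by linarith : (0:ℝ) < 1 - F x) hneg
      constructor
      · rw [div_le_iff_of_neg hneg]; nlinarith
      · rw [le_div_iff_of_neg hneg]; nlinarith
    · have h := (hc2.smul hcinv).add_const (-(-s)⁻¹)
      have heq : (fun x => (1 - (1 - F x) ^ s) / s)
          = fun x => (-s)⁻¹ • (1 - F x) ^ s + (-(-s)⁻¹) := by
        funext x
        have : s ≠ 0 := hneg.ne
        simp only [smul_eq_mul]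
        field_simp [this]
        ring
      rw [heq]; exact h
    · have h := ((hc1.smul hcinv).neg).add_const ((1 - s) * (-s)⁻¹)
      have heq : (fun x => (F x ^ s - (1 - s)) / s)
          = fun x => -((-s)⁻¹ • F x ^ s) + (1 - s) * (-s)⁻¹ := by
        funext x
        have : s ≠ 0 := hneg.ne
        simp only [smul_eq_mul]
        field_simp [this]
        ring
      rw [heq]; exact h
  · obtain ⟨hc1, hc2⟩ := hposc hpos
    have hcinv : (0:ℝ) ≤ s⁻¹ := by positivity
    refine ⟨?_, ?_, ?_⟩
    · rintro x ⟨h0, h1⟩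
      have b1 : (1 + (F x - 1)) ^ s ≤ 1 + s * (F x - 1) :=
        rpow_one_add_le_one_add_mul_self (by linarith) hpos.le hs
      have b2 : (1 + (-F x)) ^ s ≤ 1 + s * (-F x) :=
        rpow_one_add_le_one_add_mul_self (by linarith) hpos.le hs
      rw [show 1 + (F x - 1) = F x by ring] at b1
      rw [show 1 + (-F x) = 1 - F x by ring] at b2
      constructor
      · rw [div_le_iff₀ hpos]; nlinarith
      · rw [le_div_iff₀ hpos]; nlinarith
    · have h := ((hc2.neg).smul hcinv).add_const s⁻¹
      have heq : (fun x => (1 - (1 - F x) ^ s) / s)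
          = fun x => s⁻¹ • (-(1 - F x) ^ s) + s⁻¹ := by
        funext x
        have : s ≠ 0 := hpos.ne'
        simp only [smul_eq_mul]
        field_simp [this]
        ring
      rw [heq]; exact h
    · have h := (hc1.smul hcinv).add_const (-(1 - s) / s)
      have heq : (fun x => (F x ^ s - (1 - s)) / s)
          = fun x => s⁻¹ • F x ^ s + (-(1 - s) / s) := by
        funext x
        have : s ≠ 0 := hpos.ne'
        simp only [smul_eq_mul]
        field_simp [this]
        ring
      rw [heq]; exact h
end

section
/- (Lemma 6(i), core.) Let s* ≤ 1 with s* ≠ 0, let a < b be real numbers and 0 < u < v < 1, and set γ₁ = (v^{s*} − u^{s*})/(s*(b − a)) and γ₂ = ((1−u)^{s*} − (1−v)^{s*})/(s*(b − a)). If G is a non-degenerate bi-s*-concave distribution function with G(a) ≥ u and G(b) ≤ v, then G is Lipschitz continuous on ℝ with Lipschitz constant max{γ₁, γ₂}; equivalently, its derivative g = G′ satisfies g(x) ≤ max{γ₁, γ₂} for every x ∈ J(G). -/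
open Set MeasureTheory Filter
open scoped NNReal ENNReal

section AuxRpow

variable {s : ℝ}

private lemma aux_deriv (hs0 : s ≠ 0) {t : ℝ} (ht : t ≠ 0) :
    HasDerivAt (fun x : ℝ => x ^ s / s) (t ^ (s - 1)) t := by
  have h := (Real.hasDerivAt_rpow_const (p := s) (Or.inl ht)).div_const s
  simpa [mul_comm, mul_div_assoc, mul_div_cancel_left₀ _ hs0] using h

private lemma aux_mvt (hs : s ≤ 1) (hs0 : s ≠ 0) {t₁ t₂ : ℝ} (h1 : 0 < t₁) (h12 : t₁ < t₂) :
    t₂ ^ (s - 1) * (t₂ - t₁) ≤ t₂ ^ s / s - t₁ ^ s / s ∧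
      t₂ ^ s / s - t₁ ^ s / s ≤ t₁ ^ (s - 1) * (t₂ - t₁) := by
  obtain ⟨ξ, hξ, hval⟩ := exists_hasDerivAt_eq_slope (fun x : ℝ => x ^ s / s)
      (fun x => x ^ (s - 1)) h12
      (fun t ht => (aux_deriv hs0 (ne_of_gt (lt_of_lt_of_le h1 ht.1))).continuousAt.continuousWithinAt)
      (fun t ht => aux_deriv hs0 (ne_of_gt (h1.trans ht.1)))
  have h0 : (0:ℝ) < t₂ - t₁ := by linarith
  have e : t₂ ^ s / s - t₁ ^ s / s = ξ ^ (s - 1) * (t₂ - t₁) := by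
    rw [hval]; field_simp
  have l1 : t₂ ^ (s - 1) ≤ ξ ^ (s - 1) :=
    Real.rpow_le_rpow_of_nonpos (h1.trans hξ.1) hξ.2.le (by linarith)
  have l2 : ξ ^ (s - 1) ≤ t₁ ^ (s - 1) :=
    Real.rpow_le_rpow_of_nonpos h1 hξ.1.le (by linarith)
  constructor
  · rw [e]; exact mul_le_mul_of_nonneg_right l1 h0.le
  · rw [e]; exact mul_le_mul_of_nonneg_right l2 h0.le

/-- monotonicity of `t ↦ t^s/s`. -/
private lemma aux_H_mono (hs : s ≤ 1) (hs0 : s ≠ 0) {t₁ t₂ : ℝ} (h1 : 0 < t₁) (h12 : t₁ ≤ t₂) :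
    t₁ ^ s / s ≤ t₂ ^ s / s := by
  rcases eq_or_lt_of_le h12 with rfl | h
  · exact le_refl _
  · have h2 : (0:ℝ) < t₂ ^ (s-1) := Real.rpow_pos_of_pos (h1.trans h) _
    nlinarith [(aux_mvt hs hs0 h1 h).1, mul_pos h2 (by linarith : (0:ℝ) < t₂ - t₁)]

/-- weak tangent bound: `t₂ - t₁ ≤ H t₂ - H t₁` for `t₂ ≤ 1`. -/
private lemma aux_H_lb (hs : s ≤ 1) (hs0 : s ≠ 0) {t₁ t₂ : ℝ} (h1 : 0 < t₁) (h12 : t₁ ≤ t₂)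
    (h2 : t₂ ≤ 1) : t₂ - t₁ ≤ t₂ ^ s / s - t₁ ^ s / s := by
  rcases eq_or_lt_of_le h12 with rfl | h
  · simp
  · have hone : 1 ≤ t₂ ^ (s - 1) :=
      Real.one_le_rpow_of_pos_of_le_one_of_nonpos (h1.trans h) h2 (by linarith)
    nlinarith [(aux_mvt hs hs0 h1 h).1]

/-- strong tangent bound: `t₂ - t₁ ≤ t₂^(1-s) * (H t₂ - H t₁)`. -/
private lemma aux_K1 (hs : s ≤ 1) (hs0 : s ≠ 0) {t₁ t₂ : ℝ} (h1 : 0 < t₁) (h12 : t₁ ≤ t₂) :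
    t₂ - t₁ ≤ t₂ ^ (1 - s) * (t₂ ^ s / s - t₁ ^ s / s) := by
  rcases eq_or_lt_of_le h12 with rfl | h
  · simp
  have h2 : (0:ℝ) < t₂ := h1.trans h
  have hp : (0:ℝ) < t₂ ^ (1 - s) := Real.rpow_pos_of_pos h2 _
  have key : t₂ ^ (1 - s) * t₂ ^ (s - 1) = 1 := by
    rw [← Real.rpow_add h2]; norm_num
  have h3 := (aux_mvt hs hs0 h1 h).1
  nlinarith [mul_le_mul_of_nonneg_left h3 hp.le]




end AuxRpow

private lemma aux_concaveH {s : ℝ} (hs0 : s ≠ 0) {S : Set ℝ} {F : ℝ → ℝ}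
    (hconv : s < 0 → ConvexOn ℝ S (fun x => F x ^ s))
    (hconc : 0 < s → ConcaveOn ℝ S (fun x => F x ^ s)) :
    ConcaveOn ℝ S (fun x => F x ^ s / s) := by
  rcases lt_or_gt_of_ne hs0 with hneg | hpos
  · have hc : (0:ℝ) ≤ -1/s := le_of_lt (div_pos_of_neg_of_neg (by norm_num) hneg)
    have h := ((hconv hneg).neg).smul (c := -1/s) hc
    have e : (fun x => (-1/s) • (-(fun x => F x ^ s)) x) = (fun x => F x ^ s / s) := by
      funext x; simp only [Pi.neg_apply, smul_eq_mul]; field_simp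
    rw [e] at h; exact h
  · have h := (hconc hpos).smul (c := 1/s) (by positivity)
    have e : (fun x => (1/s) • (fun x => F x ^ s) x) = (fun x => F x ^ s / s) := by
      funext x; simp only [smul_eq_mul]; ring
    rw [e] at h; exact h

private lemma aux_slope_le {S : Set ℝ} {f : ℝ → ℝ} (hf : ConcaveOn ℝ S f) {x y z w : ℝ}
    (hx : x ∈ S) (hy : y ∈ S) (hz : z ∈ S) (hw : w ∈ S)
    (hxy : x < y) (hyz : y ≤ z) (hzw : z < w) :
    (f w - f z) / (w - z) ≤ (f y - f x) / (y - x) := by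
  rcases eq_or_lt_of_le hyz with rfl | h
  · exact hf.slope_anti_adjacent hx hw hxy hzw
  · exact (hf.slope_anti_adjacent hy hw h hzw).trans (hf.slope_anti_adjacent hx hz hxy h)


private lemma aux_eL {s u v w : ℝ} (hs0 : s ≠ 0) (hw0 : 0 < w) (hw1 : w < 1) :
    w ^ (1-s) * (w ^ s / s - u ^ s / s) + (1-w) ^ (1-s) * ((1-w) ^ s / s - (1-v) ^ s / s)
      = (1 - u ^ s * w ^ (1-s) - (1-v) ^ s * (1-w) ^ (1-s)) / s := by
  have hw1' : (0:ℝ) < 1 - w := by linarith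
  have ew : w ^ (1-s) * w ^ s = w := by rw [← Real.rpow_add hw0]; norm_num
  have ew' : (1-w) ^ (1-s) * (1-w) ^ s = 1-w := by rw [← Real.rpow_add hw1']; norm_num
  field_simp
  linear_combination ew + ew'

private lemma aux_S1 {s u v : ℝ} (hs : s ≤ 1) (hs0 : s ≠ 0) (hu : 0 < u) (huv : u < v) (hv : v < 1)
    {w : ℝ} (hw1 : u ≤ w) (hw2 : w ≤ v) :
    w ^ (1-s) * (w ^ s / s - u ^ s / s) + (1-w) ^ (1-s) * ((1-w) ^ s / s - (1-v) ^ s / s)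
      ≤ max ((v ^ s - u ^ s) / s) (((1-u) ^ s - (1-v) ^ s) / s) := by
  have hw0 : 0 < w := lt_of_lt_of_le hu hw1
  have hwlt : w < 1 := lt_of_le_of_lt hw2 hv
  have hv0 : (0:ℝ) < 1 - v := by linarith
  have hu1 : (0:ℝ) < 1 - u := by linarith
  have hv' : 0 < v := hu.trans huv
  set ρ : ℝ → ℝ := fun t => (1 - u ^ s * t ^ (1-s) - (1-v) ^ s * (1-t) ^ (1-s)) / s with hρ
  -- convexity of ρ on Icc u v
  have hsub1 : Icc u v ⊆ Ici (0:ℝ) := fun t ht => le_trans hu.le ht.1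
  have hA : ∀ t : ℝ, (AffineMap.lineMap (1:ℝ) (0:ℝ)) t = 1 - t := by
    intro t; simp [AffineMap.lineMap_apply]; ring
  have hsub2 : Icc u v ⊆ (AffineMap.lineMap (1:ℝ) (0:ℝ)) ⁻¹' (Ici (0:ℝ)) := by
    intro t ht; simp only [mem_preimage, hA, mem_Ici]; linarith [ht.2]
  have hρconv : ConvexOn ℝ (Icc u v) ρ := by
    rcases lt_or_gt_of_ne hs0 with hneg | hpos
    · have hb : ConvexOn ℝ (Ici 0) (fun t : ℝ => t ^ (1-s)) := convexOn_rpow (by linarith)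
      have h1 : ConvexOn ℝ (Icc u v) (fun t : ℝ => u ^ s • t ^ (1-s)) :=
        (hb.subset hsub1 (convex_Icc u v)).smul (Real.rpow_nonneg hu.le s)
      have h2 : ConvexOn ℝ (Icc u v) (fun t : ℝ =>
          (1-v) ^ s • ((fun x : ℝ => x ^ (1-s)) ∘ (AffineMap.lineMap (1:ℝ) (0:ℝ))) t) :=
        ((hb.comp_affineMap _).subset hsub2 (convex_Icc u v)).smul (Real.rpow_nonneg hv0.le s)
      have h3 := ((h1.add h2).smul (c := -1/s)
        (le_of_lt (div_pos_of_neg_of_neg (by norm_num) hneg))).add_const (1/s)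
      refine Eq.subst (motive := fun f => ConvexOn ℝ (Icc u v) f) ?_ h3
      funext t
      simp only [Pi.add_apply, smul_eq_mul, Function.comp_apply, hA, hρ]
      field_simp; ring
    · have hb : ConcaveOn ℝ (Ici 0) (fun t : ℝ => t ^ (1-s)) :=
        Real.concaveOn_rpow (by linarith) (by linarith)
      have h1 : ConcaveOn ℝ (Icc u v) (fun t : ℝ => u ^ s • t ^ (1-s)) :=
        (hb.subset hsub1 (convex_Icc u v)).smul (Real.rpow_nonneg hu.le s)
      have h2 : ConcaveOn ℝ (Icc u v) (fun t : ℝ =>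
          (1-v) ^ s • ((fun x : ℝ => x ^ (1-s)) ∘ (AffineMap.lineMap (1:ℝ) (0:ℝ))) t) :=
        ((hb.comp_affineMap _).subset hsub2 (convex_Icc u v)).smul (Real.rpow_nonneg hv0.le s)
      have h3 := (((h1.add h2).neg).smul (c := 1/s) (by positivity)).add_const (1/s)
      refine Eq.subst (motive := fun f => ConvexOn ℝ (Icc u v) f) ?_ h3
      funext t
      simp only [Pi.neg_apply, Pi.add_apply, smul_eq_mul, Function.comp_apply, hA, hρ]
      field_simp; ring
  have hseg : w ∈ segment ℝ u v := by rw [segment_eq_Icc huv.le]; exact ⟨hw1, hw2⟩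
  have hle := hρconv.le_on_segment (left_mem_Icc.2 huv.le) (right_mem_Icc.2 huv.le) hseg
  -- endpoints
  have hρu : ρ u ≤ ((1-u) ^ s - (1-v) ^ s) / s := by
    have eu : u ^ (1-s) * u ^ s = u := by rw [← Real.rpow_add hu]; norm_num
    have eu' : (1-u) ^ (1-s) * (1-u) ^ s = 1-u := by rw [← Real.rpow_add hu1]; norm_num
    have e : ρ u - ((1-u) ^ s - (1-v) ^ s) / s
        = ((1-u) ^ (1-s) - 1) * (((1-u) ^ s - (1-v) ^ s)/s) := by
      rw [hρ]; field_simp; linear_combination -eu - eu'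
    have f1 : (1-u) ^ (1-s) - 1 ≤ 0 := by
      have := Real.rpow_le_one hu1.le (by linarith) (by linarith : (0:ℝ) ≤ 1-s); linarith
    have f2 : 0 ≤ ((1-u) ^ s - (1-v) ^ s)/s := by
      have := aux_H_mono hs hs0 hv0 (by linarith : 1-v ≤ 1-u); rw [sub_div]; linarith
    nlinarith [mul_nonpos_of_nonpos_of_nonneg f1 f2]
  have hρv : ρ v ≤ (v ^ s - u ^ s) / s := by
    have ev : v ^ (1-s) * v ^ s = v := by rw [← Real.rpow_add hv']; norm_num
    have ev' : (1-v) ^ (1-s) * (1-v) ^ s = 1-v := by rw [← Real.rpow_add hv0]; norm_num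
    have e : ρ v - (v ^ s - u ^ s) / s = (v ^ (1-s) - 1) * ((v ^ s - u ^ s)/s) := by
      rw [hρ]; field_simp; linear_combination -ev - ev'
    have f1 : v ^ (1-s) - 1 ≤ 0 := by
      have := Real.rpow_le_one hv'.le hv.le (by linarith : (0:ℝ) ≤ 1-s); linarith
    have f2 : 0 ≤ (v ^ s - u ^ s)/s := by
      have := aux_H_mono hs hs0 hu huv.le; rw [sub_div]; linarith
    nlinarith [mul_nonpos_of_nonpos_of_nonneg f1 f2]
  rw [aux_eL hs0 hw0 hwlt]
  exact le_trans hle (max_le (hρu.trans (le_max_right _ _)) (hρv.trans (le_max_left _ _)))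


set_option maxHeartbeats 1000000 in
private lemma aux_main {s a b u v : ℝ} {G : ℝ → ℝ}
    (hs : s ≤ 1) (hs0 : s ≠ 0) (hab : a < b) (hu : 0 < u) (huv : u < v) (hv : v < 1)
    (hMono : Monotone G) (hRange : ∀ x, 0 ≤ G x ∧ G x ≤ 1) (hCont : Continuous G)
    (hPhi : ConcaveOn ℝ (JSet G) (fun x => G x ^ s / s))
    (hPsi : ConcaveOn ℝ (JSet G) (fun x => (1 - G x) ^ s / s))
    (hGa : u ≤ G a) (hGb : G b ≤ v) :
    ∀ x y : ℝ, x ≤ y → G y - G x ≤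
      (max ((v ^ s - u ^ s) / s) (((1-u) ^ s - (1-v) ^ s) / s)) / (b - a) * (y - x) := by
  set C := max ((v ^ s - u ^ s) / s) (((1-u) ^ s - (1-v) ^ s) / s) with hC
  have hba : (0:ℝ) < b - a := by linarith
  have hγ1 : 0 < (v ^ s - u ^ s) / s := by
    have h := (aux_mvt hs hs0 hu huv).1
    have hp : 0 < v ^ (s-1) := Real.rpow_pos_of_pos (hu.trans huv) _
    rw [sub_div]
    nlinarith
  have hC0 : 0 < C := lt_of_lt_of_le hγ1 (le_max_left _ _)
  set M := C / (b - a) with hM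
  have hM0 : 0 < M := div_pos hC0 hba
  have hG0 : ∀ z, 0 ≤ G z := fun z => (hRange z).1
  have hG1 : ∀ z, G z ≤ 1 := fun z => (hRange z).2
  have hmemJ : ∀ {z : ℝ}, u ≤ G z → G z ≤ v → z ∈ JSet G := by
    intro z h1 h2; exact ⟨lt_of_lt_of_le hu h1, lt_of_le_of_lt h2 hv⟩
  have haJ : a ∈ JSet G := hmemJ hGa ((hMono hab.le).trans hGb)
  have hbJ : b ∈ JSet G := hmemJ (hGa.trans (hMono hab.le)) hGb
  have hγ2C : (1-u)^s/s - (1-v)^s/s ≤ C := by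
    rw [div_sub_div_same]; exact le_max_right _ _
  have hγ1C : v^s/s - u^s/s ≤ C := by
    rw [div_sub_div_same]; exact le_max_left _ _
  -- Region 1 : q ≤ a
  have E1 : ∀ p q, p ∈ JSet G → q ∈ JSet G → p ≤ q → q ≤ a →
      G q - G p ≤ M * (q - p) := by
    intro p q hpJ hqJ hpq hqa
    rcases eq_or_lt_of_le hpq with rfl | hlt
    · simp
    have hGpq : G p ≤ G q := hMono hpq
    have h1 : G q - G p ≤ (1 - G p) ^ s / s - (1 - G q) ^ s / s := by
      have := aux_H_lb hs hs0 (by linarith [hqJ.2] : (0:ℝ) < 1 - G q)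
        (by linarith : 1 - G q ≤ 1 - G p) (by linarith [hG0 p])
      linarith
    have h2 := aux_slope_le hPsi hpJ hqJ haJ hbJ hlt hqa hab
    rw [div_le_div_iff₀ hba (by linarith : (0:ℝ) < q - p)] at h2
    have h3 : (1 - G a) ^ s / s ≤ (1-u) ^ s / s :=
      aux_H_mono hs hs0 (by linarith [haJ.2] : (0:ℝ) < 1 - G a) (by linarith)
    have h4 : (1-v) ^ s / s ≤ (1 - G b) ^ s / s :=
      aux_H_mono hs hs0 (by linarith : (0:ℝ) < 1 - v) (by linarith)
    rw [hM, div_mul_eq_mul_div, le_div_iff₀ hba]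
    nlinarith [mul_le_mul_of_nonneg_right h1 hba.le,
      mul_le_mul_of_nonneg_right (sub_le_sub h3 h4) (by linarith : (0:ℝ) ≤ q - p),
      mul_le_mul_of_nonneg_right hγ2C (by linarith : (0:ℝ) ≤ q - p)]
  -- Region 2 : b ≤ p
  have E2 : ∀ p q, p ∈ JSet G → q ∈ JSet G → p ≤ q → b ≤ p →
      G q - G p ≤ M * (q - p) := by
    intro p q hpJ hqJ hpq hbp
    rcases eq_or_lt_of_le hpq with rfl | hlt
    · simp
    have hGpq : G p ≤ G q := hMono hpq
    have h1 : G q - G p ≤ G q ^ s / s - G p ^ s / s := by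
      have := aux_H_lb hs hs0 hpJ.1 hGpq (hG1 q)
      linarith
    have h2 := aux_slope_le hPhi haJ hbJ hpJ hqJ hab hbp hlt
    rw [div_le_div_iff₀ (by linarith : (0:ℝ) < q - p) hba] at h2
    have h3 : u ^ s / s ≤ G a ^ s / s := aux_H_mono hs hs0 hu hGa
    have h4 : G b ^ s / s ≤ v ^ s / s := aux_H_mono hs hs0 hbJ.1 hGb
    rw [hM, div_mul_eq_mul_div, le_div_iff₀ hba]
    nlinarith [mul_le_mul_of_nonneg_right h1 hba.le,
      mul_le_mul_of_nonneg_right (sub_le_sub h4 h3) (by linarith : (0:ℝ) ≤ q - p),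
      mul_le_mul_of_nonneg_right hγ1C (by linarith : (0:ℝ) ≤ q - p)]
  -- Region 3 : middle
  have E3 : ∀ p q, a ≤ p → p ≤ q → q ≤ b → G q - G p ≤ M * (q - p) := by
    intro p q hap hpq hqb
    have hMC : M * (b - a) = C := by rw [hM]; field_simp
    have main : ∀ ε : ℝ, 0 < ε → G q - G p ≤ (M + ε) * (q - p) := by
      intro ε hε
      set S : Set ℝ := Icc p q ∩ {t | G t - G p ≤ (M + ε) * (t - p)} with hS
      have hclosed : IsClosed S := by
        apply IsClosed.inter isClosed_Icc
        exact isClosed_le (hCont.sub continuous_const)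
          (continuous_const.mul (continuous_id.sub continuous_const))
      have hpS : p ∈ S := by
        refine ⟨⟨le_refl p, hpq⟩, ?_⟩
        simp only [mem_setOf_eq, sub_self, mul_zero]
        exact le_refl 0
      have hbdd : BddAbove S := ⟨q, fun t ht => ht.1.2⟩
      set T := sSup S with hT
      have hTS : T ∈ S := hclosed.csSup_mem ⟨p, hpS⟩ hbdd
      obtain ⟨⟨hpT, hTq⟩, hTbd⟩ := hTS
      rcases eq_or_lt_of_le hTq with heq | hTq'
      · rw [heq] at hTbd; exact hTbd
      exfalso
      -- local step at z := T
      have hza : a ≤ T := hap.trans hpT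
      have hzb : T < b := lt_of_lt_of_le hTq' hqb
      have hwu : u ≤ G T := hGa.trans (hMono hza)
      have hwv : G T ≤ v := (hMono hzb.le).trans hGb
      have hGz0 : 0 < G T := lt_of_lt_of_le hu hwu
      have hGz1 : G T < 1 := lt_of_le_of_lt hwv hv
      have hzJ : T ∈ JSet G := hmemJ hwu hwv
      set F : ℝ → ℝ := fun r => G r ^ (1-s) * (G T ^ s / s - u ^ s / s)
        + (1 - G T) ^ (1-s) * ((1 - G T) ^ s / s - (1-v) ^ s / s) + (G r - G T) with hF
      have hFz : F T ≤ C := by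
        have h := aux_S1 hs hs0 hu huv hv hwu hwv
        simp only [hF]
        linarith
      have hFcont : ContinuousAt F T := by
        have h1 : ContinuousAt (fun r : ℝ => G r ^ (1-s)) T :=
          (Real.continuousAt_rpow_const _ _ (Or.inl hGz0.ne')).comp hCont.continuousAt
        exact ((h1.mul continuousAt_const).add continuousAt_const).add
          (hCont.continuousAt.sub continuousAt_const)
      have hlt2 : F T < C + ε * (b - a) := by nlinarith
      have hev : F ⁻¹' (Iio (C + ε * (b - a))) ∈ nhds T := hFcont (Iio_mem_nhds hlt2)
      obtain ⟨δ, hδ0, hball⟩ := Metric.mem_nhds_iff.mp hev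
      set t : ℝ := min (T + δ/2) ((T + q)/2) with htdef
      have htz : T < t := lt_min (by linarith) (by linarith)
      have htq : t < q := lt_of_le_of_lt (min_le_right _ _) (by linarith)
      have htb : t < b := lt_of_lt_of_le htq hqb
      have htball : t ∈ Metric.ball T δ := by
        rw [Metric.mem_ball, Real.dist_eq, abs_of_pos (by linarith : (0:ℝ) < t - T)]
        have := min_le_left (T + δ/2) ((T + q)/2)
        simp only [htdef]
        linarith
      have hFt : F t < C + ε * (b - a) := hball htball
      have htJ : t ∈ JSet G := hmemJ (hwu.trans (hMono htz.le)) ((hMono htb.le).trans hGb)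
      have hGzt : G T ≤ G t := hMono htz.le
      have hGt1 : G t < 1 := htJ.2
      -- Phi chord
      have hHza : u ^ s / s ≤ G T ^ s / s := aux_H_mono hs hs0 hu hwu
      have hchord1 : (G t - G T) * (T - a) ≤
          (t - T) * (G t ^ (1-s) * (G T ^ s / s - u ^ s / s)) := by
        have hK1 : G t - G T ≤ G t ^ (1-s) * (G t ^ s / s - G T ^ s / s) :=
          aux_K1 hs hs0 hGz0 hGzt
        have hGtp : (0:ℝ) < G t ^ (1-s) := Real.rpow_pos_of_pos htJ.1 _
        rcases eq_or_lt_of_le hza with heqa | hza'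
        · have h2 : 0 ≤ G T ^ s / s - u ^ s / s := by linarith
          have h3 : (0:ℝ) ≤ t - T := by linarith
          have h4 : T - a = 0 := by rw [← heqa]; ring
          rw [h4, mul_zero]
          exact mul_nonneg h3 (mul_nonneg hGtp.le h2)
        · have hsl := hPhi.slope_anti_adjacent haJ htJ hza' htz
          rw [div_le_div_iff₀ (by linarith) (by linarith)] at hsl
          have hΦa : u ^ s / s ≤ G a ^ s / s := aux_H_mono hs hs0 hu hGa
          nlinarith [mul_le_mul_of_nonneg_right hK1 (by linarith : (0:ℝ) ≤ T - a),
            mul_le_mul_of_nonneg_left hsl hGtp.le,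
            mul_le_mul_of_nonneg_left hΦa (mul_nonneg hGtp.le (by linarith : (0:ℝ) ≤ t - T))]
      -- Psi chord
      have hchord2 : (G t - G T) * (b - t) ≤
          (t - T) * ((1 - G T) ^ (1-s) * ((1 - G T) ^ s / s - (1-v) ^ s / s)) := by
        have hK2 : (1 - G T) - (1 - G t) ≤
            (1 - G T) ^ (1-s) * ((1 - G T) ^ s / s - (1 - G t) ^ s / s) :=
          aux_K1 hs hs0 (by linarith : (0:ℝ) < 1 - G t) (by linarith)
        have hGtp : (0:ℝ) < (1 - G T) ^ (1-s) := Real.rpow_pos_of_pos (by linarith) _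
        have hsl := hPsi.slope_anti_adjacent hzJ hbJ htz htb
        rw [div_le_div_iff₀ (by linarith) (by linarith)] at hsl
        have hΨb : (1-v) ^ s / s ≤ (1 - G b) ^ s / s :=
          aux_H_mono hs hs0 (by linarith) (by linarith)
        nlinarith [mul_le_mul_of_nonneg_right hK2 (by linarith : (0:ℝ) ≤ b - t),
          mul_le_mul_of_nonneg_left hsl hGtp.le,
          mul_le_mul_of_nonneg_left hΨb (mul_nonneg hGtp.le (by linarith : (0:ℝ) ≤ t - T))]
      -- combine
      have hsum : (G t - G T) * (b - a) ≤ (t - T) * F t := by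
        simp only [hF]
        nlinarith [hchord1, hchord2]
      have h1 : (G t - G T) * (b - a) ≤ (t - T) * (C + ε * (b - a)) :=
        le_trans hsum (mul_le_mul_of_nonneg_left hFt.le (by linarith))
      have h2 : G t - G T ≤ (M + ε) * (t - T) := by
        have hq2 : (G t - G T) * (b - a) ≤ ((M + ε) * (t - T)) * (b - a) := by
          calc (G t - G T) * (b - a) ≤ (t - T) * (C + ε * (b - a)) := h1
            _ = ((M + ε) * (t - T)) * (b - a) := by rw [← hMC]; ring
        exact le_of_mul_le_mul_right hq2 hba
      have htS : t ∈ S := by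
        refine ⟨⟨hpT.trans htz.le, htq.le⟩, ?_⟩
        simp only [mem_setOf_eq]
        have hTbd' : G T - G p ≤ (M + ε) * (T - p) := hTbd
        have e : (M + ε) * (t - T) + (M + ε) * (T - p) = (M + ε) * (t - p) := by ring
        linarith
      have := le_csSup hbdd htS
      linarith
    rcases eq_or_lt_of_le hpq with rfl | hpq'
    · have e : M * (p - p) = 0 := by ring
      linarith
    have h2 : ∀ η : ℝ, 0 < η → G q - G p ≤ M * (q - p) + η := by
      intro η hη
      have h := main (η / (q - p)) (div_pos hη (by linarith))
      have hne : q - p ≠ 0 := ne_of_gt (by linarith)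
      have e : (M + η / (q - p)) * (q - p) = M * (q - p) + η := by
        rw [add_mul, div_mul_cancel₀ _ hne]
      linarith [h, e.le]
    exact le_of_forall_pos_le_add h2
  -- combine on J
  have keyJ : ∀ p q, p ∈ JSet G → q ∈ JSet G → p ≤ q → G q - G p ≤ M * (q - p) := by
    intro p q hpJ hqJ hpq
    rcases le_or_gt q a with hqa | haq
    · exact E1 p q hpJ hqJ hpq hqa
    rcases le_or_gt b p with hbp | hpb
    · exact E2 p q hpJ hqJ hpq hbp
    rcases le_total p a with hpa | hap
    · rcases le_total q b with hqb | hbq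
      · have i1 := E1 p a hpJ haJ hpa (le_refl a)
        have i2 := E3 a q (le_refl a) haq.le hqb
        nlinarith
      · have i1 := E1 p a hpJ haJ hpa (le_refl a)
        have i2 := E3 a b (le_refl a) hab.le (le_refl b)
        have i3 := E2 b q hbJ hqJ hbq (le_refl b)
        nlinarith
    · rcases le_total q b with hqb | hbq
      · exact E3 p q hap hpq hqb
      · have i1 := E3 p b hap hpb.le (le_refl b)
        have i2 := E2 b q hbJ hqJ hbq (le_refl b)
        nlinarith
  -- extend to all of ℝ
  intro x y hxy
  have hmain : ∀ ε : ℝ, 0 < ε → G y - G x ≤ M * (y - x) + 2 * ε := by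
    intro ε hε
    rcases le_or_gt (G y - G x) (2 * ε) with hsmall | hsmall
    · have h0 : 0 ≤ M * (y - x) := mul_nonneg hM0.le (by linarith)
      linarith
    have hGxy : G x ≤ G y := hMono hxy
    have ivt := intermediate_value_Icc hxy (hCont.continuousOn (s := Icc x y))
    obtain ⟨t, htI, hGt⟩ := ivt (show G x + ε ∈ Icc (G x) (G y) from ⟨by linarith, by linarith⟩)
    obtain ⟨t', htI', hGt'⟩ := ivt (show G y - ε ∈ Icc (G x) (G y) from ⟨by linarith, by linarith⟩)
    have htJ : t ∈ JSet G := by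
      constructor
      · rw [hGt]; have := hG0 x; linarith
      · rw [hGt]; have := hG1 y; linarith
    have htJ' : t' ∈ JSet G := by
      constructor
      · rw [hGt']; have := hG0 x; linarith
      · rw [hGt']; have := hG1 y; linarith
    have htt' : t ≤ t' := by
      by_contra hcon
      push_neg at hcon
      have := hMono hcon.le
      rw [hGt, hGt'] at this
      linarith
    have hk := keyJ t t' htJ htJ' htt'
    rw [hGt, hGt'] at hk
    have : t' - t ≤ y - x := by
      rcases htI with ⟨h1, h2⟩; rcases htI' with ⟨h1', h2'⟩; linarith
    nlinarith [mul_le_mul_of_nonneg_left this hM0.le]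
  have h2 : ∀ ε : ℝ, 0 < ε → G y - G x ≤ M * (y - x) + ε := fun ε hε => by
    have := hmain (ε/2) (by linarith); linarith
  exact le_of_forall_pos_le_add h2

set_option maxHeartbeats 1000000 in
/-- Lemma 6(i), core: if `G` is a non-degenerate bi-`s*`-concave distribution
function with `G(a) ≥ u` and `G(b) ≤ v` (where `a < b`, `0 < u < v < 1`), then `G` is Lipschitz
on `ℝ` with constant `max{γ₁, γ₂}`, where `γ₁ = (v^{s*} - u^{s*})/(s*(b - a))` and
`γ₂ = ((1-u)^{s*} - (1-v)^{s*})/(s*(b - a))`; equivalently its derivative `g = G'` satisfies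
`g(x) ≤ max{γ₁, γ₂}` for every `x ∈ J(G)`. -/
theorem lipschitz_of_biSStarConcave_band
    (s : ℝ) (hs : s ≤ 1) (hs0 : s ≠ 0)
    (a b u v : ℝ) (hab : a < b) (hu : 0 < u) (huv : u < v) (hv : v < 1)
    (G : ℝ → ℝ) (hG : IsDistFun G) (hnd : NonDeg G)
    (hbi : IsBiSStarConcave s G)
    (hGa : u ≤ G a) (hGb : G b ≤ v) :
    (∀ x y : ℝ, |G x - G y| ≤
      max ((v ^ s - u ^ s) / (s * (b - a))) (((1 - u) ^ s - (1 - v) ^ s) / (s * (b - a)))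
        * |x - y|) ∧
    (∀ x ∈ JSet G, deriv G x ≤
      max ((v ^ s - u ^ s) / (s * (b - a)))
        (((1 - u) ^ s - (1 - v) ^ s) / (s * (b - a)))) := by

  obtain ⟨hMono, hRange, -, -, -⟩ := hG
  obtain ⟨hCont, hNeg, -, hPos⟩ := hbi
  have hPhi : ConcaveOn ℝ (JSet G) (fun x => G x ^ s / s) :=
    aux_concaveH hs0 (fun h => (hNeg h).1) (fun h => (hPos h).1)
  have hPsi : ConcaveOn ℝ (JSet G) (fun x => (1 - G x) ^ s / s) :=
    aux_concaveH hs0 (fun h => (hNeg h).2) (fun h => (hPos h).2)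
  have hkey := aux_main hs hs0 hab hu huv hv hMono hRange hCont hPhi hPsi hGa hGb
  have hba : (0:ℝ) < b - a := by linarith
  set C := max ((v ^ s - u ^ s) / s) (((1-u) ^ s - (1-v) ^ s) / s) with hC
  have hMeq : max ((v ^ s - u ^ s) / (s * (b - a))) (((1 - u) ^ s - (1 - v) ^ s) / (s * (b - a)))
      = C / (b - a) := by
    rw [hC, div_mul_eq_div_div, div_mul_eq_div_div]
    rcases le_total ((v ^ s - u ^ s) / s) (((1-u) ^ s - (1-v) ^ s) / s) with h | h
    · rw [max_eq_right h, max_eq_right (by gcongr)]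
    · rw [max_eq_left h, max_eq_left (by gcongr)]
  have hM0 : 0 < C / (b - a) := by
    apply div_pos _ hba
    have h := (aux_mvt hs hs0 hu huv).1
    have hp : 0 < v ^ (s-1) := Real.rpow_pos_of_pos (hu.trans huv) _
    apply lt_of_lt_of_le _ (le_max_left _ _)
    rw [sub_div]; nlinarith
  constructor
  · intro x y
    rw [hMeq]
    rcases le_total x y with h | h
    · have hk := hkey x y h
      rw [abs_sub_comm, abs_of_nonneg (sub_nonneg.2 (hMono h)), abs_sub_comm x y,
        abs_of_nonneg (sub_nonneg.2 h)]
      exact hk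
    · have hk := hkey y x h
      rw [abs_of_nonneg (sub_nonneg.2 (hMono h)), abs_of_nonneg (sub_nonneg.2 h)]
      exact hk
  · intro x hxJ
    rw [hMeq]
    by_cases hdiff : DifferentiableAt ℝ G x
    · have hd := hdiff.hasDerivAt
      rw [hasDerivAt_iff_tendsto_slope] at hd
      refine le_of_tendsto hd ?_
      filter_upwards [self_mem_nhdsWithin] with y hy
      have hyne : y ≠ x := hy
      rcases lt_or_gt_of_ne hyne with hlt | hgt
      · have hk := hkey y x hlt.le
        have hxy : (0:ℝ) < x - y := by linarith
        rw [slope_def_field]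
        have e : (G y - G x) / (y - x) = (G x - G y) / (x - y) := by
          rw [← neg_sub (G x) (G y), ← neg_sub x y, neg_div_neg_eq]
        rw [e, div_le_iff₀ hxy]
        linarith [hk]
      · have hk := hkey x y hgt.le
        have hxy : (0:ℝ) < y - x := by linarith
        rw [slope_def_field, div_le_iff₀ hxy]
        linarith [hk]
    · rw [deriv_zero_of_not_differentiableAt hdiff]
      exact hM0.le
end
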